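/- arXiv:1812.08037 — 20 statements merged into one kernel-verified Lean document; each statement's English description precedes it below -/
import Mathlib

section
/- Let x, y ≥ 0 with x ≥ y and a ∈ [1,2]. Then 2^a · x^(a-1) · y ≤ (x+y)^a − (x−y)^a ≤ 2a · x^(a-1) · y. -/
open Real

/-- Two-point Hölder inequality. -/
lemma holder2 {θ p q u v : ℝ} (hθ0 : 0 ≤ θ) (hθ1 : θ ≤ 1) (hp : 0 ≤ p) (hq : 0 ≤ q)
    (hu : 0 ≤ u) (hv : 0 ≤ v) :
    p ^ θ * q ^ (1 - θ) + u ^ θ * v ^ (1 - θ) ≤ (p + u) ^ θ * (q + v) ^ (1 - θ) := by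
  rcases eq_or_lt_of_le hθ0 with h0 | h0
  · simp [← h0]
  rcases eq_or_lt_of_le hθ1 with h1 | h1
  · simp [h1]
  have h1' : 0 < 1 - θ := by linarith
  rcases (add_nonneg hp hu).eq_or_lt with hpu | hpu
  · have hp0 : p = 0 := by linarith
    have hu0 : u = 0 := by linarith
    simp [hp0, hu0, Real.zero_rpow h0.ne']
  rcases (add_nonneg hq hv).eq_or_lt with hqv | hqv
  · have hq0 : q = 0 := by linarith
    have hv0 : v = 0 := by linarith
    simp [hq0, hv0, Real.zero_rpow h1'.ne']
  have key1 : (p / (p + u)) ^ θ * (q / (q + v)) ^ (1 - θ)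
      ≤ θ * (p / (p + u)) + (1 - θ) * (q / (q + v)) :=
    Real.geom_mean_le_arith_mean2_weighted hθ0 (by linarith)
      (div_nonneg hp hpu.le) (div_nonneg hq hqv.le) (by ring)
  have key2 : (u / (p + u)) ^ θ * (v / (q + v)) ^ (1 - θ)
      ≤ θ * (u / (p + u)) + (1 - θ) * (v / (q + v)) :=
    Real.geom_mean_le_arith_mean2_weighted hθ0 (by linarith)
      (div_nonneg hu hpu.le) (div_nonneg hv hqv.le) (by ring)
  rw [Real.div_rpow hp hpu.le, Real.div_rpow hq hqv.le] at key1
  rw [Real.div_rpow hu hpu.le, Real.div_rpow hv hqv.le] at key2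
  have hA : 0 < (p + u) ^ θ := Real.rpow_pos_of_pos hpu θ
  have hB : 0 < (q + v) ^ (1 - θ) := Real.rpow_pos_of_pos hqv (1 - θ)
  have hsum : p ^ θ / (p + u) ^ θ * (q ^ (1 - θ) / (q + v) ^ (1 - θ))
      + u ^ θ / (p + u) ^ θ * (v ^ (1 - θ) / (q + v) ^ (1 - θ)) ≤ 1 := by
    have : θ * (p / (p + u)) + (1 - θ) * (q / (q + v))
        + (θ * (u / (p + u)) + (1 - θ) * (v / (q + v))) = 1 := by
      field_simp
      ring
    linarith
  have := mul_le_mul_of_nonneg_left hsum (le_of_lt (mul_pos hA hB))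
  calc p ^ θ * q ^ (1 - θ) + u ^ θ * v ^ (1 - θ)
      = (p + u) ^ θ * (q + v) ^ (1 - θ) *
        (p ^ θ / (p + u) ^ θ * (q ^ (1 - θ) / (q + v) ^ (1 - θ))
          + u ^ θ / (p + u) ^ θ * (v ^ (1 - θ) / (q + v) ^ (1 - θ))) := by
        field_simp
    _ ≤ (p + u) ^ θ * (q + v) ^ (1 - θ) * 1 := this
    _ = (p + u) ^ θ * (q + v) ^ (1 - θ) := mul_one _

/-- midpoint concavity: c^b + d^b ≤ 2 ((c+d)/2)^b for b ∈ [0,1]. Stated with c+d=2m. -/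
lemma concave2 {b c d m : ℝ} (hb0 : 0 ≤ b) (hb1 : b ≤ 1) (hc : 0 ≤ c) (hd : 0 ≤ d)
    (hm : c + d = 2 * m) : c ^ b + d ^ b ≤ 2 * m ^ b := by
  have h := holder2 hb0 hb1 hc (le_refl (0:ℝ) |>.trans zero_le_one) hd zero_le_one
  simp only [Real.one_rpow, mul_one] at h
  have h2 : ((1:ℝ) + 1) ^ (1 - b) = 2 ^ (1 - b) := by norm_num
  rw [h2, hm] at h
  have hm0 : 0 ≤ m := by linarith
  have : (2 * m) ^ b * 2 ^ (1 - b) = 2 * m ^ b := by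
    rw [Real.mul_rpow (by norm_num) hm0]
    rw [mul_comm ((2:ℝ)^b) (m^b), mul_assoc, ← Real.rpow_add (by norm_num : (0:ℝ) < 2)]
    norm_num
    ring
  rw [this] at h
  exact h

lemma id1 {w a : ℝ} (hw : 0 ≤ w) (ha1 : 1 ≤ a) (ha2 : a ≤ 2) :
    w ^ (2 - a) * (w * w) ^ (a - 1) = w ^ a := by
  rcases hw.eq_or_lt with h | h
  · subst h
    rcases eq_or_lt_of_le ha2 with h2 | h2
    · rw [h2]; norm_num [Real.zero_rpow]
    · rw [Real.zero_rpow (by linarith : (2:ℝ) - a ≠ 0), zero_mul,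
        Real.zero_rpow (by linarith : a ≠ 0)]
  · rw [Real.mul_rpow h.le h.le, ← Real.rpow_add h, ← Real.rpow_add h]
    ring_nf

lemma id2 {w a : ℝ} (hw : 0 ≤ w) (ha1 : 1 ≤ a) (ha2 : a ≤ 2) :
    w ^ (2 - a) * w ^ (a - 1) = w := by
  rcases hw.eq_or_lt with h | h
  · subst h
    rcases eq_or_lt_of_le ha1 with h1 | h1
    · rw [← h1]; norm_num
    · rw [Real.zero_rpow (by linarith : a - 1 ≠ 0), mul_zero]
  · rw [← Real.rpow_add h]; norm_num

/-- Lower bound in (u,v) coordinates. -/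
lemma lower_uv {u v a : ℝ} (hv : 0 ≤ v) (huv : v ≤ u) (ha1 : 1 ≤ a) (ha2 : a ≤ 2) :
    (u + v) ^ (a - 1) * (u - v) ≤ u ^ a - v ^ a := by
  have hu : 0 ≤ u := hv.trans huv
  have hθ0 : (0:ℝ) ≤ 2 - a := by linarith
  have hθ1 : (2:ℝ) - a ≤ 1 := by linarith
  have h1θ : (1:ℝ) - (2 - a) = a - 1 := by ring
  have h := holder2 hθ0 hθ1 (by linarith : (0:ℝ) ≤ u - v)
    (mul_nonneg (by linarith : (0:ℝ) ≤ u - v) (by linarith : (0:ℝ) ≤ u + v))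
    hv (mul_nonneg hv hv)
  rw [h1θ] at h
  have e1 : (u - v) ^ (2 - a) * ((u - v) * (u + v)) ^ (a - 1)
      = (u - v) * (u + v) ^ (a - 1) := by
    rw [Real.mul_rpow (by linarith) (by linarith), ← mul_assoc,
      id2 (by linarith : (0:ℝ) ≤ u - v) ha1 ha2]
  have e2 : v ^ (2 - a) * (v * v) ^ (a - 1) = v ^ a := id1 hv ha1 ha2
  have e3 : (u - v + v) ^ (2 - a) * ((u - v) * (u + v) + v * v) ^ (a - 1) = u ^ a := by
    have : u - v + v = u := by ring
    rw [this]
    have : (u - v) * (u + v) + v * v = u * u := by ring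
    rw [this]
    exact id1 hu ha1 ha2
  rw [e1, e2, e3] at h
  linarith

theorem stmt_0 (x y a : ℝ) (hy : 0 ≤ y) (hxy : y ≤ x) (ha1 : 1 ≤ a) (ha2 : a ≤ 2) :
    (2 : ℝ) ^ a * x ^ (a - 1) * y ≤ (x + y) ^ a - (x - y) ^ a ∧
    (x + y) ^ a - (x - y) ^ a ≤ 2 * a * x ^ (a - 1) * y := by
  have hx : 0 ≤ x := hy.trans hxy
  constructor
  · -- lower bound
    have h := lower_uv (by linarith : (0:ℝ) ≤ x - y) (by linarith : x - y ≤ x + y) ha1 ha2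
    have e : (x + y + (x - y)) ^ (a - 1) * (x + y - (x - y)) = 2 ^ a * x ^ (a - 1) * y := by
      have h1 : x + y + (x - y) = 2 * x := by ring
      have h2 : x + y - (x - y) = 2 * y := by ring
      rw [h1, h2, Real.mul_rpow (by norm_num) hx]
      have : (2:ℝ) ^ (a - 1) * x ^ (a - 1) * (2 * y) = (2 ^ (a-1) * 2) * x ^ (a-1) * y := by
        ring
      rw [this, ← Real.rpow_add_one (by norm_num : (2:ℝ) ≠ 0)]
      norm_num
    rw [e] at h
    exact h
  · -- upper bound via monotonicity
    set b := a - 1 with hb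
    have hb0 : 0 ≤ b := by simp [hb]; linarith
    have hb1 : b ≤ 1 := by simp [hb]; linarith
    set f : ℝ → ℝ := fun t => 2 * a * x ^ b * t - (x + t) ^ a + (x - t) ^ a with hf
    have hd : ∀ t : ℝ, HasDerivAt f
        (2 * a * x ^ b - a * (x + t) ^ (a - 1) - a * (x - t) ^ (a - 1)) t := by
      intro t
      have h1 : HasDerivAt (fun t : ℝ => x + t) 1 t := (hasDerivAt_id t).const_add x
      have h2 : HasDerivAt (fun t : ℝ => x - t) (-1) t := (hasDerivAt_id t).const_sub x
      have h1' := h1.rpow_const (Or.inr ha1)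
      have h2' := h2.rpow_const (Or.inr ha1)
      have h3 : HasDerivAt (fun t : ℝ => 2 * a * x ^ b * t) (2 * a * x ^ b) t := by
        simpa using (hasDerivAt_id t).const_mul (2 * a * x ^ b)
      have := (h3.sub h1').add h2'
      exact this.congr_deriv (by ring)
    have hdiff : Differentiable ℝ f := fun t => (hd t).differentiableAt
    have mono : MonotoneOn f (Set.Icc 0 x) := by
      apply monotoneOn_of_deriv_nonneg (convex_Icc 0 x) hdiff.continuous.continuousOn
        hdiff.differentiableOn
      intro t ht
      rw [interior_Icc] at ht
      rw [(hd t).deriv]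
      have hc : (x + t) ^ (a - 1) + (x - t) ^ (a - 1) ≤ 2 * x ^ (a - 1) :=
        concave2 hb0 hb1 (by linarith [ht.1] : (0:ℝ) ≤ x + t)
          (by linarith [ht.2] : (0:ℝ) ≤ x - t) (by ring)
      have ha0 : 0 < a := by linarith
      have := mul_le_mul_of_nonneg_left hc ha0.le
      simp only [hb]
      nlinarith
    have h0x : (0:ℝ) ∈ Set.Icc 0 x := ⟨le_refl 0, hx⟩
    have hyx : y ∈ Set.Icc 0 x := ⟨hy, hxy⟩
    have := mono h0x hyx hy
    have hf0 : f 0 = 0 := by simp [hf]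
    rw [hf0] at this
    simp only [hf] at this
    linarith
end

section
/- Let x, y ≥ 0 and a ∈ [1,2]. Then (x+y)^a − |x−y|^a ≤ 2a · min(x·y^(a-1), x^(a-1)·y). -/
open Real Set

lemma conc_aux {p u v : ℝ} (hp0 : 0 ≤ p) (hp1 : p ≤ 1) (hu : 0 ≤ u) (hv : 0 ≤ v) :
    u ^ p + v ^ p ≤ 2 * ((u + v) / 2) ^ p := by
  have h := (Real.concaveOn_rpow hp0 hp1).2 (mem_Ici.2 hu) (mem_Ici.2 hv)
    (by norm_num : (0:ℝ) ≤ 1/2) (by norm_num : (0:ℝ) ≤ 1/2) (by norm_num)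
  simp only [smul_eq_mul] at h
  have : (1/2 : ℝ) * u + 1/2 * v = (u + v) / 2 := by ring
  rw [this] at h
  linarith

lemma key_aux {x y a : ℝ} (hy : 0 ≤ y) (hyx : y ≤ x) (ha1 : 1 ≤ a) (ha2 : a ≤ 2) :
    (x + y) ^ a - (x - y) ^ a ≤ 2 * a * (x ^ (a - 1) * y) := by
  have ha0 : (0:ℝ) < a := by linarith
  set F : ℝ → ℝ := fun t => 2 * a * x ^ (a - 1) * t - (x + t) ^ a + (x - t) ^ a with hF
  have hxnn : 0 ≤ x := le_trans hy hyx
  have hder : ∀ t ∈ Ioo (0:ℝ) x, HasDerivAt F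
      (2 * a * x ^ (a - 1) - a * (x + t) ^ (a - 1) - a * (x - t) ^ (a - 1)) t := by
    intro t ht
    have hxt1 : x + t ≠ 0 := by nlinarith [ht.1, ht.2]
    have hxt2 : x - t ≠ 0 := by nlinarith [ht.1, ht.2]
    have h1 : HasDerivAt (fun t : ℝ => 2 * a * x ^ (a - 1) * t) (2 * a * x ^ (a - 1)) t := by
      simpa using (hasDerivAt_id t).const_mul (2 * a * x ^ (a - 1))
    have h2 : HasDerivAt (fun t : ℝ => (x + t) ^ a) (a * (x + t) ^ (a - 1)) t := by
      have hg : HasDerivAt (fun t : ℝ => x + t) 1 t := (hasDerivAt_id t).const_add x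
      simpa [Function.comp_def] using (Real.hasDerivAt_rpow_const (Or.inl hxt1)).comp t hg
    have h3 : HasDerivAt (fun t : ℝ => (x - t) ^ a) (-(a * (x - t) ^ (a - 1))) t := by
      have hg : HasDerivAt (fun t : ℝ => x - t) (-1) t := by
        simpa using (hasDerivAt_id t).const_sub x
      have := (Real.hasDerivAt_rpow_const (p := a) (Or.inl hxt2)).comp t hg
      simpa [Function.comp_def, mul_comm, mul_left_comm] using this
    have := (h1.sub h2).add h3
    exact this.congr_deriv (by ring)
  have hcont : ContinuousOn F (Icc 0 x) := by
    have c1 : Continuous fun t : ℝ => (x + t) ^ a :=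
      (continuous_const.add continuous_id).rpow_const (fun t => Or.inr ha0.le)
    have c2 : Continuous fun t : ℝ => (x - t) ^ a :=
      (continuous_const.sub continuous_id).rpow_const (fun t => Or.inr ha0.le)
    exact (((continuous_const.mul continuous_id).sub c1).add c2).continuousOn
  have hmono : MonotoneOn F (Icc 0 x) := by
    apply monotoneOn_of_deriv_nonneg (convex_Icc 0 x) hcont
    · intro t ht
      rw [interior_Icc] at ht
      exact (hder t ht).differentiableAt.differentiableWithinAt
    · intro t ht
      rw [interior_Icc] at ht
      rw [(hder t ht).deriv]
      have hc : (x + t) ^ (a - 1) + (x - t) ^ (a - 1) ≤ 2 * x ^ (a - 1) := by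
        have := conc_aux (by linarith : 0 ≤ a - 1) (by linarith : a - 1 ≤ 1)
          (by nlinarith [ht.1, ht.2] : 0 ≤ x + t) (by nlinarith [ht.1, ht.2] : 0 ≤ x - t)
        have hmid : (x + t + (x - t)) / 2 = x := by ring
        rwa [hmid] at this
      nlinarith
  rcases eq_or_lt_of_le hxnn with hx0 | hx0
  · have hy0 : y = 0 := le_antisymm (hyx.trans hx0.symm.le) hy
    simp [hy0]
  · have h0 : F 0 ≤ F y := hmono (left_mem_Icc.2 hxnn) ⟨hy, hyx⟩ hy
    have hF0 : F 0 = 0 := by simp [hF]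
    simp only [hF] at h0 hF0
    linarith

theorem stmt_1 (x y a : ℝ) (hx : 0 ≤ x) (hy : 0 ≤ y) (ha1 : 1 ≤ a) (ha2 : a ≤ 2) :
    (x + y) ^ a - |x - y| ^ a ≤ 2 * a * min (x * y ^ (a - 1)) (x ^ (a - 1) * y) := by
  have ha0 : (0:ℝ) < a := by linarith
  rcases le_total y x with h | h
  · have hmin : min (x * y ^ (a - 1)) (x ^ (a - 1) * y) = x ^ (a - 1) * y := by
      apply min_eq_right
      calc x ^ (a - 1) * y = x ^ (a - 1) * (y ^ (a - 1) * y ^ (2 - a)) := by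
            rw [← Real.rpow_add' hy (by norm_num), show a - 1 + (2 - a) = 1 by ring,
              Real.rpow_one]
        _ ≤ x ^ (a - 1) * (y ^ (a - 1) * x ^ (2 - a)) := by
            apply mul_le_mul_of_nonneg_left _ (Real.rpow_nonneg hx _)
            exact mul_le_mul_of_nonneg_left (Real.rpow_le_rpow hy h (by linarith))
              (Real.rpow_nonneg hy _)
        _ = x * y ^ (a - 1) := by
            rw [mul_comm (y ^ (a-1)), ← mul_assoc, ← Real.rpow_add' hx (by norm_num),
              show a - 1 + (2 - a) = 1 by ring, Real.rpow_one]
    rw [hmin, abs_of_nonneg (by linarith)]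
    exact key_aux hy h ha1 ha2
  · have hmin : min (x * y ^ (a - 1)) (x ^ (a - 1) * y) = x * y ^ (a - 1) := by
      apply min_eq_left
      calc x * y ^ (a - 1) = y ^ (a - 1) * (x ^ (a - 1) * x ^ (2 - a)) := by
            rw [← Real.rpow_add' hx (by norm_num), show a - 1 + (2 - a) = 1 by ring,
              Real.rpow_one]; ring
        _ ≤ y ^ (a - 1) * (x ^ (a - 1) * y ^ (2 - a)) := by
            apply mul_le_mul_of_nonneg_left _ (Real.rpow_nonneg hy _)
            exact mul_le_mul_of_nonneg_left (Real.rpow_le_rpow hx h (by linarith))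
              (Real.rpow_nonneg hx _)
        _ = x ^ (a - 1) * y := by
            rw [mul_comm (x ^ (a-1)), ← mul_assoc, mul_comm (y ^ (a-1)),
              ← Real.rpow_add' hy (by norm_num), show 2 - a + (a - 1) = 1 by ring,
              Real.rpow_one]; ring
    rw [hmin, abs_of_nonpos (by linarith), neg_sub, add_comm]
    calc (y + x) ^ a - (y - x) ^ a ≤ 2 * a * (y ^ (a - 1) * x) := key_aux hx h ha1 ha2
      _ = 2 * a * (x * y ^ (a - 1)) := by ring
end

section
/- Let x ≥ y ≥ 0 and a ∈ [1,2]. Then (x+y)^(a-1)·(x−y) ≤ x^a − y^a ≤ a·(x−y)·((x+y)/2)^(a-1). -/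
set_option maxHeartbeats 800000
open Real Set

lemma key_upper {a u : ℝ} (ha1 : 1 ≤ a) (ha2 : a ≤ 2) (hu0 : 0 ≤ u) (hu1 : u ≤ 1) :
    (1+u)^a - (1-u)^a ≤ 2*a*u := by
  set k : ℝ → ℝ := fun u => 2*a*u - (1+u)^a + (1-u)^a with hk
  have hmono : MonotoneOn k (Icc (0:ℝ) 1) := by
    apply monotoneOn_of_deriv_nonneg (convex_Icc 0 1)
    · apply ContinuousOn.add
      apply ContinuousOn.sub
      · fun_prop
      · exact ((Real.continuous_rpow_const (by linarith)).comp (by continuity)).continuousOn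
      · exact ((Real.continuous_rpow_const (by linarith)).comp (by continuity)).continuousOn
    · intro v hv
      rw [interior_Icc] at hv
      have h1 : (0:ℝ) < 1 + v := by cases hv; linarith
      have h2 : (0:ℝ) < 1 - v := by cases hv; linarith
      have : HasDerivAt k (2*a - 1*a*(1+v)^(a-1) + (-1)*a*(1-v)^(a-1)) v := by
        have d1 : HasDerivAt (fun w : ℝ => (1+w)^a) (1*a*(1+v)^(a-1)) v :=
          (((hasDerivAt_id v).const_add 1)).rpow_const (Or.inl h1.ne')
        have d2 : HasDerivAt (fun w : ℝ => (1-w)^a) ((-1)*a*(1-v)^(a-1)) v := by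
          have : HasDerivAt (fun w : ℝ => 1 - w) (-1) v := by
            simpa using ((hasDerivAt_id v).const_sub 1)
          exact this.rpow_const (Or.inl h2.ne')
        have d0 : HasDerivAt (fun w : ℝ => 2*a*w) (2*a) v := by
          simpa using (hasDerivAt_id v).const_mul (2*a)
        exact (d0.sub d1).add d2
      exact this.differentiableAt.differentiableWithinAt
    · intro v hv
      rw [interior_Icc] at hv
      obtain ⟨hv0, hv1⟩ := hv
      have h1 : (0:ℝ) < 1 + v := by linarith
      have h2 : (0:ℝ) < 1 - v := by linarith
      have hd : HasDerivAt k (2*a - 1*a*(1+v)^(a-1) + (-1)*a*(1-v)^(a-1)) v := by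
        have d1 : HasDerivAt (fun w : ℝ => (1+w)^a) (1*a*(1+v)^(a-1)) v :=
          (((hasDerivAt_id v).const_add 1)).rpow_const (Or.inl h1.ne')
        have d2 : HasDerivAt (fun w : ℝ => (1-w)^a) ((-1)*a*(1-v)^(a-1)) v := by
          have : HasDerivAt (fun w : ℝ => 1 - w) (-1) v := by
            simpa using ((hasDerivAt_id v).const_sub 1)
          exact this.rpow_const (Or.inl h2.ne')
        have d0 : HasDerivAt (fun w : ℝ => 2*a*w) (2*a) v := by
          simpa using (hasDerivAt_id v).const_mul (2*a)
        exact (d0.sub d1).add d2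
      rw [hd.deriv]
      have b1 : (1+v)^(a-1) ≤ 1 + (a-1)*v :=
        rpow_one_add_le_one_add_mul_self (by linarith) (by linarith) (by linarith)
      have b2 : (1-v)^(a-1) ≤ 1 + (a-1)*(-v) := by
        have := rpow_one_add_le_one_add_mul_self (s := -v) (by linarith) (p := a-1)
          (by linarith) (by linarith)
        rw [← sub_eq_add_neg] at this; exact this
      nlinarith
  have h0 : k 0 = 0 := by simp [hk]
  have := hmono (Set.mem_Icc.2 ⟨le_refl 0, zero_le_one⟩) (Set.mem_Icc.2 ⟨hu0, hu1⟩) hu0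
  rw [h0] at this
  simp only [hk] at this
  linarith

open Real Set

lemma key_lower {a u : ℝ} (ha1 : 1 ≤ a) (ha2 : a ≤ 2) (hu0 : 0 ≤ u) (hu1 : u ≤ 1) :
    2^a * u ≤ (1+u)^a - (1-u)^a := by
  set h : ℝ → ℝ := fun u => (1+u)^a - (1-u)^a - 2^a*u with hh
  set d1 : ℝ → ℝ := fun w => a*(1+w)^(a-1) + a*(1-w)^(a-1) - 2^a with hd1
  have hasd : ∀ v : ℝ, 0 < 1 + v → 0 < 1 - v → HasDerivAt h (d1 v) v := by
    intro v h1 h2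
    have e1 : HasDerivAt (fun w : ℝ => (1+w)^a) (1*a*(1+v)^(a-1)) v :=
      ((hasDerivAt_id v).const_add 1).rpow_const (Or.inl h1.ne')
    have e2 : HasDerivAt (fun w : ℝ => (1-w)^a) ((-1)*a*(1-v)^(a-1)) v := by
      have : HasDerivAt (fun w : ℝ => 1 - w) (-1) v := by
        simpa using ((hasDerivAt_id v).const_sub 1)
      exact this.rpow_const (Or.inl h2.ne')
    have e0 : HasDerivAt (fun w : ℝ => (2:ℝ)^a*w) ((2:ℝ)^a) v := by
      simpa using (hasDerivAt_id v).const_mul ((2:ℝ)^a)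
    have := (e1.sub e2).sub e0
    refine this.congr_deriv ?_
    simp only [hd1]; ring
  have hasd2 : ∀ v : ℝ, 0 < 1 + v → 0 < 1 - v →
      HasDerivAt d1 (a*(a-1)*(1+v)^(a-2) - a*(a-1)*(1-v)^(a-2)) v := by
    intro v h1 h2
    have e1 : HasDerivAt (fun w : ℝ => (1+w)^(a-1)) (1*(a-1)*(1+v)^(a-1-1)) v :=
      ((hasDerivAt_id v).const_add 1).rpow_const (Or.inl h1.ne')
    have e2 : HasDerivAt (fun w : ℝ => (1-w)^(a-1)) ((-1)*(a-1)*(1-v)^(a-1-1)) v := by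
      have : HasDerivAt (fun w : ℝ => 1 - w) (-1) v := by
        simpa using ((hasDerivAt_id v).const_sub 1)
      exact this.rpow_const (Or.inl h2.ne')
    have := ((e1.const_mul a).add (e2.const_mul a)).sub (hasDerivAt_const v ((2:ℝ)^a))
    refine this.congr_deriv ?_
    have : a - 1 - 1 = a - 2 := by ring
    rw [this]; ring
  have hderiv_eq : ∀ v ∈ Ioo (0:ℝ) 1, deriv h v = d1 v := by
    intro v hv
    exact (hasd v (by linarith [hv.1]) (by linarith [hv.2])).deriv
  have hconc : ConcaveOn ℝ (Icc (0:ℝ) 1) h := by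
    apply concaveOn_of_deriv2_nonpos (convex_Icc 0 1)
    · apply ContinuousOn.sub
      apply ContinuousOn.sub
      · exact ((Real.continuous_rpow_const (by linarith)).comp (by fun_prop)).continuousOn
      · exact ((Real.continuous_rpow_const (by linarith)).comp (by fun_prop)).continuousOn
      · fun_prop
    · intro v hv
      rw [interior_Icc] at hv
      exact (hasd v (by linarith [hv.1]) (by linarith [hv.2])).differentiableAt.differentiableWithinAt
    · intro v hv
      rw [interior_Icc] at hv
      have heq : deriv h =ᶠ[nhds v] d1 :=
        Filter.eventuallyEq_of_mem (isOpen_Ioo.mem_nhds hv) hderiv_eq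
      have : DifferentiableAt ℝ d1 v :=
        (hasd2 v (by linarith [hv.1]) (by linarith [hv.2])).differentiableAt
      exact (heq.differentiableAt_iff.mpr this).differentiableWithinAt
    · intro v hv
      rw [interior_Icc] at hv
      have heq : deriv h =ᶠ[nhds v] d1 :=
        Filter.eventuallyEq_of_mem (isOpen_Ioo.mem_nhds hv) hderiv_eq
      have h1 : (0:ℝ) < 1 + v := by linarith [hv.1]
      have h2 : (0:ℝ) < 1 - v := by linarith [hv.2]
      have : deriv^[2] h v = a*(a-1)*(1+v)^(a-2) - a*(a-1)*(1-v)^(a-2) := by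
        show deriv (deriv (h)) v = _
        rw [heq.deriv_eq]
        exact (hasd2 v h1 h2).deriv
      rw [this]
      have hle : (1+v)^(a-2) ≤ (1-v)^(a-2) :=
        Real.rpow_le_rpow_of_nonpos h2 (by linarith [hv.1]) (by linarith)
      have ha0 : 0 ≤ a*(a-1) := by nlinarith
      nlinarith
  have h0 : h 0 = 0 := by simp [hh]
  have h1 : h 1 = 0 := by
    simp only [hh]
    rw [show (1:ℝ) - 1 = 0 by ring, Real.zero_rpow (by linarith : a ≠ 0)]
    ring_nf
  have := hconc.2 (Set.mem_Icc.2 ⟨le_refl 0, zero_le_one⟩) (Set.mem_Icc.2 ⟨zero_le_one, le_refl 1⟩)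
    (by linarith : (0:ℝ) ≤ 1 - u) hu0 (by ring)
  simp only [smul_eq_mul, h0, h1, mul_zero, add_zero, mul_one, zero_add] at this
  simp only [hh] at this
  linarith

theorem stmt_2 (x y a : ℝ) (hy : 0 ≤ y) (hxy : y ≤ x) (ha1 : 1 ≤ a) (ha2 : a ≤ 2) :
    (x + y) ^ (a - 1) * (x - y) ≤ x ^ a - y ^ a ∧
    x ^ a - y ^ a ≤ a * (x - y) * ((x + y) / 2) ^ (a - 1) := by
  rcases eq_or_lt_of_le (by linarith : (0:ℝ) ≤ x + y) with hs | hs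
  · have hx0 : x = 0 := by linarith
    have hy0 : y = 0 := by linarith
    subst hx0; subst hy0
    norm_num
  · set s : ℝ := x + y with hsdef
    set u : ℝ := (x - y)/s with hudef
    have hu0 : 0 ≤ u := div_nonneg (by linarith) hs.le
    have hu1 : u ≤ 1 := by rw [hudef, div_le_one hs]; linarith
    have hxy' : x - y = s * u := by rw [hudef]; field_simp
    have hxe : x = (s/2) * (1+u) := by rw [hudef]; field_simp; ring
    have hye : y = (s/2) * (1-u) := by rw [hudef]; field_simp; ring
    have hs2 : (0:ℝ) < s/2 := by linarith
    have hxa : x ^ a = (s/2)^a * (1+u)^a := by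
      rw [hxe]; exact Real.mul_rpow hs2.le (by linarith)
    have hya : y ^ a = (s/2)^a * (1-u)^a := by
      rw [hye]; exact Real.mul_rpow hs2.le (by linarith)
    have hpow : (s/2)^a * 2^a = s^(a-1) * s := by
      rw [← Real.mul_rpow hs2.le (by norm_num : (0:ℝ) ≤ 2)]
      rw [div_mul_cancel₀ _ (two_ne_zero)]
      rw [show a = a - 1 + 1 by ring, Real.rpow_add hs, Real.rpow_one]
      ring_nf
    have hpow2 : (s/2)^a = (s/2)^(a-1) * (s/2) := by
      nth_rewrite 1 [show a = a - 1 + 1 by ring]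
      rw [Real.rpow_add hs2, Real.rpow_one]
    clear_value u s
    constructor
    · have key := key_lower ha1 ha2 hu0 hu1
      calc s^(a-1) * (x - y) = (s/2)^a * (2^a * u) := by rw [hxy']; linear_combination -u * hpow
        _ ≤ (s/2)^a * ((1+u)^a - (1-u)^a) :=
          mul_le_mul_of_nonneg_left key (Real.rpow_nonneg hs2.le a)
        _ = x ^ a - y ^ a := by rw [hxa, hya]; ring
    · have key := key_upper ha1 ha2 hu0 hu1
      calc x ^ a - y ^ a = (s/2)^a * ((1+u)^a - (1-u)^a) := by rw [hxa, hya]; ring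
        _ ≤ (s/2)^a * (2*a*u) := mul_le_mul_of_nonneg_left key (Real.rpow_nonneg hs2.le a)
        _ = a * (x - y) * (s/2)^(a-1) := by rw [hxy', hpow2]; ring
end

section
/- Let α ∈ [1/2, 1] and x, y ≥ 0. Then (x+y)^(2α) − (x^α − y^α)^2 ≤ (4xy)^α. -/
open Real Set

lemma chord_rpow {p z : ℝ} (hp1 : 1 ≤ p) (hp2 : p ≤ 2) (hz : 0 < z) :
    z ^ p ≤ (2 - p) * z + (p - 1) * z ^ 2 := by
  have h := Real.geom_mean_le_arith_mean2_weighted (by linarith : (0:ℝ) ≤ 2 - p)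
    (by linarith : (0:ℝ) ≤ p - 1) hz.le (by positivity : (0:ℝ) ≤ z ^ 2) (by ring)
  calc z ^ p = z ^ (2 - p) * (z ^ 2) ^ (p - 1) := by
        rw [← Real.rpow_natCast z 2, ← Real.rpow_mul hz.le, ← Real.rpow_add hz]
        congr 1
        ring
    _ ≤ (2 - p) * z + (p - 1) * z ^ 2 := h

lemma key_E {p z : ℝ} (hp1 : 1 ≤ p) (hp2 : p ≤ 2) (hz0 : 0 < z) (hz1 : z ≤ 1) :
    (1 - z) * (1 + z) ^ (p - 1) ≤ 1 - z ^ p := by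
  have h1 : z ^ p ≤ (2 - p) * z + (p - 1) * z ^ 2 := chord_rpow hp1 hp2 hz0
  have h2 : (1 + z) ^ (p - 1) ≤ (2 - p) * 1 + (p - 1) * (1 + z) := by
    have h := Real.geom_mean_le_arith_mean2_weighted (by linarith : (0:ℝ) ≤ 2 - p)
      (by linarith : (0:ℝ) ≤ p - 1) zero_le_one (by linarith : (0:ℝ) ≤ 1 + z) (by ring)
    calc (1 + z) ^ (p - 1) = 1 ^ (2 - p) * (1 + z) ^ (p - 1) := by
          rw [Real.one_rpow, one_mul]
      _ ≤ (2 - p) * 1 + (p - 1) * (1 + z) := h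
  have h3 : (1 - z) * (1 + z) ^ (p - 1) ≤ (1 - z) * ((2 - p) * 1 + (p - 1) * (1 + z)) :=
    mul_le_mul_of_nonneg_left h2 (by linarith)
  nlinarith

lemma key_B {p B : ℝ} (hp1 : 1 ≤ p) (hp2 : p ≤ 2) (hB : 1 ≤ B) :
    (B - B⁻¹) * (B + B⁻¹) ^ (p - 1) ≤ B ^ p - B ^ (-p) := by
  have hB0 : 0 < B := lt_of_lt_of_le one_pos hB
  set z : ℝ := (B ^ 2)⁻¹ with hzdef
  have hz0 : 0 < z := by positivity
  have hz1 : z ≤ 1 := by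
    rw [hzdef, inv_le_one_iff₀]; right; nlinarith
  have hE := key_E hp1 hp2 hz0 hz1
  have hBp : (0:ℝ) < B ^ p := Real.rpow_pos_of_pos hB0 p
  have hmul := mul_le_mul_of_nonneg_left hE hBp.le
  have hBsplit : B ^ p = B * B ^ (p - 1) := by
    nth_rewrite 1 [show p = 1 + (p-1) by ring]
    rw [Real.rpow_add hB0, Real.rpow_one]
  have h1z : (0:ℝ) ≤ 1 + z := by linarith
  have e2 : B ^ (p - 1) * (1 + z) ^ (p - 1) = (B + B⁻¹) ^ (p - 1) := by
    rw [← Real.mul_rpow hB0.le h1z]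
    congr 1
    rw [hzdef, mul_add, mul_one, sq, mul_inv, ← mul_assoc, mul_inv_cancel₀ hB0.ne', one_mul]
  have e3 : B * (1 - z) = B - B⁻¹ := by
    rw [hzdef, mul_sub, mul_one, sq, mul_inv, ← mul_assoc, mul_inv_cancel₀ hB0.ne', one_mul]
  have e1 : B ^ p * ((1 - z) * (1 + z) ^ (p - 1)) = (B - B⁻¹) * (B + B⁻¹) ^ (p - 1) := by
    calc B ^ p * ((1 - z) * (1 + z) ^ (p - 1))
        = (B * (1 - z)) * (B ^ (p - 1) * (1 + z) ^ (p - 1)) := by rw [hBsplit]; ring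
      _ = (B - B⁻¹) * (B + B⁻¹) ^ (p - 1) := by rw [e2, e3]
  have hz2 : z = B ^ (-2 : ℝ) := by
    rw [hzdef, Real.rpow_neg hB0.le, ← Real.rpow_natCast B 2]
    norm_num
  have e4 : B ^ p * (1 - z ^ p) = B ^ p - B ^ (-p) := by
    rw [hz2, ← Real.rpow_mul hB0.le, mul_sub, mul_one, ← Real.rpow_add hB0,
      show p + -2 * p = -p by ring]
  rw [e1, e4] at hmul
  exact hmul

lemma key_main {p : ℝ} (hp1 : 1 ≤ p) (hp2 : p ≤ 2) {B : ℝ} (hB : 1 ≤ B) :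
    (B + B⁻¹) ^ p ≤ B ^ p + B ^ (-p) + 2 ^ p - 2 := by
  set f : ℝ → ℝ := fun t => t ^ p + t ^ (-p) - (t + t⁻¹) ^ p with hf
  have hmono : MonotoneOn f (Ici 1) := by
    apply monotoneOn_of_hasDerivWithinAt_nonneg (convex_Ici 1)
      (f' := fun t => p * t ^ (p-1) + (-p) * t ^ (-p-1)
        - (1 + -(t^2)⁻¹) * p * (t + t⁻¹) ^ (p-1))
    · -- continuity
      have h0 : ∀ t ∈ Ici (1:ℝ), t ≠ 0 := fun t ht => by
        have : (1:ℝ) ≤ t := ht; linarith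
      apply ContinuousOn.sub
      · exact (continuousOn_id.rpow_const (fun t ht => Or.inl (h0 t ht))).add
          (continuousOn_id.rpow_const (fun t ht => Or.inl (h0 t ht)))
      · exact (continuousOn_id.add (continuousOn_id.inv₀ h0)).rpow_const
          (fun t ht => Or.inl (by
            have h1 : (1:ℝ) ≤ t := ht
            have : (0:ℝ) < t + t⁻¹ := by positivity
            exact ne_of_gt this))
    · intro t ht
      rw [interior_Ici] at ht
      have ht1 : (1:ℝ) < t := ht
      have ht0 : (0:ℝ) < t := by linarith
      have d1 : HasDerivAt (fun s : ℝ => s ^ p) (p * t ^ (p-1)) t :=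
        Real.hasDerivAt_rpow_const (Or.inl ht0.ne')
      have d2 : HasDerivAt (fun s : ℝ => s ^ (-p)) ((-p) * t ^ (-p-1)) t :=
        Real.hasDerivAt_rpow_const (Or.inl ht0.ne')
      have d3 : HasDerivAt (fun s : ℝ => s + s⁻¹) (1 + -(t^2)⁻¹) t :=
        (hasDerivAt_id t).add (hasDerivAt_inv ht0.ne')
      have htt : t + t⁻¹ ≠ 0 := by positivity
      have d4 : HasDerivAt (fun s : ℝ => (s + s⁻¹) ^ p)
          ((1 + -(t^2)⁻¹) * p * (t + t⁻¹) ^ (p-1)) t := d3.rpow_const (Or.inl htt)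
      exact ((d1.add d2).sub d4).hasDerivWithinAt
    · intro t ht
      rw [interior_Ici] at ht
      have ht1 : (1:ℝ) < t := ht
      have ht0 : (0:ℝ) < t := by linarith
      have hkeyB := key_B hp1 hp2 ht1.le
      have hp0 : (0:ℝ) < p := by linarith
      rw [sub_nonneg]
      set A : ℝ := (t + t⁻¹) ^ (p-1) with hA
      have e5 : (1 + -(t^2)⁻¹) * p * A = p * (t⁻¹ * ((t - t⁻¹) * A)) := by
        field_simp
        ring
      have e6 : p * t ^ (p-1) + (-p) * t ^ (-p-1) = p * (t⁻¹ * (t ^ p - t ^ (-p))) := by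
        have a1 : t ^ p = t * t ^ (p - 1) := by
          nth_rewrite 1 [show p = 1 + (p-1) by ring]
          rw [Real.rpow_add ht0, Real.rpow_one]
        have a2 : t ^ (-p) = t * t ^ (-p - 1) := by
          nth_rewrite 1 [show -p = 1 + (-p-1) by ring]
          rw [Real.rpow_add ht0, Real.rpow_one]
        rw [a1, a2]
        field_simp
        ring
      rw [e5, e6]
      apply mul_le_mul_of_nonneg_left _ hp0.le
      apply mul_le_mul_of_nonneg_left _ (by positivity : (0:ℝ) ≤ t⁻¹)
      exact hkeyB
  have h1 : f 1 ≤ f B := hmono self_mem_Ici hB hB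
  have hf1 : f 1 = 2 - 2 ^ p := by
    simp only [hf, Real.one_rpow, inv_one]
    norm_num
  rw [hf1] at h1
  simp only [hf] at h1
  linarith

theorem stmt_3 (α x y : ℝ) (hα1 : 1 / 2 ≤ α) (hα2 : α ≤ 1) (hx : 0 ≤ x) (hy : 0 ≤ y) :
    (x + y) ^ (2 * α) - (x ^ α - y ^ α) ^ 2 ≤ (4 * x * y) ^ α := by
  have hα0 : (0:ℝ) < α := by linarith
  have hzero : ∀ u : ℝ, 0 ≤ u →
      (u + 0) ^ (2*α) - (u ^ α - (0:ℝ) ^ α) ^ 2 ≤ (4 * u * 0) ^ α := by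
    intro u hu
    rw [Real.zero_rpow hα0.ne', mul_zero, Real.zero_rpow hα0.ne', add_zero, sub_zero]
    have h2 : u ^ (2*α) = (u ^ α) ^ 2 := by
      rw [show 2*α = α*2 by ring, Real.rpow_mul hu, ← Real.rpow_natCast (u ^ α) 2]
      norm_num
    rw [h2]
    simp
  have hmain : ∀ a b : ℝ, 0 < b → b ≤ a →
      (a + b) ^ (2*α) - (a ^ α - b ^ α) ^ 2 ≤ (4 * a * b) ^ α := by
    intro a b hb hba
    have ha : 0 < a := lt_of_lt_of_le hb hba
    set B : ℝ := Real.sqrt (a / b) with hBdef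
    have hab : (0:ℝ) < a / b := by positivity
    have hB0 : 0 < B := Real.sqrt_pos.2 hab
    have hB1 : 1 ≤ B := by
      rw [hBdef, show (1:ℝ) = Real.sqrt 1 from Real.sqrt_one.symm]
      apply Real.sqrt_le_sqrt
      rw [le_div_iff₀ hb]; linarith
    have hkey := key_main (by linarith : (1:ℝ) ≤ 2*α) (by linarith : 2*α ≤ 2) hB1
    have hab0 : (0:ℝ) < a * b := by positivity
    have habα : (0:ℝ) < (a*b) ^ α := Real.rpow_pos_of_pos hab0 α
    have hB2α : B ^ (2*α) = (a/b) ^ α := by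
      rw [hBdef, Real.sqrt_eq_rpow, ← Real.rpow_mul hab.le,
        show (1/2 : ℝ)*(2*α) = α by ring]
    have hBneg : B ^ (-(2*α)) = (b/a) ^ α := by
      rw [hBdef, Real.sqrt_eq_rpow, ← Real.rpow_mul hab.le,
        show (1/2 : ℝ)*(-(2*α)) = -α by ring, Real.rpow_neg hab.le,
        ← Real.inv_rpow hab.le, inv_div]
    have id1 : (a*b) ^ α * B ^ (2*α) = a ^ (2*α) := by
      rw [hB2α, ← Real.mul_rpow hab0.le hab.le,
        show a * b * (a/b) = a^2 by field_simp,
        ← Real.rpow_natCast a 2, ← Real.rpow_mul ha.le]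
      norm_num
    have hba0 : (0:ℝ) < b / a := by positivity
    have id2 : (a*b) ^ α * B ^ (-(2*α)) = b ^ (2*α) := by
      rw [hBneg, ← Real.mul_rpow hab0.le hba0.le,
        show a * b * (b/a) = b^2 by field_simp,
        ← Real.rpow_natCast b 2, ← Real.rpow_mul hb.le]
      norm_num
    have id3 : (a*b) ^ α * (2:ℝ) ^ (2*α) = (4*a*b) ^ α := by
      rw [show (2:ℝ)^(2*α) = 4 ^ α by
        rw [show (4:ℝ) = 2^(2:ℕ) by norm_num, ← Real.rpow_natCast (2:ℝ) 2,
          ← Real.rpow_mul (by norm_num : (0:ℝ) ≤ 2)]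
        norm_num]
      rw [← Real.mul_rpow hab0.le (by norm_num : (0:ℝ) ≤ 4)]
      congr 1
      ring
    have id4 : (a*b) ^ α * (B + B⁻¹) ^ (2*α) = (a+b) ^ (2*α) := by
      have hsq : Real.sqrt (a*b) ^ (2*α) = (a*b) ^ α := by
        rw [Real.sqrt_eq_rpow, ← Real.rpow_mul hab0.le, show (1/2 : ℝ)*(2*α) = α by ring]
      rw [← hsq, ← Real.mul_rpow (Real.sqrt_nonneg _) (by positivity : (0:ℝ) ≤ B + B⁻¹)]
      congr 1
      rw [hBdef]
      have hsb : (Real.sqrt (a/b))⁻¹ = Real.sqrt (b/a) := by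
        rw [← Real.sqrt_inv, inv_div]
      rw [hsb, mul_add, ← Real.sqrt_mul hab0.le, ← Real.sqrt_mul hab0.le,
        show a*b*(a/b) = a^2 by field_simp,
        show a*b*(b/a) = b^2 by field_simp,
        Real.sqrt_sq ha.le, Real.sqrt_sq hb.le]
    have id5 : a ^ (2*α) = (a ^ α)^2 := by
      rw [show 2*α = α*2 by ring, Real.rpow_mul ha.le, ← Real.rpow_natCast (a ^ α) 2]
      norm_num
    have id6 : b ^ (2*α) = (b ^ α)^2 := by
      rw [show 2*α = α*2 by ring, Real.rpow_mul hb.le, ← Real.rpow_natCast (b ^ α) 2]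
      norm_num
    have id7 : a ^ α * b ^ α = (a*b) ^ α := (Real.mul_rpow ha.le hb.le).symm
    have hmul := mul_le_mul_of_nonneg_left hkey habα.le
    have expand : (a*b)^α * (B ^ (2*α) + B ^ (-(2*α)) + 2 ^ (2*α) - 2)
        = a ^ (2*α) + b ^ (2*α) + (4*a*b) ^ α - 2 * (a*b)^α := by
      rw [mul_sub, mul_add, mul_add, id1, id2, id3]
      ring
    rw [id4, expand] at hmul
    have hexp : (a ^ α - b ^ α)^2 = a ^ (2*α) - 2*(a*b)^α + b ^ (2*α) := by
      rw [id5, id6, ← id7]; ring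
    linarith
  rcases eq_or_lt_of_le hy with hy0 | hy0
  · rw [← hy0]; exact hzero x hx
  rcases eq_or_lt_of_le hx with hx0 | hx0
  · rw [← hx0]
    have h := hzero y hy
    rw [add_zero, mul_zero] at h
    rw [zero_add, show (4:ℝ)*0*y = 4*y*0 by ring, mul_zero,
      show ((0:ℝ)^α - y^α)^2 = (y^α - (0:ℝ)^α)^2 by ring]
    exact h
  rcases le_total y x with hxy | hxy
  · exact hmain x y hy0 hxy
  · have h := hmain y x hx0 hxy
    rw [add_comm y x, show (4:ℝ)*y*x = 4*x*y by ring,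
      show (y^α - x^α)^2 = (x^α - y^α)^2 by ring] at h
    exact h
end

section
/- For all s ∈ (0, 1/2), it holds (1−s)/s ≤ log(s)/log(1−s). -/
lemma aux_mono : MonotoneOn (fun x : ℝ => x * Real.log x)
    (Set.Icc (Real.exp (-1)) 1) := by
  have hep : (0:ℝ) < Real.exp (-1) := Real.exp_pos _
  apply monotoneOn_of_deriv_nonneg (convex_Icc _ _)
  · apply ContinuousOn.mul continuousOn_id
    apply Real.continuousOn_log.mono
    intro x hx
    exact ne_of_gt (lt_of_lt_of_le hep hx.1)
  · intro x hx
    rw [interior_Icc] at hx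
    have hx0 : x ≠ 0 := ne_of_gt (lt_trans hep hx.1)
    exact ((hasDerivAt_id x).mul (Real.hasDerivAt_log hx0)).differentiableAt.differentiableWithinAt
  · intro x hx
    rw [interior_Icc] at hx
    have hx0 : (0:ℝ) < x := lt_trans hep hx.1
    have hd : HasDerivAt (fun x : ℝ => x * Real.log x) (1 * Real.log x + x * x⁻¹) x :=
      (hasDerivAt_id x).mul (Real.hasDerivAt_log (ne_of_gt hx0))
    rw [hd.deriv]
    have : (-1:ℝ) ≤ Real.log x := by
      calc (-1:ℝ) = Real.log (Real.exp (-1)) := (Real.log_exp _).symm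
      _ ≤ Real.log x := Real.log_le_log (Real.exp_pos _) hx.1.le
    have hxx : x * x⁻¹ = 1 := mul_inv_cancel₀ (ne_of_gt hx0)
    rw [hxx]
    linarith

theorem stmt_4 (s : ℝ) (hs0 : 0 < s) (hs1 : s < 1 / 2) :
    (1 - s) / s ≤ Real.log s / Real.log (1 - s) := by
  have hs1' : s < 1 := by linarith
  have h1s : 0 < 1 - s := by linarith
  have h1 : Real.log (1 - s) < 0 := Real.log_neg h1s (by linarith)
  have h2 : Real.log s < 0 := Real.log_neg hs0 hs1'
  have key : s * Real.log s ≤ (1 - s) * Real.log (1 - s) := by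
    rcases le_or_gt s (Real.exp (-1)) with hc | hc
    · -- small s : use log(1/(1-s)) ≤ 1/(1-s) - 1 and log s ≤ -1
      have hls : Real.log s ≤ -1 := by
        calc Real.log s ≤ Real.log (Real.exp (-1)) := Real.log_le_log hs0 hc
        _ = -1 := Real.log_exp _
      have hb : Real.log (1 - s)⁻¹ ≤ (1 - s)⁻¹ - 1 :=
        Real.log_le_sub_one_of_pos (by positivity)
      rw [Real.log_inv] at hb
      have hinv : (1 - s) * (1 - s)⁻¹ = 1 := mul_inv_cancel₀ (ne_of_gt h1s)
      nlinarith [mul_le_mul_of_nonneg_left hb h1s.le]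
    · -- large s : monotonicity of x * log x on [1/e, 1]
      have he2 : Real.exp (-1) < 1 / 2 := by
        rw [Real.exp_neg]
        have : (2:ℝ) < Real.exp 1 := by
          have := Real.add_one_le_exp (1:ℝ)
          nlinarith [Real.exp_pos (1:ℝ), Real.exp_one_gt_d9]
        rw [inv_lt_comm₀ (Real.exp_pos _) (by norm_num)]
        simpa using this
      have hsm : s ∈ Set.Icc (Real.exp (-1)) 1 := ⟨hc.le, hs1'.le⟩
      have htm : (1 - s) ∈ Set.Icc (Real.exp (-1)) 1 := ⟨by linarith, by linarith⟩
      exact aux_mono hsm htm (by linarith)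
  rw [show Real.log s / Real.log (1 - s) = (-Real.log s) / (-Real.log (1 - s)) by
        rw [neg_div_neg_eq],
      div_le_div_iff₀ hs0 (neg_pos.2 h1)]
  nlinarith
end

section
/- Let a ≥ b > 0 and define f(x) = (a^x − b^x)/(a+b)^x for x ∈ [1,2]. Then f is concave on [1,2]; in particular, for all x ∈ [1,2], f(x) ≥ f(1) = f(2) = (a−b)/(a+b). -/
open Real

-- Key inequality: for 0 < q ≤ p with p + q = 1, p * (-log p) ≤ q * (-log q).
lemma key1 {p q : ℝ} (hq : 0 < q) (hp : 0 < p) (hpq : p + q = 1) (hqp : q ≤ p) :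
    p * (-Real.log p) ≤ q * (-Real.log q) := by
  have h1 : Real.log (q / p) ≤ q / p - 1 := Real.log_le_sub_one_of_pos (div_pos hq hp)
  have h2 : Real.log p⁻¹ ≤ p⁻¹ - 1 := Real.log_le_sub_one_of_pos (inv_pos.mpr hp)
  rw [Real.log_div hq.ne' hp.ne'] at h1
  rw [Real.log_inv] at h2
  have hp' : p ≠ 0 := hp.ne'
  have e1 : (q / p - 1) * p = q - p := by field_simp
  have e2 : (p⁻¹ - 1) * p = 1 - p := by field_simp
  -- from h1 * q : q * log q - q * log p ≤ q*(q/p - 1)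
  nlinarith [mul_le_mul_of_nonneg_left h1 hq.le, mul_le_mul_of_nonneg_left h2 (sub_nonneg.mpr hqp),
    mul_pos hq hp, sq_nonneg (p - q)]

lemma key2 {p q : ℝ} (hq : 0 < q) (hp : 0 < p) (hpq : p + q = 1) (hqp : q ≤ p)
    {x : ℝ} (hx1 : 1 ≤ x) (hx2 : x ≤ 2) :
    p ^ x * (Real.log p) ^ 2 ≤ q ^ x * (Real.log q) ^ 2 := by
  have hk := key1 hq hp hpq hqp
  have hp1 : p ≤ 1 := by linarith
  have hlp : Real.log p ≤ 0 := Real.log_nonpos hp.le hp1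
  have hlq : Real.log q ≤ 0 := Real.log_nonpos hq.le (by linarith)
  have hnp : 0 ≤ p * (-Real.log p) := mul_nonneg hp.le (by linarith)
  have hsq : (p * (-Real.log p)) ^ 2 ≤ (q * (-Real.log q)) ^ 2 := by
    apply pow_le_pow_left₀ hnp hk
  have hpq' : 1 ≤ p / q := (one_le_div hq).mpr hqp
  have h3 : (p / q) ^ x ≤ (p / q) ^ (2 : ℝ) := Real.rpow_le_rpow_of_exponent_le hpq' hx2
  have hrw : p ^ x = q ^ x * (p / q) ^ x := by
    rw [← Real.mul_rpow hq.le (by positivity)]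
    rw [mul_div_cancel₀ _ hq.ne']
  rw [hrw]
  have step1 : q ^ x * (p / q) ^ x * Real.log p ^ 2 ≤ q ^ x * (p / q) ^ (2:ℝ) * Real.log p ^ 2 := by
    have : (0:ℝ) ≤ q ^ x := (Real.rpow_pos_of_pos hq x).le
    nlinarith [sq_nonneg (Real.log p), mul_le_mul_of_nonneg_left h3 this]
  refine step1.trans ?_
  have h4 : (p / q) ^ (2:ℝ) * Real.log p ^ 2 ≤ Real.log q ^ 2 := by
    rw [Real.rpow_two, div_pow, div_mul_eq_mul_div, div_le_iff₀ (by positivity)]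
    nlinarith [hsq]
  have : (0:ℝ) ≤ q ^ x := (Real.rpow_pos_of_pos hq x).le
  calc q ^ x * (p / q) ^ (2:ℝ) * Real.log p ^ 2 = q ^ x * ((p / q) ^ (2:ℝ) * Real.log p ^ 2) := by
        ring
    _ ≤ q ^ x * Real.log q ^ 2 := mul_le_mul_of_nonneg_left h4 this

lemma concave_aux {p q : ℝ} (hq : 0 < q) (hp : 0 < p) (hpq : p + q = 1) (hqp : q ≤ p) :
    ConcaveOn ℝ (Set.Icc (1 : ℝ) 2) (fun x => p ^ x - q ^ x) := by
  apply concaveOn_of_hasDerivWithinAt2_nonpos (f' := fun x => p ^ x * Real.log p - q ^ x * Real.log q)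
    (f'' := fun x => p ^ x * Real.log p * Real.log p - q ^ x * Real.log q * Real.log q)
    (convex_Icc 1 2)
  · have hd : Differentiable ℝ (fun x : ℝ => p ^ x - q ^ x) := fun x =>
      ((Real.hasStrictDerivAt_const_rpow hp x).hasDerivAt.sub
        (Real.hasStrictDerivAt_const_rpow hq x).hasDerivAt).differentiableAt
    exact hd.continuous.continuousOn
  · intro x hx
    exact (((Real.hasStrictDerivAt_const_rpow hp x).hasDerivAt.sub
      (Real.hasStrictDerivAt_const_rpow hq x).hasDerivAt)).hasDerivWithinAt
  · intro x hx
    exact ((((Real.hasStrictDerivAt_const_rpow hp x).hasDerivAt.mul_const (Real.log p)).sub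
      ((Real.hasStrictDerivAt_const_rpow hq x).hasDerivAt.mul_const (Real.log q)))).hasDerivWithinAt
  · intro x hx
    rw [interior_Icc] at hx
    have := key2 hq hp hpq hqp hx.1.le hx.2.le
    nlinarith [this]

theorem stmt_5 (a b : ℝ) (hb : 0 < b) (hab : b ≤ a) :
    ConcaveOn ℝ (Set.Icc (1 : ℝ) 2) (fun x => (a ^ x - b ^ x) / (a + b) ^ x) ∧
    (∀ x ∈ Set.Icc (1 : ℝ) 2, (a - b) / (a + b) ≤ (a ^ x - b ^ x) / (a + b) ^ x) ∧
    (a ^ (1 : ℝ) - b ^ (1 : ℝ)) / (a + b) ^ (1 : ℝ) = (a - b) / (a + b) ∧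
    (a ^ (2 : ℝ) - b ^ (2 : ℝ)) / (a + b) ^ (2 : ℝ) = (a - b) / (a + b) := by
  have ha : 0 < a := lt_of_lt_of_le hb hab
  have hc : 0 < a + b := by linarith
  set p := a / (a + b) with hpdef
  set q := b / (a + b) with hqdef
  have hp : 0 < p := div_pos ha hc
  have hq : 0 < q := div_pos hb hc
  have hpq : p + q = 1 := by rw [hpdef, hqdef]; field_simp
  have hqp : q ≤ p := by
    rw [hpdef, hqdef]; gcongr
  have hfun : (fun x : ℝ => (a ^ x - b ^ x) / (a + b) ^ x) = fun x => p ^ x - q ^ x := by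
    funext x
    rw [hpdef, hqdef, Real.div_rpow ha.le hc.le, Real.div_rpow hb.le hc.le, sub_div]
  have hconc : ConcaveOn ℝ (Set.Icc (1 : ℝ) 2) (fun x => (a ^ x - b ^ x) / (a + b) ^ x) := by
    rw [hfun]; exact concave_aux hq hp hpq hqp
  have h1 : (a ^ (1 : ℝ) - b ^ (1 : ℝ)) / (a + b) ^ (1 : ℝ) = (a - b) / (a + b) := by
    rw [Real.rpow_one, Real.rpow_one, Real.rpow_one]
  have h2 : (a ^ (2 : ℝ) - b ^ (2 : ℝ)) / (a + b) ^ (2 : ℝ) = (a - b) / (a + b) := by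
    rw [Real.rpow_two, Real.rpow_two, Real.rpow_two]
    field_simp
    ring
  refine ⟨hconc, ?_, h1, h2⟩
  intro x hx
  obtain ⟨hx1, hx2⟩ := hx
  have hmem1 : (1:ℝ) ∈ Set.Icc (1:ℝ) 2 := by norm_num
  have hmem2 : (2:ℝ) ∈ Set.Icc (1:ℝ) 2 := by norm_num
  have hcomb := hconc.2 hmem1 hmem2 (show (0:ℝ) ≤ 2 - x by linarith)
    (show (0:ℝ) ≤ x - 1 by linarith) (by ring)
  simp only [smul_eq_mul] at hcomb
  have heq : (2 - x) * 1 + (x - 1) * 2 = x := by ring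
  rw [heq] at hcomb
  calc (a - b) / (a + b) = (2 - x) * ((a - b)/(a+b)) + (x - 1) * ((a - b)/(a+b)) := by ring
    _ = (2 - x) * ((a ^ (1:ℝ) - b ^ (1:ℝ)) / (a + b) ^ (1:ℝ))
        + (x - 1) * ((a ^ (2:ℝ) - b ^ (2:ℝ)) / (a + b) ^ (2:ℝ)) := by rw [h1, h2]
    _ ≤ (a ^ x - b ^ x) / (a + b) ^ x := hcomb
end

section
/- Let a, b, c, d be nonnegative reals with a ≥ b, d ≥ c, and let α ∈ [0,1]. Then a^α − b^α − c^α + d^α ≤ 2^(1−α) · (a − b − c + d)^α. -/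
open NNReal

lemma aux_subadd (u v : ℝ≥0) {α : ℝ} (h0 : 0 ≤ α) (h1 : α ≤ 1) :
    (u + v) ^ α ≤ u ^ α + v ^ α :=
  NNReal.rpow_add_le_add_rpow u v h0 h1

lemma aux_concave (u v : ℝ≥0) {α : ℝ} (h0 : 0 < α) (h1 : α ≤ 1) :
    u ^ α + v ^ α ≤ 2 ^ (1 - α) * (u + v) ^ α := by
  have hp : (1:ℝ) ≤ 1 / α := by rw [le_div_iff₀ h0]; linarith
  have h := NNReal.rpow_add_le_mul_rpow_add_rpow (u ^ α) (v ^ α) hp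
  have hu : (u ^ α) ^ (1/α) = u := by
    rw [← NNReal.rpow_mul, mul_one_div_cancel h0.ne', NNReal.rpow_one]
  have hv : (v ^ α) ^ (1/α) = v := by
    rw [← NNReal.rpow_mul, mul_one_div_cancel h0.ne', NNReal.rpow_one]
  rw [hu, hv] at h
  have h2 : (u ^ α + v ^ α) = ((u ^ α + v ^ α) ^ (1/α)) ^ α := by
    rw [← NNReal.rpow_mul, one_div_mul_cancel h0.ne', NNReal.rpow_one]
  calc u ^ α + v ^ α = ((u ^ α + v ^ α) ^ (1/α)) ^ α := h2
    _ ≤ ((2:ℝ≥0) ^ (1/α - 1) * (u + v)) ^ α :=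
        NNReal.rpow_le_rpow h h0.le
    _ = 2 ^ (1 - α) * (u + v) ^ α := by
        rw [NNReal.mul_rpow, ← NNReal.rpow_mul, sub_mul, one_div_mul_cancel h0.ne', one_mul]

theorem stmt_6 (a b c d α : ℝ) (hb : 0 ≤ b) (hc : 0 ≤ c) (hba : b ≤ a) (hcd : c ≤ d)
    (hα0 : 0 ≤ α) (hα1 : α ≤ 1) :
    a ^ α - b ^ α - c ^ α + d ^ α ≤ 2 ^ (1 - α) * (a - b - c + d) ^ α := by
  rcases eq_or_lt_of_le hα0 with rfl | hα0'
  · simp [Real.rpow_zero]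
  -- move to NNReal
  have ha : 0 ≤ a := hb.trans hba
  have hd : 0 ≤ d := hc.trans hcd
  set B := b.toNNReal
  set C := c.toNNReal
  set U := (a - b).toNNReal
  set V := (d - c).toNNReal
  have hUB : a = ((U + B : ℝ≥0) : ℝ) := by
    push_cast [U, B, Real.coe_toNNReal _ (sub_nonneg.2 hba), Real.coe_toNNReal _ hb]; ring
  have hVC : d = ((V + C : ℝ≥0) : ℝ) := by
    push_cast [V, C, Real.coe_toNNReal _ (sub_nonneg.2 hcd), Real.coe_toNNReal _ hc]; ring
  have hsum : a - b - c + d = ((U + V : ℝ≥0) : ℝ) := by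
    push_cast [U, V, Real.coe_toNNReal _ (sub_nonneg.2 hba), Real.coe_toNNReal _ (sub_nonneg.2 hcd)]
    ring
  have hB : b = ((B : ℝ≥0) : ℝ) := (Real.coe_toNNReal _ hb).symm
  have hC : c = ((C : ℝ≥0) : ℝ) := (Real.coe_toNNReal _ hc).symm
  rw [hsum, hUB, hVC, hB, hC]
  have h1 : ((U + B : ℝ≥0) : ℝ) ^ α ≤ ((U : ℝ)) ^ α + ((B : ℝ)) ^ α := by
    exact_mod_cast aux_subadd U B hα0 hα1
  have h2 : ((V + C : ℝ≥0) : ℝ) ^ α ≤ ((V : ℝ)) ^ α + ((C : ℝ)) ^ α := by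
    exact_mod_cast aux_subadd V C hα0 hα1
  have h3 : ((U : ℝ)) ^ α + ((V : ℝ)) ^ α ≤ 2 ^ (1 - α) * ((U + V : ℝ≥0) : ℝ) ^ α := by
    exact_mod_cast aux_concave U V hα0' hα1
  linarith
end

section
/- Let a ≥ b ≥ c ≥ d ≥ 0 with a + d ≥ b + c, and let α ∈ [0,1]. Then a^α − b^α − c^α + d^α ≤ (a − b − c + d)^α. -/
lemma key_aux_s7 (x y s α : ℝ) (hx : 0 ≤ x) (hxy : x ≤ y) (hs : 0 ≤ s)
    (hα0 : 0 ≤ α) (hα1 : α ≤ 1) :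
    (y + s) ^ α + x ^ α ≤ (x + s) ^ α + y ^ α := by
  rcases eq_or_lt_of_le (by linarith : (0:ℝ) ≤ y - x + s) with ht | ht
  · have hs0 : s = 0 := by linarith
    have hxy0 : x = y := by linarith
    simp [hs0, hxy0]
  have hcon := Real.concaveOn_rpow hα0 hα1
  have hmem1 : y + s ∈ Set.Ici (0:ℝ) := by
    simp only [Set.mem_Ici]; linarith
  have hmem2 : x ∈ Set.Ici (0:ℝ) := hx
  have htne : y - x + s ≠ 0 := ne_of_gt ht
  have hl : 0 ≤ s / (y - x + s) := div_nonneg hs ht.le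
  have hm : 0 ≤ (y - x) / (y - x + s) := div_nonneg (by linarith) ht.le
  have hsum : s / (y - x + s) + (y - x) / (y - x + s) = 1 := by
    rw [← add_div, div_eq_one_iff_eq htne]; ring
  have hsum' : (y - x) / (y - x + s) + s / (y - x + s) = 1 := by linarith
  have h1 := hcon.2 hmem1 hmem2 hl hm hsum
  have h2 := hcon.2 hmem1 hmem2 hm hl hsum'
  simp only [smul_eq_mul] at h1 h2
  have e1 : s / (y - x + s) * (y + s) + (y - x) / (y - x + s) * x = x + s := by
    rw [div_mul_eq_mul_div, div_mul_eq_mul_div, ← add_div, div_eq_iff htne]; ring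
  have e2 : (y - x) / (y - x + s) * (y + s) + s / (y - x + s) * x = y := by
    rw [div_mul_eq_mul_div, div_mul_eq_mul_div, ← add_div, div_eq_iff htne]; ring
  rw [e1] at h1
  rw [e2] at h2
  have hfin : s / (y - x + s) * (y + s) ^ α + (y - x) / (y - x + s) * x ^ α +
      ((y - x) / (y - x + s) * (y + s) ^ α + s / (y - x + s) * x ^ α) =
      (y + s) ^ α + x ^ α := by
    linear_combination ((y + s) ^ α + x ^ α) * hsum
  linarith [add_le_add h1 h2]

theorem stmt_7 (a b c d α : ℝ) (hd : 0 ≤ d) (hdc : d ≤ c) (hcb : c ≤ b) (hba : b ≤ a)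
    (hsum : b + c ≤ a + d) (hα0 : 0 ≤ α) (hα1 : α ≤ 1) :
    a ^ α - b ^ α - c ^ α + d ^ α ≤ (a - b - c + d) ^ α := by
  set e := a - b - c + d with he
  have he0 : 0 ≤ e := by linarith
  have h1 := key_aux_s7 d (b + c - d) e α hd (by linarith) he0 hα0 hα1
  have ha : b + c - d + e = a := by rw [he]; ring
  rw [ha] at h1
  have h2 := key_aux_s7 d b (c - d) α hd (by linarith) (by linarith) hα0 hα1
  have hc : b + (c - d) = b + c - d := by ring
  have hc2 : d + (c - d) = c := by ring
  rw [hc, hc2] at h2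
  have h3 := key_aux_s7 0 d e α le_rfl hd he0 hα0 hα1
  rw [zero_add] at h3
  have h0 : 0 ≤ (0:ℝ) ^ α := Real.rpow_nonneg le_rfl α
  linarith
end

section
/- Let A, B be reals, a, b, c, r ≥ 0, s, t > 0. Assume (t ≥ s if and only if b ≥ a), |A| ≤ r·a, |B| ≤ r·b, and |A − B| ≤ r·c. Then |A/s − B/t| ≤ r·(min(s,t)·c + |s−t|·min(a,b))/(s·t). -/
theorem stmt_8 (A B a b c r s t : ℝ) (ha : 0 ≤ a) (hb : 0 ≤ b) (hc : 0 ≤ c) (hr : 0 ≤ r)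
    (hs : 0 < s) (ht : 0 < t) (hiff : s ≤ t ↔ a ≤ b)
    (hA : |A| ≤ r * a) (hB : |B| ≤ r * b) (hAB : |A - B| ≤ r * c) :
    |A / s - B / t| ≤ r * (min s t * c + |s - t| * min a b) / (s * t) := by
  have hst : 0 < s * t := mul_pos hs ht
  rw [div_sub_div _ _ hs.ne' ht.ne', abs_div, abs_of_pos hst, div_le_div_iff_of_pos_right hst]
  have h1 := abs_le.mp hA
  have h2 := abs_le.mp hB
  have h3 := abs_le.mp hAB
  rcases le_or_gt s t with h | h
  · have hab : a ≤ b := hiff.mp h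
    rw [min_eq_left h, min_eq_left hab, abs_of_nonpos (by linarith : s - t ≤ 0)]
    rw [abs_le]
    constructor <;> nlinarith
  · have hab : b ≤ a := by
      by_contra h'
      push_neg at h'
      exact absurd (hiff.mpr h'.le) (not_le.mpr h)
    rw [min_eq_right h.le, min_eq_right hab, abs_of_nonneg (by linarith : 0 ≤ s - t)]
    rw [abs_le]
    constructor <;> nlinarith
end

section
/- Let a, b, c > 0 and β ∈ [0,1]. Assume a ≤ b, b ≤ a + c, and c ≤ a + b. Then (c·a^β + (b^β − a^β)·a)/(a^β · b^β) ≤ 2^β · c^(1−β). -/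
/-- Concavity: x^p + y^p ≤ 2^(1-p) (x+y)^p for 0 ≤ p ≤ 1, x, y > 0. -/
lemma aux_concave_s9 (x y p : ℝ) (hx : 0 < x) (hy : 0 < y) (hp0 : 0 ≤ p) (hp1 : p ≤ 1) :
    x ^ p + y ^ p ≤ 2 ^ (1 - p) * (x + y) ^ p := by
  set m : ℝ := (x + y) / 2 with hm
  have hmpos : 0 < m := by positivity
  have h1 : x ^ p * m ^ (1 - p) ≤ p * x + (1 - p) * m :=
    Real.geom_mean_le_arith_mean2_weighted hp0 (by linarith) hx.le hmpos.le (by ring)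
  have h2 : y ^ p * m ^ (1 - p) ≤ p * y + (1 - p) * m :=
    Real.geom_mean_le_arith_mean2_weighted hp0 (by linarith) hy.le hmpos.le (by ring)
  have hsum : (x ^ p + y ^ p) * m ^ (1 - p) ≤ 2 * m := by
    have : p * x + (1 - p) * m + (p * y + (1 - p) * m) = 2 * m := by
      rw [hm]; ring
    nlinarith [h1, h2]
  have hmp : (0:ℝ) < m ^ (1 - p) := Real.rpow_pos_of_pos hmpos _
  have hsplit : m ^ (1:ℝ) = m ^ p * m ^ (1 - p) := by
    rw [← Real.rpow_add hmpos]; ring_nf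
  have hm1 : m ^ (1:ℝ) = m := Real.rpow_one m
  have hfin : x ^ p + y ^ p ≤ 2 * m ^ p := by
    rw [← mul_le_mul_iff_of_pos_right hmp]
    calc (x ^ p + y ^ p) * m ^ (1 - p) ≤ 2 * m := hsum
    _ = 2 * (m ^ p * m ^ (1 - p)) := by rw [← hsplit, hm1]
    _ = 2 * m ^ p * m ^ (1 - p) := by ring
  have h2m : 2 * m ^ p = 2 ^ (1 - p) * (x + y) ^ p := by
    have hxy : (0:ℝ) < x + y := by linarith
    rw [hm, Real.div_rpow hxy.le (by norm_num : (0:ℝ) ≤ 2), Real.rpow_sub (by norm_num : (0:ℝ) < 2),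
      Real.rpow_one]
    have h2p : (0:ℝ) < (2:ℝ) ^ p := Real.rpow_pos_of_pos (by norm_num) _
    field_simp
  rw [← h2m]
  exact hfin

theorem stmt_9 (a b c β : ℝ) (ha : 0 < a) (hb : 0 < b) (hc : 0 < c)
    (hβ0 : 0 ≤ β) (hβ1 : β ≤ 1) (hab : a ≤ b) (hbac : b ≤ a + c) (hcab : c ≤ a + b) :
    (c * a ^ β + (b ^ β - a ^ β) * a) / (a ^ β * b ^ β) ≤ 2 ^ β * c ^ (1 - β) := by
  have haβ : (0:ℝ) < a ^ β := Real.rpow_pos_of_pos ha _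
  have hbβ : (0:ℝ) < b ^ β := Real.rpow_pos_of_pos hb _
  have hcβ : (0:ℝ) < c ^ β := Real.rpow_pos_of_pos hc _
  have key : (c * a ^ β + (b ^ β - a ^ β) * a) / (a ^ β * b ^ β)
      = (c - a) / b ^ β + a ^ (1 - β) := by
    rw [Real.rpow_sub ha, Real.rpow_one]
    field_simp
    ring
  rw [key]
  rcases le_or_gt c a with hca | hca
  · -- case c ≤ a
    have hacpos : (0:ℝ) < a + c := by linarith
    have hacβ : (0:ℝ) < (a + c) ^ β := Real.rpow_pos_of_pos hacpos _
    have hble : b ^ β ≤ (a + c) ^ β := Real.rpow_le_rpow hb.le hbac hβ0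
    -- step 1
    have h1 : (c - a) / b ^ β ≤ (c - a) / (a + c) ^ β := by
      rw [div_le_div_iff₀ hbβ hacβ]
      have : c - a ≤ 0 := by linarith
      nlinarith [hble, this]
    -- step 2 : a^(1-β) * (a+c)^β ≤ a + β*c
    have h2 : a ^ (1 - β) * (a + c) ^ β ≤ a + β * c := by
      have := Real.geom_mean_le_arith_mean2_weighted (by linarith : (0:ℝ) ≤ 1 - β) hβ0
        ha.le hacpos.le (by ring)
      calc a ^ (1 - β) * (a + c) ^ β ≤ (1 - β) * a + β * (a + c) := this
        _ = a + β * c := by ring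
    have h3 : (c - a) / (a + c) ^ β + a ^ (1 - β) ≤ (1 + β) * c / (a + c) ^ β := by
      rw [div_add' _ _ _ hacβ.ne', div_le_div_iff₀ hacβ hacβ]
      nlinarith [h2, hacβ]
    -- step 3
    have h2cβ : (2 * c) ^ β ≤ (a + c) ^ β := Real.rpow_le_rpow (by linarith) (by linarith) hβ0
    have h2cpos : (0:ℝ) < (2 * c) ^ β := Real.rpow_pos_of_pos (by linarith) _
    have h4 : (1 + β) * c / (a + c) ^ β ≤ (1 + β) * c / (2 * c) ^ β := by
      apply div_le_div_of_nonneg_left (by nlinarith) h2cpos h2cβ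
    -- 1 + β ≤ 4 ^ β
    have hlog4 : (1:ℝ) ≤ Real.log 4 := by
      rw [Real.le_log_iff_exp_le (by norm_num : (0:ℝ) < 4)]
      calc Real.exp 1 ≤ 2.7182818286 := Real.exp_one_lt_d9.le
        _ ≤ 4 := by norm_num
    have h4β : (1:ℝ) + β ≤ 4 ^ β := by
      have : (4:ℝ) ^ β = Real.exp (Real.log 4 * β) := by
        rw [Real.rpow_def_of_pos (by norm_num : (0:ℝ) < 4)]
      rw [this]
      have hexp := Real.add_one_le_exp (Real.log 4 * β)
      nlinarith [hexp, hlog4, hβ0]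
    -- final: (1+β)*c/(2c)^β ≤ 2^β * c^(1-β)
    have h5 : (1 + β) * c / (2 * c) ^ β ≤ 2 ^ β * c ^ (1 - β) := by
      have hmul : (2 * c) ^ β = 2 ^ β * c ^ β :=
        Real.mul_rpow (by norm_num) hc.le
      have hc1β : c ^ (1 - β) * c ^ β = c := by
        rw [← Real.rpow_add hc]; simp
      rw [hmul, div_le_iff₀ (by positivity)]
      have h4eq : (4:ℝ) ^ β = 2 ^ β * 2 ^ β := by
        rw [← Real.mul_rpow (by norm_num : (0:ℝ) ≤ 2) (by norm_num : (0:ℝ) ≤ 2)]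
        norm_num
      calc (1 + β) * c ≤ 4 ^ β * c := mul_le_mul_of_nonneg_right h4β hc.le
        _ = 2 ^ β * c ^ (1 - β) * (2 ^ β * c ^ β) := by
            rw [h4eq]; linear_combination (-(2:ℝ) ^ β * (2:ℝ) ^ β) * hc1β
    linarith [h1, h3, h4, h5]
  · -- case a < c
    have hxpos : (0:ℝ) < c - a := by linarith
    have hxβ : (0:ℝ) < (c - a) ^ β := Real.rpow_pos_of_pos hxpos _
    have hbx : (c - a) ^ β ≤ b ^ β := Real.rpow_le_rpow hxpos.le (by linarith) hβ0
    have h1 : (c - a) / b ^ β ≤ (c - a) ^ (1 - β) := by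
      have : (c - a) ^ (1 - β) = (c - a) / (c - a) ^ β := by
        rw [Real.rpow_sub hxpos, Real.rpow_one]
      rw [this]
      apply div_le_div_of_nonneg_left hxpos.le hxβ hbx
    have h2 := aux_concave_s9 (c - a) a (1 - β) hxpos ha (by linarith) (by linarith)
    have e1 : 1 - (1 - β) = β := by ring
    have e2 : c - a + a = c := by ring
    rw [e1, e2] at h2
    linarith [h1, h2]
end

section
/- Let α ∈ [1/2, 1], b ≥ 0, and a, c ∈ ℝ. Then |a|^(2α) − |c|^(2α) − |a−b|^(2α) + |c−b|^(2α) ≤ 2^(1−2α)·((a−c+b)^(2α) − |a−c−b|^(2α)) if a > c, and |a|^(2α) − |c|^(2α) − |a−b|^(2α) + |c−b|^(2α) ≤ 0 if a ≤ c. -/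
open Set Filter

-- convex combination inequality for |x|^p, p ≥ 1
lemma abs_rpow_combo {p : ℝ} (hp : 1 ≤ p) (x y : ℝ) {la lb : ℝ} (hla : 0 ≤ la) (hlb : 0 ≤ lb)
    (hlab : la + lb = 1) : |la * x + lb * y| ^ p ≤ la * |x| ^ p + lb * |y| ^ p := by
  have h1 : |la * x + lb * y| ≤ la * |x| + lb * |y| := by
    calc |la * x + lb * y| ≤ |la * x| + |lb * y| := abs_add_le _ _
      _ = la * |x| + lb * |y| := by rw [abs_mul, abs_mul, abs_of_nonneg hla, abs_of_nonneg hlb]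
  have h2 : |la * x + lb * y| ^ p ≤ (la * |x| + lb * |y|) ^ p :=
    Real.rpow_le_rpow (abs_nonneg _) h1 (by linarith)
  have h3 := (convexOn_rpow hp).2 (Set.mem_Ici.2 (abs_nonneg x)) (Set.mem_Ici.2 (abs_nonneg y))
    hla hlb hlab
  simp only [smul_eq_mul] at h3
  linarith

lemma fourpoint {p : ℝ} (hp : 1 ≤ p) {x1 x2 x3 x4 : ℝ} (h12 : x1 ≤ x2) (h13 : x1 ≤ x3)
    (hsum : x2 + x3 = x1 + x4) : |x2| ^ p + |x3| ^ p ≤ |x1| ^ p + |x4| ^ p := by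
  have hd : 0 ≤ x4 - x1 := by linarith
  rcases eq_or_lt_of_le hd with h0 | hdpos
  · have e2 : x2 = x1 := le_antisymm (by linarith) h12
    have e3 : x3 = x1 := le_antisymm (by linarith) h13
    have e4 : x4 = x1 := by linarith
    rw [e2, e3, e4]
  · set d := x4 - x1 with hddef
    have hdne : d ≠ 0 := ne_of_gt hdpos
    have hla : 0 ≤ (x4 - x2) / d := div_nonneg (by linarith) hdpos.le
    have hlb : 0 ≤ (x2 - x1) / d := div_nonneg (by linarith) hdpos.le
    have hlab : (x4 - x2) / d + (x2 - x1) / d = 1 := by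
      rw [← add_div, div_eq_one_iff_eq hdne]; rw [hddef]; ring
    have h2 := abs_rpow_combo hp x1 x4 hla hlb hlab
    have h3 := abs_rpow_combo hp x1 x4 hlb hla (by linarith)
    have e2 : (x4 - x2) / d * x1 + (x2 - x1) / d * x4 = x2 := by
      field_simp; rw [hddef]; ring
    have e3 : (x2 - x1) / d * x1 + (x4 - x2) / d * x4 = x3 := by
      have hx3 : x3 = x1 + x4 - x2 := by linarith
      field_simp; rw [hx3, hddef]; ring
    rw [e2] at h2
    rw [e3] at h3
    have key : (x4 - x2) / d * |x1| ^ p + (x2 - x1) / d * |x4| ^ p +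
        ((x2 - x1) / d * |x1| ^ p + (x4 - x2) / d * |x4| ^ p) = |x1| ^ p + |x4| ^ p := by
      linear_combination (|x1| ^ p + |x4| ^ p) * hlab
    linarith


-- subadditivity of rpow for exponent ≤ 1
lemma rpow_subadd {q : ℝ} (hq0 : 0 ≤ q) (hq1 : q ≤ 1) {x y : ℝ} (hx : 0 ≤ x) (hy : 0 ≤ y) :
    (x + y) ^ q ≤ x ^ q + y ^ q := by
  have h := NNReal.rpow_add_le_add_rpow x.toNNReal y.toNNReal hq0 hq1
  rw [← Real.toNNReal_add hx hy] at h
  have h' := NNReal.coe_le_coe.2 h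
  push_cast at h'
  rwa [Real.coe_toNNReal _ (add_nonneg hx hy), Real.coe_toNNReal _ hx, Real.coe_toNNReal _ hy] at h'

lemma two_rpow_le {q : ℝ} (hq1 : q ≤ 1) : (2:ℝ) ^ q ≤ 2 := by
  calc (2:ℝ) ^ q ≤ (2:ℝ) ^ (1:ℝ) := Real.rpow_le_rpow_of_exponent_le one_le_two hq1
    _ = 2 := Real.rpow_one 2

-- the key concavity-type bound on the derivative
lemma deriv_bound {p : ℝ} (hp : 1 < p) (hp2 : p ≤ 2) {s t : ℝ} (hs : 0 ≤ s) (ht : 0 < t) :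
    p * |s + t| ^ (p - 2) * (s + t) - p * |s - t| ^ (p - 2) * (s - t)
      - 2 * (p * |t| ^ (p - 2) * t) ≤ 0 := by
  set q := p - 1 with hq
  have hq0 : 0 < q := by rw [hq]; linarith
  have hq1 : q ≤ 1 := by rw [hq]; linarith
  have hp0 : 0 < p := by linarith
  have hpos : ∀ z : ℝ, 0 < z → |z| ^ (p - 2) * z = z ^ q := by
    intro z hz
    rw [abs_of_pos hz, ← Real.rpow_add_one (ne_of_gt hz) (p - 2)]
    congr 1
    rw [hq]; ring
  have e1 : |s + t| ^ (p - 2) * (s + t) = (s + t) ^ q := hpos _ (by linarith)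
  have e3 : |t| ^ (p - 2) * t = t ^ q := hpos t ht
  have key : (s + t) ^ q - |s - t| ^ (p - 2) * (s - t) ≤ 2 * t ^ q := by
    rcases lt_trichotomy s t with hst | rfl | hst
    · have e2 : |s - t| ^ (p - 2) * (s - t) = -((t - s) ^ q) := by
        rw [abs_sub_comm, show s - t = -(t - s) by ring, mul_neg,
          hpos _ (by linarith : (0:ℝ) < t - s)]
      rw [e2, sub_neg_eq_add]
      -- concavity: (s+t)^q + (t-s)^q ≤ 2 t^q since midpoint is t
      have hc := (Real.concaveOn_rpow hq0.le hq1).2 (Set.mem_Ici.2 (by linarith : (0:ℝ) ≤ s + t))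
        (Set.mem_Ici.2 (by linarith : (0:ℝ) ≤ t - s)) (by norm_num : (0:ℝ) ≤ 1/2)
        (by norm_num : (0:ℝ) ≤ 1/2) (by norm_num)
      simp only [smul_eq_mul] at hc
      rw [show (1/2 : ℝ) * (s + t) + (1/2 : ℝ) * (t - s) = t by ring] at hc
      linarith
    · simp only [sub_self, mul_zero, sub_zero]
      rw [show s + s = 2 * s by ring, Real.mul_rpow (by norm_num) (by linarith)]
      have h2q := two_rpow_le hq1
      nlinarith [Real.rpow_nonneg (le_of_lt ht : (0:ℝ) ≤ s) q]
    · have e2 : |s - t| ^ (p - 2) * (s - t) = (s - t) ^ q := hpos _ (by linarith)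
      rw [e2]
      have hsub : (s + t) ^ q ≤ (s - t) ^ q + (2 * t) ^ q := by
        have := rpow_subadd hq0.le hq1 (by linarith : (0:ℝ) ≤ s - t)
          (by linarith : (0:ℝ) ≤ 2 * t)
        rw [show s - t + 2 * t = s + t by ring] at this
        exact this
      have h2 : (2 * t) ^ q ≤ 2 * t ^ q := by
        rw [Real.mul_rpow (by norm_num) ht.le]
        exact mul_le_mul_of_nonneg_right (two_rpow_le hq1) (Real.rpow_nonneg ht.le q)
      linarith
  have expand : p * |s + t| ^ (p - 2) * (s + t) - p * |s - t| ^ (p - 2) * (s - t)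
      - 2 * (p * |t| ^ (p - 2) * t)
      = p * ((s + t) ^ q - |s - t| ^ (p - 2) * (s - t) - 2 * t ^ q) := by
    rw [← e1, ← e3]; ring
  rw [expand]
  exact mul_nonpos_iff.2 (Or.inl ⟨hp0.le, by linarith⟩)

lemma key_ineq {p : ℝ} (hp1 : 1 ≤ p) (hp2 : p ≤ 2) {s t1 t2 : ℝ} (hs : 0 ≤ s) (ht1 : 0 ≤ t1)
    (h12 : t1 ≤ t2) :
    (s + t2) ^ p + |s - t2| ^ p + 2 * t1 ^ p ≤ (s + t1) ^ p + |s - t1| ^ p + 2 * t2 ^ p := by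
  rcases eq_or_lt_of_le hp1 with heq | hp
  · -- p = 1
    rw [← heq]
    simp only [Real.rpow_one]
    rcases abs_cases (s - t1) with ⟨e1, f1⟩ | ⟨e1, f1⟩ <;>
      rcases abs_cases (s - t2) with ⟨e2, f2⟩ | ⟨e2, f2⟩ <;> rw [e1, e2] <;> linarith
  · -- p > 1 : use monotonicity
    set F : ℝ → ℝ := fun t => |s + t| ^ p + |s - t| ^ p - 2 * |t| ^ p with hF
    have hderiv : ∀ t : ℝ, HasDerivAt F
        (p * |s + t| ^ (p - 2) * (s + t) - p * |s - t| ^ (p - 2) * (s - t)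
          - 2 * (p * |t| ^ (p - 2) * t)) t := by
      intro t
      have h1 : HasDerivAt (fun y : ℝ => |s + y| ^ p) (p * |s + t| ^ (p - 2) * (s + t)) t := by
        have := (hasDerivAt_abs_rpow (s + t) hp).comp t ((hasDerivAt_id t).const_add s)
        rw [mul_one] at this
        exact this
      have h2 : HasDerivAt (fun y : ℝ => |s - y| ^ p)
          (-(p * |s - t| ^ (p - 2) * (s - t))) t := by
        have := (hasDerivAt_abs_rpow (s - t) hp).comp t ((hasDerivAt_id t).const_sub s)
        have e : p * |s - t| ^ (p - 2) * (s - t) * (-1) = -(p * |s - t| ^ (p - 2) * (s - t)) := by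
          ring
        rw [e] at this
        exact this
      have h3 : HasDerivAt (fun y : ℝ => 2 * |y| ^ p) (2 * (p * |t| ^ (p - 2) * t)) t :=
        (hasDerivAt_abs_rpow t hp).const_mul 2
      have := (h1.add h2).sub h3
      exact this.congr_deriv (by ring)
    have hanti : AntitoneOn F (Set.Ici (0:ℝ)) := by
      apply antitoneOn_of_deriv_nonpos (convex_Ici 0)
      · exact fun x _ => (hderiv x).differentiableAt.continuousAt.continuousWithinAt
      · exact fun x _ => (hderiv x).differentiableAt.differentiableWithinAt
      · intro x hx
        rw [interior_Ici] at hx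
        rw [(hderiv x).deriv]
        exact deriv_bound hp hp2 hs hx
    have h := hanti (Set.mem_Ici.2 ht1) (Set.mem_Ici.2 (le_trans ht1 h12)) h12
    simp only [hF] at h
    rw [abs_of_nonneg (add_nonneg hs ht1), abs_of_nonneg (add_nonneg hs (le_trans ht1 h12)),
      abs_of_nonneg ht1, abs_of_nonneg (le_trans ht1 h12)] at h
    linarith

lemma pair_rpow (p x y : ℝ) :
    |x + y| ^ p + |x - y| ^ p = (|x| + |y|) ^ p + |(|x| - |y|)| ^ p := by
  rcases abs_cases x with ⟨hx1, hx2⟩ | ⟨hx1, hx2⟩ <;>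
    rcases abs_cases y with ⟨hy1, hy2⟩ | ⟨hy1, hy2⟩ <;> rw [hx1, hy1]
  · rw [abs_of_nonneg (by linarith : (0:ℝ) ≤ x + y)]
  · rw [abs_of_nonneg (by linarith : (0:ℝ) ≤ x - y), show x - -y = x + y by ring,
      show x + -y = x - y by ring, add_comm]
  · rw [abs_sub_comm x y, abs_of_nonneg (by linarith : (0:ℝ) ≤ y - x),
      show -x - y = -(x + y) by ring, abs_neg, show -x + y = y - x by ring, add_comm]
  · rw [abs_of_neg (by linarith : x + y < 0), show -x - -y = -(x - y) by ring, abs_neg,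
      show -x + -y = -(x + y) by ring]

theorem stmt_10 (α a b c : ℝ) (hα1 : 1 / 2 ≤ α) (hα2 : α ≤ 1) (hb : 0 ≤ b) :
    (c < a →
      |a| ^ (2 * α) - |c| ^ (2 * α) - |a - b| ^ (2 * α) + |c - b| ^ (2 * α) ≤
        2 ^ (1 - 2 * α) * ((a - c + b) ^ (2 * α) - |a - c - b| ^ (2 * α))) ∧
    (a ≤ c →
      |a| ^ (2 * α) - |c| ^ (2 * α) - |a - b| ^ (2 * α) + |c - b| ^ (2 * α) ≤ 0) := by
  set p := 2 * α with hpdef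
  have hp1 : 1 ≤ p := by rw [hpdef]; linarith
  have hp2 : p ≤ 2 := by rw [hpdef]; linarith
  constructor
  · intro hca
    set A0 := (a - c + b) / 2 with hA0def
    set M := (a - c - b) / 2 with hMdef
    set S := (a + c - b) / 2 with hSdef
    have hA0pos : 0 < A0 := by rw [hA0def]; linarith
    have hMle : |M| ≤ A0 := by
      rw [abs_le]; constructor <;> [rw [hMdef, hA0def]; rw [hMdef, hA0def]] <;> [linarith; linarith]
    have e1 : |a| ^ p + |c - b| ^ p = (|S| + A0) ^ p + |(|S| - A0)| ^ p := by
      have h := pair_rpow p S A0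
      rw [abs_of_pos hA0pos] at h
      rw [show S + A0 = a by rw [hSdef, hA0def]; ring,
        show S - A0 = c - b by rw [hSdef, hA0def]; ring] at h
      exact h
    have e2 : |a - b| ^ p + |c| ^ p = (|S| + |M|) ^ p + |(|S| - |M|)| ^ p := by
      have h := pair_rpow p S M
      rw [show S + M = a - b by rw [hSdef, hMdef]; ring,
        show S - M = c by rw [hSdef, hMdef]; ring] at h
      exact h
    have hK := key_ineq hp1 hp2 (abs_nonneg S) (abs_nonneg M) hMle
    have e3 : (2:ℝ) ^ (1 - p) * ((a - c + b) ^ p - |a - c - b| ^ p)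
        = 2 * A0 ^ p - 2 * |M| ^ p := by
      have h1 : a - c + b = 2 * A0 := by rw [hA0def]; ring
      have h2 : |a - c - b| = 2 * |M| := by
        rw [show a - c - b = 2 * M by rw [hMdef]; ring, abs_mul, abs_two]
      have h3 : (2:ℝ) ^ (1 - p) * 2 ^ p = 2 := by
        rw [← Real.rpow_add (by norm_num : (0:ℝ) < 2)]
        norm_num
      rw [h1, h2, Real.mul_rpow (by norm_num) hA0pos.le, Real.mul_rpow (by norm_num) (abs_nonneg M),
        mul_sub, ← mul_assoc, ← mul_assoc, h3]
    linarith
  · intro hac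
    have h := fourpoint hp1 (x1 := a - b) (x2 := a) (x3 := c - b) (x4 := c)
      (by linarith) (by linarith) (by ring)
    linarith
end

section
/- Let α ∈ [0,1], b, c ≥ 0, s ∈ [−1,1], and assume 2sc ≤ b. Then −c^(2α) + (c² − 2scb + b²)^α ≤ −|sc|^(2α) + |sc − b|^(2α). -/
open Real Set

/-- For `α ∈ [0,1]`, `t ↦ (t+d)^α - t^α` is non-increasing on `[0, ∞)`. -/
lemma key_increment {α d : ℝ} (hα0 : 0 ≤ α) (hα1 : α ≤ 1) (hd : 0 ≤ d) {u e : ℝ}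
    (hu : 0 ≤ u) (he : 0 ≤ e) :
    (u + e + d) ^ α + u ^ α ≤ (u + d) ^ α + (u + e) ^ α := by
  rcases eq_or_lt_of_le hα0 with rfl | hαpos
  · simp
  set f : ℝ → ℝ := fun t => (t + d) ^ α - t ^ α with hf
  have hcontpow : Continuous fun t : ℝ => t ^ α :=
    continuous_iff_continuousAt.mpr fun x => Real.continuousAt_rpow_const x α (Or.inr hα0)
  have hcont : Continuous f := ((hcontpow.comp (continuous_id.add continuous_const)).sub hcontpow)
  have hderiv : ∀ t ∈ interior (Ici (0:ℝ)),
      HasDerivAt f (α * (t + d) ^ (α - 1) * 1 - α * t ^ (α - 1)) t := by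
    intro t ht
    rw [interior_Ici] at ht
    have ht0 : (0:ℝ) < t := ht
    have h1 : HasDerivAt (fun t : ℝ => (t + d) ^ α) (α * (t + d) ^ (α - 1) * 1) t := by
      exact (Real.hasDerivAt_rpow_const (Or.inl (by positivity))).comp t
        ((hasDerivAt_id t).add_const d)
    have h2 : HasDerivAt (fun t : ℝ => t ^ α) (α * t ^ (α - 1)) t :=
      Real.hasDerivAt_rpow_const (Or.inl ht0.ne')
    exact h1.sub h2
  have hanti : AntitoneOn f (Ici (0:ℝ)) := by
    apply antitoneOn_of_deriv_nonpos (convex_Ici 0) hcont.continuousOn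
    · intro t ht
      exact ((hderiv t ht).differentiableAt).differentiableWithinAt
    · intro t ht
      rw [(hderiv t ht).deriv]
      rw [interior_Ici] at ht
      have ht0 : (0:ℝ) < t := ht
      have : (t + d) ^ (α - 1) ≤ t ^ (α - 1) :=
        Real.rpow_le_rpow_of_nonpos ht0 (by linarith) (by linarith)
      nlinarith [this]
  have h := hanti (mem_Ici.mpr hu) (mem_Ici.mpr (by linarith : (0:ℝ) ≤ u + e)) (by linarith)
  simp only [hf] at h
  have : u + e + d = (u + e) + d := by ring
  rw [this]
  linarith

theorem stmt_11 (α b c s : ℝ) (hα0 : 0 ≤ α) (hα1 : α ≤ 1) (hb : 0 ≤ b) (hc : 0 ≤ c)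
    (hs1 : -1 ≤ s) (hs2 : s ≤ 1) (hscb : 2 * s * c ≤ b) :
    -c ^ (2 * α) + (c ^ 2 - 2 * s * c * b + b ^ 2) ^ α ≤
      -|s * c| ^ (2 * α) + |s * c - b| ^ (2 * α) := by
  have sq2 : ∀ a : ℝ, 0 ≤ a → a ^ (2 * α) = (a ^ 2) ^ α := by
    intro a ha
    rw [Real.rpow_mul ha, Real.rpow_two]
  have hd : 0 ≤ b ^ 2 - 2 * s * c * b := by
    nlinarith [mul_nonneg hb (sub_nonneg.2 hscb)]
  have he : 0 ≤ c ^ 2 - (s * c) ^ 2 := by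
    nlinarith [mul_nonneg (sq_nonneg c) (mul_nonneg (sub_nonneg.2 hs2) (by linarith : (0:ℝ) ≤ s + 1))]
  have hkey := key_increment hα0 hα1 hd (sq_nonneg (s * c)) he
  have e1 : (s * c) ^ 2 + (c ^ 2 - (s * c) ^ 2) + (b ^ 2 - 2 * s * c * b)
      = c ^ 2 - 2 * s * c * b + b ^ 2 := by ring
  have e2 : (s * c) ^ 2 + (b ^ 2 - 2 * s * c * b) = (s * c - b) ^ 2 := by ring
  have e3 : (s * c) ^ 2 + (c ^ 2 - (s * c) ^ 2) = c ^ 2 := by ring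
  rw [e1, e2, e3] at hkey
  rw [sq2 c hc, sq2 _ (abs_nonneg (s * c)), sq2 _ (abs_nonneg (s * c - b)), sq_abs, sq_abs]
  linarith
end

section
/- Let α ∈ [0,1], a, b ≥ 0, r ∈ [−1,1], and assume 2ra ≥ b. Then a^(2α) − (a² − 2rab + b²)^α ≤ |ra|^(2α) − |ra − b|^(2α). -/
lemma aux_concave_four {α c d e : ℝ} (hα0 : 0 ≤ α) (hα1 : α ≤ 1)
    (hc : 0 ≤ c) (hd : 0 ≤ d) (he : 0 ≤ e) :
    (c + d + e) ^ α + c ^ α ≤ (c + e) ^ α + (c + d) ^ α := by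
  rcases eq_or_lt_of_le (by linarith : (0:ℝ) ≤ d + e) with h | h
  · have hd0 : d = 0 := by linarith
    have he0 : e = 0 := by linarith
    simp [hd0, he0]
  have hcv := Real.concaveOn_rpow hα0 hα1
  have hsum : (e/(d+e)) + (d/(d+e)) = 1 := by field_simp; try ring
  have hsum' : (d/(d+e)) + (e/(d+e)) = 1 := by field_simp; try ring
  have h1 := hcv.2 (Set.mem_Ici.2 (by linarith : (0:ℝ) ≤ c+d+e))
      (Set.mem_Ici.2 hc) (by positivity) (by positivity) hsum
  have h2 := hcv.2 (Set.mem_Ici.2 (by linarith : (0:ℝ) ≤ c+d+e))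
      (Set.mem_Ici.2 hc) (by positivity) (by positivity) hsum'
  simp only [smul_eq_mul] at h1 h2
  have e1 : e/(d+e) * (c+d+e) + d/(d+e) * c = c + e := by field_simp; try ring
  have e2 : d/(d+e) * (c+d+e) + e/(d+e) * c = c + d := by field_simp; try ring
  rw [e1] at h1
  rw [e2] at h2
  have hAB : (c+d+e)^α + c^α =
      (e/(d+e) * (c+d+e)^α + d/(d+e) * c^α) + (d/(d+e) * (c+d+e)^α + e/(d+e) * c^α) := by
    field_simp; try ring
  rw [hAB]
  exact add_le_add h1 h2

theorem stmt_12 (α a b r : ℝ) (hα0 : 0 ≤ α) (hα1 : α ≤ 1) (ha : 0 ≤ a) (hb : 0 ≤ b)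
    (hr1 : -1 ≤ r) (hr2 : r ≤ 1) (hrab : b ≤ 2 * r * a) :
    a ^ (2 * α) - (a ^ 2 - 2 * r * a * b + b ^ 2) ^ α ≤
      |r * a| ^ (2 * α) - |r * a - b| ^ (2 * α) := by
  have hra : 0 ≤ r * a := by nlinarith
  have h1 : a ^ (2 * α) = (a ^ 2) ^ α := by
    rw [Real.rpow_mul ha, show (2:ℝ) = ((2:ℕ):ℝ) by norm_num, Real.rpow_natCast]
  have h2 : |r * a| ^ (2 * α) = ((r * a) ^ 2) ^ α := by
    rw [Real.rpow_mul (abs_nonneg _), show (2:ℝ) = ((2:ℕ):ℝ) by norm_num,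
      Real.rpow_natCast, sq_abs]
  have h3 : |r * a - b| ^ (2 * α) = ((r * a - b) ^ 2) ^ α := by
    rw [Real.rpow_mul (abs_nonneg _), show (2:ℝ) = ((2:ℕ):ℝ) by norm_num,
      Real.rpow_natCast, sq_abs]
  rw [h1, h2, h3]
  have key := aux_concave_four (c := (r * a - b) ^ 2) (d := b * (2 * r * a - b))
    (e := a ^ 2 * (1 - r ^ 2)) hα0 hα1 (sq_nonneg _)
    (by nlinarith) (mul_nonneg (sq_nonneg a) (by nlinarith))
  have e1 : (r * a - b) ^ 2 + b * (2 * r * a - b) + a ^ 2 * (1 - r ^ 2) = a ^ 2 := by ring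
  have e2 : (r * a - b) ^ 2 + a ^ 2 * (1 - r ^ 2) = a ^ 2 - 2 * r * a * b + b ^ 2 := by ring
  have e3 : (r * a - b) ^ 2 + b * (2 * r * a - b) = (r * a) ^ 2 := by ring
  rw [e1, e2, e3] at key
  linarith
end

section
/- Let α ∈ [1/2, 1], a, y ≥ 0 with y ≤ a. Then a^(2α) + (4ay + y²)^α ≤ (a+y)^(2α) + 2a·y^(2α−1). -/
/-- Tangent line inequality for the concave function `x ↦ x ^ α`, `0 ≤ α ≤ 1`. -/
lemma tangent_rpow {α x z : ℝ} (hx : 0 ≤ x) (hz : 0 < z) (hα0 : 0 ≤ α) (hα1 : α ≤ 1) :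
    x ^ α ≤ z ^ α + α * z ^ (α - 1) * (x - z) := by
  have hxz : 0 ≤ x / z := div_nonneg hx hz.le
  have hs : (-1 : ℝ) ≤ x / z - 1 := by linarith
  have hb := rpow_one_add_le_one_add_mul_self hs hα0 hα1
  have hrw : 1 + (x / z - 1) = x / z := by ring
  rw [hrw] at hb
  have hzα : (0 : ℝ) < z ^ α := Real.rpow_pos_of_pos hz _
  have h1 : x ^ α = z ^ α * (x / z) ^ α := by
    rw [Real.div_rpow hx hz.le]
    field_simp
  have h2 : z ^ α * (1 + α * (x / z - 1)) = z ^ α + α * z ^ (α - 1) * (x - z) := by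
    rw [Real.rpow_sub hz, Real.rpow_one]
    field_simp
  calc x ^ α = z ^ α * (x / z) ^ α := h1
    _ ≤ z ^ α * (1 + α * (x / z - 1)) := by
        exact mul_le_mul_of_nonneg_left hb hzα.le
    _ = z ^ α + α * z ^ (α - 1) * (x - z) := h2

/-- `(2ay)^α ≤ 2a y^(2α-1)` for `0 < y ≤ a`, `1/2 ≤ α ≤ 1`. -/
lemma E_le {α a y : ℝ} (hα1 : 1 / 2 ≤ α) (hα2 : α ≤ 1) (hy : 0 < y) (hya : y ≤ a) :
    (2 * a * y) ^ α ≤ 2 * a * y ^ (2 * α - 1) := by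
  have ha : 0 < a := lt_of_lt_of_le hy hya
  have h2a : (0 : ℝ) < 2 * a := by linarith
  have hmono : (2 * a) ^ (α - 1) ≤ y ^ (α - 1) :=
    Real.rpow_le_rpow_of_nonpos hy (by linarith) (by linarith)
  have e1 : (2 * a * y) ^ α = (2 * a) ^ α * y ^ α := Real.mul_rpow h2a.le hy.le
  have e2 : (2 * a) ^ α = (2 * a) * (2 * a) ^ (α - 1) := by
    have h := Real.rpow_add h2a 1 (α - 1)
    rw [show (1 : ℝ) + (α - 1) = α by ring, Real.rpow_one] at h
    exact h
  have e3 : y ^ (2 * α - 1) = y ^ α * y ^ (α - 1) := by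
    rw [← Real.rpow_add hy]
    ring_nf
  have hyα : (0 : ℝ) < y ^ α := Real.rpow_pos_of_pos hy _
  calc (2 * a * y) ^ α = (2 * a) * ((2 * a) ^ (α - 1) * y ^ α) := by rw [e1, e2]; ring
    _ ≤ (2 * a) * (y ^ (α - 1) * y ^ α) := by
        apply mul_le_mul_of_nonneg_left _ h2a.le
        exact mul_le_mul_of_nonneg_right hmono hyα.le
    _ = 2 * a * y ^ (2 * α - 1) := by rw [e3]; ring

/-- Normalized key inequality for the case `2y ≤ a`. -/
lemma key2u {α u m : ℝ} (hα1 : 1 / 2 ≤ α) (hα2 : α ≤ 1) (hu : 0 < u) (hu4 : u ≤ 1 / 4)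
    (hm : m = (1 + 2 * u) ^ 2 / (4 * u)) :
    1 + α * (1 + u) ≤ u ^ (α - 1) + α * (1 + u) * m ^ (α - 1) := by
  have hα0 : (0 : ℝ) < α := by linarith
  have hmpos : 0 < m := by rw [hm]; positivity
  have hm1 : 1 ≤ m := by
    rw [hm, le_div_iff₀ (by positivity)]
    nlinarith [sq_nonneg (1 - 2 * u)]
  have hlm : 0 ≤ Real.log m := Real.log_nonneg hm1
  have hlu : Real.log u < 0 := Real.log_neg hu (by linarith)
  -- lower bounds via exp
  have hu1 : u ^ (α - 1) = Real.exp ((α - 1) * Real.log u) := by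
    rw [Real.rpow_def_of_pos hu, mul_comm]
  have hm1' : m ^ (α - 1) = Real.exp ((α - 1) * Real.log m) := by
    rw [Real.rpow_def_of_pos hmpos, mul_comm]
  have hb1 : 1 + (α - 1) * Real.log u ≤ u ^ (α - 1) := by
    rw [hu1]; linarith [Real.add_one_le_exp ((α - 1) * Real.log u)]
  have hb2 : 1 + (α - 1) * Real.log m ≤ m ^ (α - 1) := by
    rw [hm1']; linarith [Real.add_one_le_exp ((α - 1) * Real.log m)]
  have hcoef : 0 ≤ α * (1 + u) := by positivity
  have hstep : α * (1 + u) * (1 + (α - 1) * Real.log m) ≤ α * (1 + u) * m ^ (α - 1) :=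
    mul_le_mul_of_nonneg_left hb2 hcoef
  -- main log inequality : (1+u) * log m ≤ - log u
  have hg : Real.log (1 + 2 * u) ≤ 2 * u := by
    have := Real.log_le_sub_one_of_pos (show (0 : ℝ) < 1 + 2 * u by linarith)
    linarith
  have hlogm : Real.log m = 2 * Real.log (1 + 2 * u) - Real.log 4 - Real.log u := by
    rw [hm, Real.log_div (by positivity) (by positivity), Real.log_pow,
      Real.log_mul (by norm_num) hu.ne']
    push_cast
    ring
  have hlog4 : Real.log 4 = 2 * Real.log 2 := by
    rw [show (4 : ℝ) = 2 ^ 2 by norm_num, Real.log_pow]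
    push_cast; ring
  have hlog2 : 0.6931471803 < Real.log 2 := Real.log_two_gt_d9
  -- u * log(1/u) ≤ 1/e, i.e. -(u * log u) ≤ 1/e ≤ 0.368
  have hexp1 : (2.7182818283 : ℝ) < Real.exp 1 := Real.exp_one_gt_d9
  have hepos : (0 : ℝ) < Real.exp 1 := by positivity
  have hul : -(u * Real.log u) ≤ 0.368 := by
    have h1 : Real.log (1 / (Real.exp 1 * u)) ≤ 1 / (Real.exp 1 * u) - 1 :=
      Real.log_le_sub_one_of_pos (by positivity)
    have h2 : Real.log (1 / (Real.exp 1 * u)) = -(1 + Real.log u) := by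
      rw [one_div, Real.log_inv, Real.log_mul (by positivity) hu.ne', Real.log_exp]
    rw [h2] at h1
    -- -(1 + log u) ≤ 1/(e*u) - 1  ⇒  -log u ≤ 1/(e*u) ⇒ -(u log u) ≤ 1/e
    have h3 : -Real.log u ≤ 1 / (Real.exp 1 * u) := by linarith
    have h4 : -(u * Real.log u) ≤ u * (1 / (Real.exp 1 * u)) := by
      have := mul_le_mul_of_nonneg_left h3 hu.le
      linarith [this]
    have h5 : u * (1 / (Real.exp 1 * u)) = 1 / Real.exp 1 := by
      field_simp
    rw [h5] at h4
    have h6 : 1 / Real.exp 1 ≤ 0.368 := by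
      rw [div_le_iff₀ hepos]
      nlinarith
    linarith
  have hmain : (1 + u) * Real.log m ≤ -Real.log u := by
    rw [hlogm, hlog4]
    have hgu : u * Real.log (1 + 2 * u) ≤ u * (2 * u) :=
      mul_le_mul_of_nonneg_left hg hu.le
    nlinarith [hg, hgu, hul, hlog2, hu.le, hu4, mul_nonneg (sub_nonneg.2 hu4) hu.le]
  -- combine
  have hfinal : 0 ≤ (α - 1) * Real.log u + α * (1 + u) * ((α - 1) * Real.log m) := by
    have h1 : α * (1 + u) * Real.log m ≤ (1 + u) * Real.log m := by
      have : α * ((1 + u) * Real.log m) ≤ 1 * ((1 + u) * Real.log m) :=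
        mul_le_mul_of_nonneg_right hα2 (by positivity)
      linarith [this]
    have h2 : α * (1 + u) * Real.log m ≤ -Real.log u := le_trans h1 hmain
    have h3 : 0 ≤ 1 - α := by linarith
    nlinarith [mul_le_mul_of_nonneg_left h2 h3]
  calc 1 + α * (1 + u)
      = (1 + (α - 1) * Real.log u) + α * (1 + u) * (1 + (α - 1) * Real.log m)
        - ((α - 1) * Real.log u + α * (1 + u) * ((α - 1) * Real.log m)) := by ring
    _ ≤ u ^ (α - 1) + α * (1 + u) * m ^ (α - 1) := by linarith

/-- The key inequality `(✦)` for the case `2y ≤ a`. -/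
lemma star {α a y : ℝ} (hα1 : 1 / 2 ≤ α) (hα2 : α ≤ 1) (hy : 0 < y) (h2y : 2 * y ≤ a) :
    (2 * a * y) ^ α + α * (2 * a * y + y ^ 2) * (2 * a * y) ^ (α - 1)
      ≤ 2 * a * y ^ (2 * α - 1) + α * (2 * a * y + y ^ 2) * ((a + y) ^ 2) ^ (α - 1) := by
  have ha : 0 < a := by linarith
  have hE : (0 : ℝ) < 2 * a * y := by positivity
  have hC : (0 : ℝ) < (a + y) ^ 2 := by positivity
  set u : ℝ := y / (2 * a) with hu_def
  have hu : 0 < u := by positivity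
  have hu4 : u ≤ 1 / 4 := by
    rw [hu_def, div_le_iff₀ (by positivity)]
    linarith
  set m : ℝ := (a + y) ^ 2 / (2 * a * y) with hm_def
  have hm : m = (1 + 2 * u) ^ 2 / (4 * u) := by
    rw [hm_def, hu_def]
    field_simp
    ring
  have hkey := key2u hα1 hα2 hu hu4 hm
  have hEα : (0 : ℝ) < (2 * a * y) ^ α := Real.rpow_pos_of_pos hE _
  -- identities
  have idE : (2 * a * y) ^ α = (2 * a * y) * (2 * a * y) ^ (α - 1) := by
    have h := Real.rpow_add hE 1 (α - 1)
    rw [show (1 : ℝ) + (α - 1) = α by ring, Real.rpow_one] at h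
    exact h
  have idu : (2 * a * y) ^ α * u ^ (α - 1) = 2 * a * y ^ (2 * α - 1) := by
    rw [hu_def, Real.div_rpow hy.le (by positivity), Real.mul_rpow (by positivity) hy.le]
    rw [div_eq_mul_inv, ← Real.rpow_neg (by positivity)]
    have e1 : (2 * a) ^ α * y ^ α * (y ^ (α - 1) * (2 * a) ^ (-(α - 1)))
        = ((2 * a) ^ α * (2 * a) ^ (-(α - 1))) * (y ^ α * y ^ (α - 1)) := by ring
    rw [e1, ← Real.rpow_add (by positivity), ← Real.rpow_add hy]
    have e2 : α + -(α - 1) = 1 := by ring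
    have e3 : α + (α - 1) = 2 * α - 1 := by ring
    rw [e2, e3, Real.rpow_one]
  have idm : (2 * a * y) ^ α * m ^ (α - 1) = (2 * a * y) * ((a + y) ^ 2) ^ (α - 1) := by
    rw [hm_def, Real.div_rpow hC.le hE.le, div_eq_mul_inv, ← Real.rpow_neg hE.le]
    have e1 : (2 * a * y) ^ α * (((a + y) ^ 2) ^ (α - 1) * (2 * a * y) ^ (-(α - 1)))
        = ((2 * a * y) ^ α * (2 * a * y) ^ (-(α - 1))) * ((a + y) ^ 2) ^ (α - 1) := by ring
    rw [e1, ← Real.rpow_add hE]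
    have e2 : α + -(α - 1) = 1 := by ring
    rw [e2, Real.rpow_one]
  have idu2 : (1 + u) * (2 * a * y) = 2 * a * y + y ^ 2 := by
    rw [hu_def]
    field_simp
  -- multiply hkey by (2*a*y)^α
  have hmul := mul_le_mul_of_nonneg_left hkey hEα.le
  -- rewrite both sides
  have lhs_eq : (2 * a * y) ^ α * (1 + α * (1 + u))
      = (2 * a * y) ^ α + α * (2 * a * y + y ^ 2) * (2 * a * y) ^ (α - 1) := by
    have : (2 * a * y) ^ α * (α * (1 + u))
        = α * ((1 + u) * (2 * a * y)) * (2 * a * y) ^ (α - 1) := by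
      rw [idE]; ring
    rw [mul_add, mul_one, this, idu2]
  have rhs_eq : (2 * a * y) ^ α * (u ^ (α - 1) + α * (1 + u) * m ^ (α - 1))
      = 2 * a * y ^ (2 * α - 1) + α * (2 * a * y + y ^ 2) * ((a + y) ^ 2) ^ (α - 1) := by
    have h1 : (2 * a * y) ^ α * (α * (1 + u) * m ^ (α - 1))
        = α * ((1 + u) * (2 * a * y)) * ((a + y) ^ 2) ^ (α - 1) := by
      have : (2 * a * y) ^ α * (α * (1 + u) * m ^ (α - 1))
          = α * (1 + u) * ((2 * a * y) ^ α * m ^ (α - 1)) := by ring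
      rw [this, idm]; ring
    rw [mul_add, h1, idu, idu2]
  rw [lhs_eq, rhs_eq] at hmul
  exact hmul

theorem stmt_13 (α a y : ℝ) (hα1 : 1 / 2 ≤ α) (hα2 : α ≤ 1) (hy : 0 ≤ y) (hya : y ≤ a) :
    a ^ (2 * α) + (4 * a * y + y ^ 2) ^ α ≤ (a + y) ^ (2 * α) + 2 * a * y ^ (2 * α - 1) := by
  have hα0 : (0 : ℝ) < α := by linarith
  rcases eq_or_lt_of_le hy with h0 | hy0
  · -- y = 0
    rw [← h0]
    have h1 : (4 * a * 0 + 0 ^ 2 : ℝ) = 0 := by ring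
    have h2 : (a + 0 : ℝ) = a := by ring
    rw [h1, h2, Real.zero_rpow hα0.ne']
    have h3 : (0 : ℝ) ≤ 2 * a * (0 : ℝ) ^ (2 * α - 1) := by
      apply mul_nonneg (by linarith [le_trans hy hya])
      exact Real.rpow_nonneg le_rfl _
    linarith
  · have ha : 0 < a := lt_of_lt_of_le hy0 hya
    have hA2 : a ^ (2 * α) = (a ^ 2) ^ α := by
      rw [Real.rpow_mul ha.le, Real.rpow_two]
    have hC2 : (a + y) ^ (2 * α) = ((a + y) ^ 2) ^ α := by
      rw [Real.rpow_mul (by linarith), Real.rpow_two]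
    rw [hA2, hC2]
    have hB0 : (0 : ℝ) ≤ 4 * a * y + y ^ 2 := by positivity
    have hEpos : (0 : ℝ) < 2 * a * y := by positivity
    have hCpos : (0 : ℝ) < (a + y) ^ 2 := by positivity
    rcases le_total a (2 * y) with hcase | hcase
    · -- Case 1 : a ≤ 2y. Tangents at 2ay (for a²) and at (a+y)² (for 4ay+y²).
      have tA := tangent_rpow (x := a ^ 2) (z := 2 * a * y) (by positivity) hEpos
        (by linarith) hα2
      have tB := tangent_rpow (x := 4 * a * y + y ^ 2) (z := (a + y) ^ 2) hB0 hCpos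
        (by linarith) hα2
      have hmono : ((a + y) ^ 2) ^ (α - 1) ≤ (2 * a * y) ^ (α - 1) :=
        Real.rpow_le_rpow_of_nonpos hEpos (by nlinarith) (by linarith)
      have hd : (0 : ℝ) ≤ 2 * a * y - a ^ 2 := by nlinarith
      have hkey : α * ((a + y) ^ 2) ^ (α - 1) * (2 * a * y - a ^ 2)
          ≤ α * (2 * a * y) ^ (α - 1) * (2 * a * y - a ^ 2) := by
        apply mul_le_mul_of_nonneg_right _ hd
        exact mul_le_mul_of_nonneg_left hmono hα0.le
      have hE := E_le hα1 hα2 hy0 hya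
      nlinarith [tA, tB, hkey, hE]
    · -- Case 2 : 2y ≤ a. Tangents at (a+y)² (for a²) and at 2ay (for 4ay+y²), plus star.
      have tA := tangent_rpow (x := a ^ 2) (z := (a + y) ^ 2) (by positivity) hCpos
        (by linarith) hα2
      have tB := tangent_rpow (x := 4 * a * y + y ^ 2) (z := 2 * a * y) hB0 hEpos
        (by linarith) hα2
      have hstar := star hα1 hα2 hy0 hcase
      nlinarith [tA, tB, hstar]
end

section
/- Let x, a, b, c ≥ 0 with b ≤ 2x, x + b ≥ c, and x ≤ c, and let α ∈ [1/2,1]. Then (x+b)^(2α) + (c² − 2xb + b²)^α ≤ c^(2α) + x^(2α) + 2b^(2α). -/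
open Real

private lemma subadd {α s t : ℝ} (hα0 : 0 ≤ α) (hα1 : α ≤ 1) (hs : 0 ≤ s) (ht : 0 ≤ t) :
    (s + t) ^ α ≤ s ^ α + t ^ α := by
  have := NNReal.rpow_add_le_add_rpow ⟨s, hs⟩ ⟨t, ht⟩ hα0 hα1
  exact_mod_cast this

private lemma transfer {α u v p q : ℝ} (hα0 : 0 ≤ α) (hα1 : α ≤ 1)
    (hv : 0 ≤ v) (hvp : v ≤ p) (hvq : v ≤ q) (hsum : u + v = p + q) :
    u ^ α + v ^ α ≤ p ^ α + q ^ α := by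
  have hqu : q ≤ u := by linarith
  have hpu : p ≤ u := by linarith
  rcases eq_or_lt_of_le (hvq.trans hqu) with h | h
  · -- u = v forces p = q = u
    have hp : p = u := le_antisymm hpu (by linarith)
    have hq : q = u := le_antisymm hqu (by linarith)
    rw [hp, hq, ← h]
  · -- u > v : express p, q as convex combos
    have hcon := Real.concaveOn_rpow hα0 hα1
    have huv : 0 < u - v := by linarith
    set l : ℝ := (q - v) / (u - v) with hl
    have hl0 : 0 ≤ l := div_nonneg (by linarith) huv.le
    have hl1 : l ≤ 1 := by
      rw [div_le_one huv]; linarith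
    have hlm : l * (u - v) = q - v := by
      rw [hl]; field_simp
    have hq' : l * u + (1 - l) * v = q := by linear_combination hlm
    have hp' : (1 - l) * u + l * v = p := by linear_combination hsum - hq'
    have hu : u ∈ Set.Ici (0:ℝ) := by exact le_trans hv (by linarith)
    have hv' : v ∈ Set.Ici (0:ℝ) := hv
    have h1 := hcon.2 hu hv' hl0 (sub_nonneg.2 hl1) (by ring : l + (1 - l) = 1)
    have h2 := hcon.2 hu hv' (sub_nonneg.2 hl1) hl0 (by ring : (1 - l) + l = 1)
    simp only [smul_eq_mul] at h1 h2
    rw [hq'] at h1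
    rw [hp'] at h2
    nlinarith [h1, h2]

theorem stmt_14 (α x a b c : ℝ) (hα1 : 1 / 2 ≤ α) (hα2 : α ≤ 1)
    (hx : 0 ≤ x) (hb : 0 ≤ b) (hc : 0 ≤ c)
    (hb2x : b ≤ 2 * x) (hxbc : c ≤ x + b) (hxc : x ≤ c) :
    (x + b) ^ (2 * α) + (c ^ 2 - 2 * x * b + b ^ 2) ^ α ≤
      c ^ (2 * α) + x ^ (2 * α) + 2 * b ^ (2 * α) := by
  have hα0 : (0:ℝ) ≤ α := by linarith
  have h2 : ∀ t : ℝ, 0 ≤ t → t ^ (2 * α) = (t ^ 2) ^ α := by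
    intro t ht
    rw [← Real.rpow_natCast t 2, ← Real.rpow_mul ht]
    norm_num
  rw [h2 _ (by linarith : (0:ℝ) ≤ x + b), h2 _ hc, h2 _ hx, h2 _ hb]
  have hv : 0 ≤ c ^ 2 - 2 * x * b + b ^ 2 := by
    nlinarith [sq_nonneg (c - b), mul_nonneg hb (sub_nonneg.2 hxc)]
  have step1 : ((x + b) ^ 2) ^ α + (c ^ 2 - 2 * x * b + b ^ 2) ^ α ≤
      (c ^ 2) ^ α + (x ^ 2 + 2 * b ^ 2) ^ α := by
    apply transfer hα0 hα2 hv
    · nlinarith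
    · nlinarith
    · ring
  have step2 : (x ^ 2 + 2 * b ^ 2) ^ α ≤ (x ^ 2) ^ α + 2 * (b ^ 2) ^ α := by
    have h1 : (x ^ 2 + 2 * b ^ 2) ^ α ≤ (x ^ 2) ^ α + (b ^ 2 + b ^ 2) ^ α := by
      have := subadd hα0 hα2 (by positivity : (0:ℝ) ≤ x ^ 2)
        (by positivity : (0:ℝ) ≤ b ^ 2 + b ^ 2)
      calc (x ^ 2 + 2 * b ^ 2) ^ α = (x ^ 2 + (b ^ 2 + b ^ 2)) ^ α := by ring_nf
        _ ≤ _ := this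
    have h2' := subadd hα0 hα2 (by positivity : (0:ℝ) ≤ b ^ 2) (by positivity : (0:ℝ) ≤ b ^ 2)
    linarith
  linarith
end

section
/- Let α ∈ [0,1], a, b, c ≥ 0, s ∈ [−1,1]. Assume b/2 ≤ sc, sc ≥ a − b, and a ≥ c. Then a^(2α) − c^(2α) − (a−b)^(2α) + (c² − 2scb + b²)^α ≤ 2·b^α·(a − sc)^α. -/
/-- Decreasing differences for `t ↦ t ^ α`, `0 ≤ α ≤ 1`. -/
lemma rpow_diff_anti (α : ℝ) (hα0 : 0 ≤ α) (hα1 : α ≤ 1) {v y w : ℝ}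
    (hv : 0 ≤ v) (hvy : v ≤ y) (hw : 0 ≤ w) :
    (y + w) ^ α - y ^ α ≤ (v + w) ^ α - v ^ α := by
  rcases eq_or_lt_of_le hα0 with rfl | hαpos
  · simp
  have hanti : AntitoneOn (fun u : ℝ => (u + w) ^ α - u ^ α) (Set.Ici 0) := by
    apply antitoneOn_of_deriv_nonpos (convex_Ici 0)
    · apply ContinuousOn.sub
      · exact (Real.continuous_rpow_const hα0).comp (continuous_add_right w) |>.continuousOn
      · exact (Real.continuous_rpow_const hα0).continuousOn
    · intro u hu
      rw [interior_Ici] at hu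
      have hu0 : (0:ℝ) < u := hu
      have h1 : HasDerivAt (fun u : ℝ => (u + w) ^ α) (α * (u + w) ^ (α - 1) * 1) u := by
        exact (Real.hasDerivAt_rpow_const (Or.inl (by positivity))).comp u
          ((hasDerivAt_id u).add_const w)
      have h2 : HasDerivAt (fun u : ℝ => u ^ α) (α * u ^ (α - 1)) u :=
        Real.hasDerivAt_rpow_const (Or.inl hu0.ne')
      exact (h1.sub h2).differentiableAt.differentiableWithinAt
    · intro u hu
      rw [interior_Ici] at hu
      have hu0 : (0:ℝ) < u := hu
      have h1 : HasDerivAt (fun u : ℝ => (u + w) ^ α) (α * (u + w) ^ (α - 1) * 1) u := by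
        exact (Real.hasDerivAt_rpow_const (Or.inl (by positivity))).comp u
          ((hasDerivAt_id u).add_const w)
      have h2 : HasDerivAt (fun u : ℝ => u ^ α) (α * u ^ (α - 1)) u :=
        Real.hasDerivAt_rpow_const (Or.inl hu0.ne')
      rw [(show HasDerivAt (fun u : ℝ => (u + w) ^ α - u ^ α) (α * (u + w) ^ (α - 1) * 1 - α * u ^ (α - 1)) u from h1.sub h2).deriv]
      have hle : (u + w) ^ (α - 1) ≤ u ^ (α - 1) :=
        Real.rpow_le_rpow_of_nonpos hu0 (by linarith) (by linarith)
      nlinarith [hαpos.le]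
  have := hanti (Set.mem_Ici.2 hv) (Set.mem_Ici.2 (hv.trans hvy)) hvy
  simpa using this

lemma rpow_subadd_s15 (α : ℝ) (hα0 : 0 ≤ α) (hα1 : α ≤ 1) {u D : ℝ}
    (hu : 0 ≤ u) (hD : 0 ≤ D) : (u + D) ^ α ≤ u ^ α + D ^ α := by
  have h := rpow_diff_anti α hα0 hα1 (le_refl 0) hu hD
  have h0 : (0:ℝ) ≤ (0:ℝ) ^ α := Real.rpow_nonneg le_rfl α
  rw [zero_add] at h
  linarith

theorem stmt_15 (α a b c s : ℝ) (hα0 : 0 ≤ α) (hα1 : α ≤ 1)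
    (ha : 0 ≤ a) (hb : 0 ≤ b) (hc : 0 ≤ c) (hs1 : -1 ≤ s) (hs2 : s ≤ 1)
    (h1 : b / 2 ≤ s * c) (h2 : a - b ≤ s * c) (h3 : c ≤ a) :
    a ^ (2 * α) - c ^ (2 * α) - |a - b| ^ (2 * α) + (c ^ 2 - 2 * s * c * b + b ^ 2) ^ α ≤
      2 * b ^ α * (a - s * c) ^ α := by
  set x := a ^ 2 with hxdef
  set y := c ^ 2 with hydef
  set u := (a - b) ^ 2 with hudef
  set v := c ^ 2 - 2 * s * c * b + b ^ 2 with hvdef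
  have hsc_c : s * c ≤ c := by nlinarith
  have hasc : 0 ≤ a - s * c := by linarith
  have hv0 : 0 ≤ v := by
    simp only [hvdef]
    have hs2' : (0:ℝ) ≤ (1 - s) * (1 + s) := mul_nonneg (by linarith) (by linarith)
    nlinarith [sq_nonneg (c - s * b), mul_nonneg hs2' (sq_nonneg b)]
  have hvy : v ≤ y := by simp only [hvdef, hydef]; nlinarith
  have hyx : y ≤ x := by simp only [hydef, hxdef]; nlinarith
  have hu0 : 0 ≤ u := sq_nonneg _
  have hxy : (0:ℝ) ≤ x - y := by linarith
  have hDval : x - y + v = u + 2 * (b * (a - s * c)) := by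
    simp only [hxdef, hydef, hudef, hvdef]; ring
  have hD0 : (0:ℝ) ≤ 2 * (b * (a - s * c)) := by positivity
  -- rewrite the rpow's of doubled exponent
  have e2 : (2:ℝ) = ((2:ℕ) : ℝ) := by norm_num
  have hra : a ^ (2 * α) = x ^ α := by
    rw [Real.rpow_mul ha, e2, Real.rpow_natCast]
  have hrc : c ^ (2 * α) = y ^ α := by
    rw [Real.rpow_mul hc, e2, Real.rpow_natCast]
  have hrab : |a - b| ^ (2 * α) = u ^ α := by
    rw [Real.rpow_mul (abs_nonneg _), e2, Real.rpow_natCast, sq_abs]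
  rw [hra, hrc, hrab]
  -- step 1 : x^α + v^α ≤ y^α + (x - y + v)^α
  have step1 : x ^ α - y ^ α ≤ (x - y + v) ^ α - v ^ α := by
    have := rpow_diff_anti α hα0 hα1 hv0 hvy hxy
    have hyw : y + (x - y) = x := by ring
    have hvw : v + (x - y) = x - y + v := by ring
    rw [hyw, hvw] at this
    exact this
  -- step 2 : subadditivity
  have step2 : (x - y + v) ^ α ≤ u ^ α + (2 * (b * (a - s * c))) ^ α := by
    rw [hDval]; exact rpow_subadd_s15 α hα0 hα1 hu0 hD0
  -- step 3 : (2 * t)^α ≤ 2 * t^α pieces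
  have step3 : (2 * (b * (a - s * c))) ^ α ≤ 2 * b ^ α * (a - s * c) ^ α := by
    rw [Real.mul_rpow (by norm_num) (by positivity), Real.mul_rpow hb hasc]
    have h2a : (2:ℝ) ^ α ≤ 2 := by
      calc (2:ℝ) ^ α ≤ (2:ℝ) ^ (1:ℝ) :=
            Real.rpow_le_rpow_of_exponent_le (by norm_num) hα1
        _ = 2 := Real.rpow_one 2
    have hba : (0:ℝ) ≤ b ^ α * (a - s * c) ^ α := by positivity
    nlinarith [Real.rpow_nonneg (by norm_num : (0:ℝ) ≤ 2) α]
  linarith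
end

section
/- Let (Q,d) be a metric space and y, z, q, p ∈ Q, α ∈ [1/2, 1]. Assume the quadruple inequality d(y,q)² − d(y,p)² − d(z,q)² + d(z,p)² ≤ 2·d(y,z)·d(q,p). Then d(y,q)^(2α) − d(y,p)^(2α) − d(z,q)^(2α) + d(z,p)^(2α) ≤ 8α·2^(−2α)·d(y,z)^(2α−1)·d(q,p). -/
open Real Set

namespace Sturm16

/-- Weighted AM-GM / Bernoulli: for `θ ∈ [0,1]`, `x ≥ 0`: `x ^ θ ≤ θ*x + (1-θ)`. -/
lemma bern {θ x : ℝ} (h0 : 0 ≤ θ) (h1 : θ ≤ 1) (hx : 0 ≤ x) :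
    x ^ θ ≤ θ * x + (1 - θ) := by
  have h := Real.geom_mean_le_arith_mean2_weighted (w₁ := θ) (w₂ := 1 - θ)
    (p₁ := x) (p₂ := 1) h0 (by linarith) hx zero_le_one (by ring)
  simpa using h

/-- Tangent line inequality for the concave function `t ↦ t^θ`, `θ ∈ [0,1]`. -/
lemma tangent_concave {θ x y : ℝ} (h0 : 0 ≤ θ) (h1 : θ ≤ 1) (hx : 0 ≤ x) (hy : 0 < y) :
    x ^ θ ≤ y ^ θ + θ * y ^ (θ - 1) * (x - y) := by
  have hxy : 0 ≤ x / y := div_nonneg hx hy.le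
  have h := bern h0 h1 hxy
  have h2 : (x / y) ^ θ = x ^ θ / y ^ θ := Real.div_rpow hx hy.le θ
  have hyθ : 0 < y ^ θ := Real.rpow_pos_of_pos hy θ
  rw [h2, div_le_iff₀ hyθ] at h
  have hyy : y ^ (θ - 1) * y = y ^ θ := by
    rw [← Real.rpow_add_one hy.ne' (θ - 1)]
    norm_num
  calc x ^ θ ≤ (θ * (x / y) + (1 - θ)) * y ^ θ := h
    _ = y ^ θ + θ * y ^ (θ - 1) * (x - y) := by
        rw [← hyy]; field_simp; ring


/-- Midpoint (Hermite–Hadamard type) bound: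
`u^β - v^β ≤ β (u-v) ((u+v)/2)^(β-1)` for `0 ≤ v ≤ u`, `β ∈ [1,2]`. -/
lemma midpoint_bound {β v u : ℝ} (hβ1 : 1 ≤ β) (hβ2 : β ≤ 2)
    (hv : 0 ≤ v) (hvu : v ≤ u) :
    u ^ β - v ^ β ≤ β * (u - v) * ((u + v) / 2) ^ (β - 1) := by
  set m : ℝ := (u + v) / 2 with hm
  set d : ℝ := (u - v) / 2 with hd
  have hu : u = m + d := by rw [hm, hd]; ring
  have hv' : v = m - d := by rw [hm, hd]; ring
  have hd0 : 0 ≤ d := by rw [hd]; linarith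
  have hdm : d ≤ m := by rw [hd, hm]; linarith
  rcases eq_or_lt_of_le (le_trans hd0 hdm) with hm0 | hm0
  · -- m = 0, hence u = v = 0
    have hd0' : d = 0 := le_antisymm (hm0 ▸ hdm) hd0
    have : u = 0 := by rw [hu, ← hm0, hd0']; ring
    have : v = 0 := by rw [hv', ← hm0, hd0']; ring
    rw [hu, hv', ← hm0, hd0']
    norm_num
  -- main case : m > 0
  set f : ℝ → ℝ := fun t => 2 * β * t * m ^ (β - 1) - (m + t) ^ β + (m - t) ^ β with hf
  have key : f 0 ≤ f d := by
    have hmono : MonotoneOn f (Icc 0 m) := by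
      have hcont : ContinuousOn f (Icc 0 m) := by
        apply ContinuousOn.add
        · apply ContinuousOn.sub
          · fun_prop
          · apply Continuous.continuousOn
            apply Continuous.rpow_const (by fun_prop)
            intro t; right; linarith
        · apply Continuous.continuousOn
          apply Continuous.rpow_const (by fun_prop)
          intro t; right; linarith
      have hderivAt : ∀ t ∈ Ioo 0 m, HasDerivAt f
          (2 * β * m ^ (β - 1) - β * (m + t) ^ (β - 1) * 1 + β * (m - t) ^ (β - 1) * (-1)) t := by
        intro t ht
        have h1 : HasDerivAt (fun t : ℝ => (m + t) ^ β) (β * (m + t) ^ (β - 1) * 1) t := by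
          exact (Real.hasDerivAt_rpow_const (Or.inl (by nlinarith [ht.1] : m + t ≠ 0))).comp t
            ((hasDerivAt_id t).const_add m)
        have h2 : HasDerivAt (fun t : ℝ => (m - t) ^ β) (β * (m - t) ^ (β - 1) * (-1)) t := by
          exact (Real.hasDerivAt_rpow_const (Or.inl (by nlinarith [ht.2] : m - t ≠ 0))).comp t
            ((hasDerivAt_id t).neg.const_add m)
        have h0 : HasDerivAt (fun t : ℝ => 2 * β * t * m ^ (β - 1))
            (2 * β * m ^ (β - 1)) t := by
          simpa [mul_comm, mul_assoc, mul_left_comm] using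
            (hasDerivAt_id t).const_mul (2 * β * m ^ (β - 1))
        exact (h0.sub h1).add h2
      have hderiv_nonneg : ∀ t ∈ interior (Icc (0:ℝ) m), 0 ≤ deriv f t := by
        intro t ht
        rw [interior_Icc] at ht
        rw [(hderivAt t ht).deriv]
        have ht1 : (0:ℝ) ≤ m + t := by nlinarith [ht.1]
        have ht2 : (0:ℝ) ≤ m - t := by nlinarith [ht.2]
        have e1 : (m + t) ^ (β - 1) ≤ m ^ (β - 1) + (β - 1) * m ^ (β - 1 - 1) * (m + t - m) :=
          tangent_concave (by linarith) (by linarith) ht1 hm0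
        have e2 : (m - t) ^ (β - 1) ≤ m ^ (β - 1) + (β - 1) * m ^ (β - 1 - 1) * (m - t - m) :=
          tangent_concave (by linarith) (by linarith) ht2 hm0
        have hβ0 : (0:ℝ) ≤ β := by linarith
        nlinarith [mul_le_mul_of_nonneg_left e1 hβ0, mul_le_mul_of_nonneg_left e2 hβ0]
      exact monotoneOn_of_deriv_nonneg (convex_Icc 0 m) hcont
        (fun t ht => by
          rw [interior_Icc] at ht
          exact ((hderivAt t ht).differentiableAt).differentiableWithinAt)
        hderiv_nonneg
    exact hmono (by constructor <;> [exact le_refl 0; exact hm0.le])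
      (by constructor <;> [exact hd0; exact hdm]) hd0
  have hf0 : f 0 = 0 := by
    simp only [hf]
    norm_num
  have hfd : f d = 2 * β * d * m ^ (β - 1) - u ^ β + v ^ β := by
    rw [hf]; simp only []; rw [← hu, ← hv']
  rw [hf0, hfd] at key
  have : u - v = 2 * d := by rw [hd]; ring
  rw [this]
  linarith


lemma rpow_succ {x : ℝ} (hx : x ≠ 0) (y : ℝ) : x ^ y * x = x ^ (y + 1) :=
  (Real.rpow_add_one hx y).symm

/-- Upper S-bound at tangent scale `H`. -/
lemma S_upper {β H v u : ℝ} (hβ1 : 1 ≤ β) (hβ2 : β ≤ 2) (hH : 0 < H)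
    (hv : 0 ≤ v) (hvu : v ≤ u) :
    u ^ β - v ^ β ≤ β * (β - 1) * H ^ (β - 2) / 2 * (u ^ 2 - v ^ 2)
      + β * (2 - β) * H ^ (β - 1) * (u - v) := by
  have hm : (0:ℝ) ≤ (u + v) / 2 := by linarith
  have h1 := midpoint_bound hβ1 hβ2 hv hvu
  have h2 : ((u + v) / 2) ^ (β - 1) ≤ H ^ (β - 1) + (β - 1) * H ^ (β - 1 - 1) * ((u + v) / 2 - H) :=
    tangent_concave (by linarith) (by linarith) hm hH
  have hco : 0 ≤ β * (u - v) := by nlinarith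
  have h3 := mul_le_mul_of_nonneg_left h2 hco
  have hE : β - 1 - 1 = β - 2 := by ring
  rw [hE] at h3
  have hHH : H ^ (β - 2) * H = H ^ (β - 2 + 1) := rpow_succ hH.ne' _
  rw [show β - 2 + 1 = β - 1 from by ring] at hHH
  have hkey : β * (u - v) * (H ^ (β - 1) + (β - 1) * H ^ (β - 2) * ((u + v) / 2 - H))
      = β * (β - 1) * H ^ (β - 2) / 2 * (u ^ 2 - v ^ 2)
        + β * (2 - β) * H ^ (β - 1) * (u - v) := by
    linear_combination (β * (β - 1) * (v - u)) * hHH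
  linarith [le_trans h1 (hkey ▸ h3)]

/-- Lower S'-bound at tangent scale `H`, valid for `u ≤ H`. -/
lemma S_lower {β H v u : ℝ} (hβ1 : 1 ≤ β) (hβ2 : β ≤ 2) (hH : 0 < H)
    (hv : 0 ≤ v) (hvu : v ≤ u) (huH : u ≤ H) :
    β * (β - 1) * H ^ (β - 2) / 2 * (u ^ 2 - v ^ 2)
      - β * (2 - β) * H ^ (β - 1) * (u - v) ≤ u ^ β - v ^ β := by
  set P : ℝ := β * (β - 1) * H ^ (β - 2) with hP
  set Q : ℝ := β * (2 - β) * H ^ (β - 1) with hQ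
  have hHb2 : (0:ℝ) ≤ H ^ (β - 2) := Real.rpow_nonneg hH.le _
  have hHb1 : (0:ℝ) ≤ H ^ (β - 1) := Real.rpow_nonneg hH.le _
  have hP0 : 0 ≤ P := mul_nonneg (mul_nonneg (by linarith) (by linarith)) hHb2
  have hQ0 : 0 ≤ Q := mul_nonneg (mul_nonneg (by linarith) (by linarith)) hHb1
  set g : ℝ → ℝ := fun w => w ^ β - P / 2 * w ^ 2 + Q * w with hg
  have key : g v ≤ g u := by
    have hmono : MonotoneOn g (Icc 0 H) := by
      have hcont : ContinuousOn g (Icc 0 H) := by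
        apply ContinuousOn.add
        · apply ContinuousOn.sub
          · apply Continuous.continuousOn
            apply Continuous.rpow_const continuous_id
            intro t; right; linarith
          · fun_prop
        · fun_prop
      have hderivAt : ∀ t ∈ Ioo 0 H, HasDerivAt g
          (β * t ^ (β - 1) - P / 2 * (2 * t) + Q) t := by
        intro t ht
        have h1 : HasDerivAt (fun w : ℝ => w ^ β) (β * t ^ (β - 1)) t :=
          Real.hasDerivAt_rpow_const (Or.inl ht.1.ne')
        have h2 : HasDerivAt (fun w : ℝ => P / 2 * w ^ 2) (P / 2 * (2 * t)) t := by
          have := (hasDerivAt_pow 2 t).const_mul (P / 2)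
          simpa [pow_one] using this
        have h3 : HasDerivAt (fun w : ℝ => Q * w) Q t := by
          simpa using (hasDerivAt_id t).const_mul Q
        exact (h1.sub h2).add h3
      have hderiv_nonneg : ∀ t ∈ interior (Icc (0:ℝ) H), 0 ≤ deriv g t := by
        intro t ht
        rw [interior_Icc] at ht
        rw [(hderivAt t ht).deriv]
        have hw1 : H ^ (β - 2) ≤ t ^ (β - 2) :=
          Real.rpow_le_rpow_of_nonpos ht.1 ht.2.le (by linarith)
        have hw2 : t ^ (β - 2) * t = t ^ (β - 1) := by
          rw [rpow_succ ht.1.ne' (β - 2)]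
          congr 1; ring
        have ht2 : (0:ℝ) ≤ t ^ (β - 2) := Real.rpow_nonneg ht.1.le _
        have h4 : H ^ (β - 2) * t ≤ t ^ (β - 2) * t :=
          mul_le_mul_of_nonneg_right hw1 ht.1.le
        have h5 : 0 ≤ t ^ (β - 2) * t := mul_nonneg ht2 ht.1.le
        have h6 := mul_le_mul_of_nonneg_left h4
          (mul_nonneg (by linarith : (0:ℝ) ≤ β) (by linarith : (0:ℝ) ≤ β - 1))
        rw [hw2] at h6
        have hb1 : (0:ℝ) ≤ t ^ (β - 1) := Real.rpow_nonneg ht.1.le _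
        have hprod : 0 ≤ β * t ^ (β - 1) * (2 - β) :=
          mul_nonneg (mul_nonneg (by linarith) hb1) (by linarith)
        have h7 : β * (β - 1) * t ^ (β - 1) ≤ β * t ^ (β - 1) := by linarith
        have hPt : P * t ≤ β * t ^ (β - 1) := by
          rw [hP]
          linarith [h6, h7]
        linarith
      exact monotoneOn_of_deriv_nonneg (convex_Icc 0 H) hcont
        (fun t ht => by
          rw [interior_Icc] at ht
          exact ((hderivAt t ht).differentiableAt).differentiableWithinAt)
        hderiv_nonneg
    exact hmono ⟨hv, le_trans hvu huH⟩ ⟨le_trans hv hvu, huH⟩ hvu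
  simp only [hg] at key
  linarith


/-- `(t^2)^(β/2) = t^β` for `t ≥ 0`. -/
lemma sq_rpow_half {t β : ℝ} (ht : 0 ≤ t) : ((t ^ 2 : ℝ)) ^ (β / 2) = t ^ β := by
  have h1 : (t ^ 2 : ℝ) = t ^ (2 : ℝ) := by
    rw [← Real.rpow_natCast t 2]; norm_num
  rw [h1, ← Real.rpow_mul ht]
  congr 1; ring

/-- `(t^2)^(β/2 - 1) = t^(β-2)` for `t > 0`. -/
lemma sq_rpow_half_sub_one {t β : ℝ} (ht : 0 < t) :
    ((t ^ 2 : ℝ)) ^ (β / 2 - 1) = t ^ (β - 2) := by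
  have h1 : (t ^ 2 : ℝ) = t ^ (2 : ℝ) := by
    rw [← Real.rpow_natCast t 2]; norm_num
  rw [h1, ← Real.rpow_mul ht.le]
  congr 1; ring

/-- Tangent upper bound at scale `w ≤ v`: `u^β - v^β ≤ (β/2) w^(β-2) (u²-v²)`. -/
lemma tangent_ub {β w v u : ℝ} (hβ1 : 1 ≤ β) (hβ2 : β ≤ 2)
    (hw : 0 < w) (hwv : w ≤ v) (hvu : v ≤ u) :
    u ^ β - v ^ β ≤ β / 2 * w ^ (β - 2) * (u ^ 2 - v ^ 2) := by
  have hv : 0 < v := lt_of_lt_of_le hw hwv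
  have hu : 0 ≤ u := le_trans hv.le hvu
  have h := tangent_concave (θ := β / 2) (x := u ^ 2) (y := v ^ 2)
    (by linarith) (by linarith) (by positivity) (by positivity)
  rw [sq_rpow_half hu, sq_rpow_half hv.le, sq_rpow_half_sub_one hv] at h
  have hmon : v ^ (β - 2) ≤ w ^ (β - 2) :=
    Real.rpow_le_rpow_of_nonpos hw hwv (by linarith)
  have hq : (0:ℝ) ≤ u ^ 2 - v ^ 2 := by nlinarith
  nlinarith [mul_le_mul_of_nonneg_right hmon hq, h]

/-- Tangent lower bound at the top point: `c^β - e^β ≥ (β/2) c^(β-2) (c²-e²)`. -/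
lemma tangent_lb {β c e : ℝ} (hβ1 : 1 ≤ β) (hβ2 : β ≤ 2)
    (hc : 0 < c) (he : 0 ≤ e) :
    β / 2 * c ^ (β - 2) * (c ^ 2 - e ^ 2) ≤ c ^ β - e ^ β := by
  have h := tangent_concave (θ := β / 2) (x := e ^ 2) (y := c ^ 2)
    (by linarith) (by linarith) (by positivity) (by positivity)
  rw [sq_rpow_half he, sq_rpow_half hc.le, sq_rpow_half_sub_one hc] at h
  linarith

/-- Key scalar inequality for case II.D. -/
lemma diamond {β r x : ℝ} (hβ1 : 1 ≤ β) (hβ2 : β ≤ 2)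
    (hr : 2 ≤ r) (hx : 0 < x) (hxr : x ≤ r + 4) :
    r ^ (β - 1) + (2 - r) * x ^ (β - 2) ≤ 2 := by
  set θ : ℝ := 2 - β with hθ
  have hθ0 : 0 ≤ θ := by rw [hθ]; linarith
  have hθ1 : θ ≤ 1 := by rw [hθ]; linarith
  have hr0 : (0:ℝ) < r := by linarith
  have h4r : (0:ℝ) < 4 / r := by positivity
  -- step 1 : exp (2 - 4/r) ≤ r
  have hstep1 : Real.exp (2 - 4 / r) ≤ r := by
    have h1 : 4 / r ≤ Real.exp (4 / r - 1) := by
      have := Real.add_one_le_exp (4 / r - 1); linarith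
    have h2 : Real.exp (1 - 4 / r) ≤ r / 4 := by
      rw [show (1 : ℝ) - 4 / r = -(4 / r - 1) from by ring, Real.exp_neg]
      have h3 : (Real.exp (4 / r - 1))⁻¹ ≤ (4 / r)⁻¹ :=
        inv_anti₀ h4r h1
      rw [inv_div] at h3
      exact h3
    have he4 : Real.exp 1 ≤ 4 := by
      have := Real.exp_one_lt_d9; linarith
    calc Real.exp (2 - 4 / r) = Real.exp 1 * Real.exp (1 - 4 / r) := by
          rw [← Real.exp_add]; congr 1; ring
      _ ≤ 4 * (r / 4) := by
          apply mul_le_mul he4 h2 (Real.exp_pos _).le (by norm_num)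
      _ = r := by ring
  -- step 2 : 1 + θ*(2 - 4/r) ≤ r^θ
  have hstep2 : 1 + θ * (2 - 4 / r) ≤ r ^ θ := by
    have h1 : Real.exp (2 - 4 / r) ^ θ ≤ r ^ θ :=
      Real.rpow_le_rpow (Real.exp_pos _).le hstep1 hθ0
    have h2 : Real.exp (2 - 4 / r) ^ θ = Real.exp ((2 - 4 / r) * θ) := by
      rw [Real.rpow_def_of_pos (Real.exp_pos _), Real.log_exp]
    have h3 : 1 + (2 - 4 / r) * θ ≤ Real.exp ((2 - 4 / r) * θ) := by
      have := Real.add_one_le_exp ((2 - 4 / r) * θ); linarith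
    rw [h2] at h1
    nlinarith [h1, h3]
  -- step 3 : 1 - θ*(4/r) ≤ (1 + 4/r)^(-θ)
  have h14 : (0:ℝ) < 1 + 4 / r := by linarith
  have hstep3 : 1 - θ * (4 / r) ≤ (1 + 4 / r) ^ (-θ) := by
    have hb : (1 + 4 / r) ^ θ ≤ 1 + θ * (4 / r) := by
      have := bern hθ0 hθ1 h14.le; nlinarith [this]
    have hbp : 0 < (1 + 4 / r) ^ θ := Real.rpow_pos_of_pos h14 θ
    rw [Real.rpow_neg h14.le]
    rcases le_or_gt (1 - θ * (4 / r)) 0 with hs | hs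
    · exact le_trans hs (inv_nonneg.mpr hbp.le)
    · rw [← one_div, le_div_iff₀ hbp]
      have h5 := mul_le_mul_of_nonneg_left hb hs.le
      nlinarith [h5, sq_nonneg (θ * (4 / r))]
  -- step 4 : r - (r-2)*(1+4/r)^(-θ) ≤ 2 r^θ
  have hstep4 : r - (r - 2) * (1 + 4 / r) ^ (-θ) ≤ 2 * r ^ θ := by
    have h1 := mul_le_mul_of_nonneg_left hstep3 (by linarith : (0:ℝ) ≤ r - 2)
    have h2 : r - (r - 2) * (1 - θ * (4 / r)) = 2 + θ * (2 * (2 - 4 / r)) := by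
      field_simp; ring
    nlinarith [h1, hstep2]
  -- step 5 : assemble
  have hxm : (r + 4) ^ (-θ) ≤ x ^ (-θ) :=
    Real.rpow_le_rpow_of_nonpos hx hxr (by linarith)
  have h2r : (2 - r) * x ^ (-θ) ≤ (2 - r) * (r + 4) ^ (-θ) :=
    mul_le_mul_of_nonpos_left hxm (by linarith)
  have hsplit : (r + 4 : ℝ) = r * (1 + 4 / r) := by field_simp
  have hmulr : (r + 4) ^ (-θ) = r ^ (-θ) * (1 + 4 / r) ^ (-θ) := by
    rw [hsplit, Real.mul_rpow hr0.le h14.le]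
  have hrsplit : r ^ (1 - θ) = r * r ^ (-θ) := by
    rw [show (1:ℝ) - θ = 1 + (-θ) from by ring, Real.rpow_add hr0, Real.rpow_one]
  have hrr : r ^ (-θ) * r ^ θ = 1 := by
    rw [← Real.rpow_add hr0]; norm_num
  have hrn : (0:ℝ) ≤ r ^ (-θ) := Real.rpow_nonneg hr0.le _
  have hβ1' : β - 1 = 1 - θ := by rw [hθ]; ring
  have hβ2' : β - 2 = -θ := by rw [hθ]; ring
  rw [hβ1', hβ2', hrsplit]
  calc r * r ^ (-θ) + (2 - r) * x ^ (-θ)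
      ≤ r * r ^ (-θ) + (2 - r) * (r + 4) ^ (-θ) := by linarith
    _ = r ^ (-θ) * (r - (r - 2) * (1 + 4 / r) ^ (-θ)) := by rw [hmulr]; ring
    _ ≤ r ^ (-θ) * (2 * r ^ θ) := mul_le_mul_of_nonneg_left hstep4 hrn
    _ = 2 * (r ^ (-θ) * r ^ θ) := by ring
    _ = 2 := by rw [hrr]; ring


set_option maxHeartbeats 1000000

/-- Core estimate, case II (`b ≤ a`, `e ≤ c`), assuming `τ ≤ σ`. -/
lemma core_II {β σ τ a b c e : ℝ} (hβ1 : 1 ≤ β) (hβ2 : β ≤ 2)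
    (hσ : 0 < σ) (hτ : 0 < τ) (hτσ : τ ≤ σ)
    (ha : 0 ≤ a) (hb : 0 ≤ b) (hc : 0 ≤ c) (he : 0 ≤ e)
    (hab : |a - b| ≤ τ) (hce : |c - e| ≤ τ) (hac : |a - c| ≤ σ) (hbe : |b - e| ≤ σ)
    (hquad : a ^ 2 - b ^ 2 - c ^ 2 + e ^ 2 ≤ 2 * σ * τ)
    (hba : b ≤ a) (hec : e ≤ c) :
    a ^ β - b ^ β - c ^ β + e ^ β ≤ β * (σ / 2) ^ (β - 2) * σ * τ := by
  have habτ : a - b ≤ τ := le_trans (le_abs_self _) hab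
  have hceτ : c - e ≤ τ := le_trans (le_abs_self _) hce
  have hebσ : e - b ≤ σ := by have := (abs_le.mp hbe).1; linarith
  set h : ℝ := σ / 2 with hhdef
  have hh : 0 < h := by rw [hhdef]; linarith
  have hσ2 : σ = 2 * h := by rw [hhdef]; ring
  have hhb2 : (0:ℝ) ≤ h ^ (β - 2) := Real.rpow_nonneg hh.le _
  have hhb1 : (0:ℝ) ≤ h ^ (β - 1) := Real.rpow_nonneg hh.le _
  have hp0 : 0 ≤ β * (β - 1) * h ^ (β - 2) / 2 :=
    div_nonneg (mul_nonneg (mul_nonneg (by linarith) (by linarith)) hhb2) (by norm_num)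
  have hq0 : 0 ≤ β * (2 - β) * h ^ (β - 1) :=
    mul_nonneg (mul_nonneg (by linarith) (by linarith)) hhb1
  have hHH : h ^ (β - 2) * h = h ^ (β - 1) := by
    rw [rpow_succ hh.ne' (β - 2)]; congr 1; ring
  have hT : β * (β - 1) * h ^ (β - 2) / 2 * (2 * σ * τ) + 2 * (β * (2 - β) * h ^ (β - 1) * τ)
      = β * h ^ (β - 2) * σ * τ := by
    rw [hσ2, ← hHH]; ring
  have hT0 : 0 ≤ β * h ^ (β - 2) * σ * τ := by
    apply mul_nonneg (mul_nonneg (mul_nonneg (by linarith) hhb2) hσ.le) hτ.le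
  have hβ0 : (0:ℝ) ≤ β := by linarith
  rcases le_total a c with h1 | h1
  · rcases le_total e b with h2 | h2
    · -- II.A : a ≤ c, e ≤ b : F ≤ 0
      have g1 : a ^ β ≤ c ^ β := Real.rpow_le_rpow ha h1 hβ0
      have g2 : e ^ β ≤ b ^ β := Real.rpow_le_rpow he h2 hβ0
      linarith
    · -- II.D : a ≤ c, b ≤ e
      rcases le_total (a + b) (2 * σ) with hcheap | hmain
      · -- cheap subcase
        have s1 := S_upper hβ1 hβ2 hh hb hba (β := β)
        have g2 : e ^ β ≤ c ^ β := Real.rpow_le_rpow he hec hβ0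
        have hsq0 : (a - b) * (a + b) ≤ τ * (2 * σ) :=
          mul_le_mul habτ hcheap (by linarith) hτ.le
        have hsq : a ^ 2 - b ^ 2 ≤ 2 * σ * τ := by nlinarith [hsq0]
        have m3 := mul_le_mul_of_nonneg_left hsq hp0
        have m1 := mul_le_mul_of_nonneg_left habτ hq0
        have hqτ : 0 ≤ β * (2 - β) * h ^ (β - 1) * τ := mul_nonneg hq0 hτ.le
        linarith [s1, m3, m1, g2]
      · -- main subcase
        have hm2 : 2 * h ≤ (a + b) / 2 := by linarith
        have hm0 : (0:ℝ) < (a + b) / 2 := by linarith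
        have hma : (a + b) / 2 ≤ a := by linarith
        have hmc : (a + b) / 2 ≤ c := le_trans hma h1
        have hc0 : 0 < c := lt_of_lt_of_le hm0 hmc
        have hc4 : c ≤ (a + b) / 2 + 4 * h := by linarith [hceτ, hebσ]
        have hmm : ((a + b) / 2) ^ (β - 2) * ((a + b) / 2) = ((a + b) / 2) ^ (β - 1) := by
          rw [rpow_succ hm0.ne' (β - 2)]; congr 1; ring
        have hLB := tangent_lb hβ1 hβ2 hc0 he (β := β)
        have hM' : a ^ β - b ^ β ≤ β / 2 * ((a + b) / 2) ^ (β - 2) * (a ^ 2 - b ^ 2) := by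
          have hM := midpoint_bound hβ1 hβ2 hb hba (β := β)
          have e1 : β * (a - b) * ((a + b) / 2) ^ (β - 1)
              = β / 2 * ((a + b) / 2) ^ (β - 2) * (a ^ 2 - b ^ 2) := by
            rw [← hmm]; ring
          linarith
        have hmon : c ^ (β - 2) ≤ ((a + b) / 2) ^ (β - 2) :=
          Real.rpow_le_rpow_of_nonpos hm0 hmc (by linarith)
        have hcb2 : (0:ℝ) ≤ c ^ (β - 2) := Real.rpow_nonneg hc0.le _
        have hXq : a ^ 2 - b ^ 2 ≤ τ * (2 * ((a + b) / 2)) := by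
          have hmult : (a - b) * (a + b) ≤ τ * (a + b) :=
            mul_le_mul_of_nonneg_right habτ (by linarith)
          nlinarith [hmult]
        have keyD : ((a + b) / 2) ^ (β - 1) + (2 * h - (a + b) / 2) * c ^ (β - 2)
            ≤ 2 * h ^ (β - 1) := by
          have hr : 2 ≤ ((a + b) / 2) / h := by rw [le_div_iff₀ hh]; linarith
          have hx : 0 < c / h := by positivity
          have hxr : c / h ≤ ((a + b) / 2) / h + 4 := by
            rw [div_le_iff₀ hh, add_mul, div_mul_cancel₀ _ hh.ne']; linarith
          have dia := diamond hβ1 hβ2 hr hx hxr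
          have e1 : (((a + b) / 2) / h) ^ (β - 1) = ((a + b) / 2) ^ (β - 1) / h ^ (β - 1) :=
            Real.div_rpow hm0.le hh.le _
          have e2 : (c / h) ^ (β - 2) = c ^ (β - 2) / h ^ (β - 2) :=
            Real.div_rpow hc0.le hh.le _
          rw [e1, e2] at dia
          have hb1 : (0:ℝ) < h ^ (β - 1) := Real.rpow_pos_of_pos hh _
          have hb2 : (0:ℝ) < h ^ (β - 2) := Real.rpow_pos_of_pos hh _
          have hmul := mul_le_mul_of_nonneg_right dia hb1.le
          have e3 : (((a + b) / 2) ^ (β - 1) / h ^ (β - 1)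
                + (2 - ((a + b) / 2) / h) * (c ^ (β - 2) / h ^ (β - 2))) * h ^ (β - 1)
              = ((a + b) / 2) ^ (β - 1) + (2 * h - (a + b) / 2) * c ^ (β - 2) := by
            rw [← hHH]; field_simp
          rw [e3] at hmul
          linarith [hmul]
        have step1 : a ^ β - b ^ β - c ^ β + e ^ β
            ≤ β / 2 * c ^ (β - 2) * (a ^ 2 - b ^ 2 - c ^ 2 + e ^ 2)
              + β / 2 * (a ^ 2 - b ^ 2) * (((a + b) / 2) ^ (β - 2) - c ^ (β - 2)) := by
          have e4 : β / 2 * ((a + b) / 2) ^ (β - 2) * (a ^ 2 - b ^ 2)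
              - β / 2 * c ^ (β - 2) * (c ^ 2 - e ^ 2)
              = β / 2 * c ^ (β - 2) * (a ^ 2 - b ^ 2 - c ^ 2 + e ^ 2)
                + β / 2 * (a ^ 2 - b ^ 2) * (((a + b) / 2) ^ (β - 2) - c ^ (β - 2)) := by
            ring
          linarith [hM', hLB, e4.le, e4.ge]
        have step2 : β / 2 * c ^ (β - 2) * (a ^ 2 - b ^ 2 - c ^ 2 + e ^ 2)
            ≤ β / 2 * c ^ (β - 2) * (2 * σ * τ) :=
          mul_le_mul_of_nonneg_left hquad (by positivity)
        have step3 : β / 2 * (a ^ 2 - b ^ 2) * (((a + b) / 2) ^ (β - 2) - c ^ (β - 2))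
            ≤ β / 2 * (τ * (2 * ((a + b) / 2))) * (((a + b) / 2) ^ (β - 2) - c ^ (β - 2)) := by
          apply mul_le_mul_of_nonneg_right _ (by linarith [hmon])
          apply mul_le_mul_of_nonneg_left hXq (by linarith)
        have step4 : β / 2 * (τ * (2 * ((a + b) / 2))) * (((a + b) / 2) ^ (β - 2) - c ^ (β - 2))
            = β * τ * (((a + b) / 2) ^ (β - 1) - ((a + b) / 2) * c ^ (β - 2)) := by
          rw [← hmm]; ring
        have step5 := mul_le_mul_of_nonneg_left keyD (mul_nonneg hβ0 hτ.le)
        have efin : β * h ^ (β - 2) * σ * τ = β * τ * (2 * h ^ (β - 1)) := by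
          rw [hσ2, ← hHH]; ring
        have efin2 : β / 2 * c ^ (β - 2) * (2 * σ * τ) = β * τ * (2 * h) * c ^ (β - 2) := by
          rw [hσ2]; ring
        linarith [step1, step2, step3, step4.le, step4.ge, step5, efin.le, efin.ge,
          efin2.le, efin2.ge]
  · rcases le_total e b with h2 | h2
    · -- II.C : c ≤ a, e ≤ b
      rcases le_total c h with hch | hch
      · -- II.C(1) : c ≤ h
        have s1 := S_upper hβ1 hβ2 hh hb hba (β := β)
        have s2 := S_lower hβ1 hβ2 hh he hec hch (β := β)
        have m1 := mul_le_mul_of_nonneg_left habτ hq0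
        have m2 := mul_le_mul_of_nonneg_left hceτ hq0
        have m3 := mul_le_mul_of_nonneg_left hquad hp0
        linarith [s1, s2, m1, m2, m3]
      · rcases le_total c b with hcb | hcb
        · -- II.C(2) : h ≤ c ≤ b
          have hc0 : 0 < c := lt_of_lt_of_le hh hch
          have t1 := tangent_ub hβ1 hβ2 hc0 hcb hba (β := β)
          have t2 := tangent_lb hβ1 hβ2 hc0 he (β := β)
          have m3 : β / 2 * c ^ (β - 2) * (a ^ 2 - b ^ 2 - c ^ 2 + e ^ 2)
              ≤ β / 2 * c ^ (β - 2) * (2 * σ * τ) :=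
            mul_le_mul_of_nonneg_left hquad (by positivity)
          have hmon : c ^ (β - 2) ≤ h ^ (β - 2) :=
            Real.rpow_le_rpow_of_nonpos hh hch (by linarith)
          have m4 : β * σ * τ * c ^ (β - 2) ≤ β * σ * τ * h ^ (β - 2) :=
            mul_le_mul_of_nonneg_left hmon
              (mul_nonneg (mul_nonneg hβ0 hσ.le) hτ.le)
          linarith [t1, t2, m3, m4]
        · rcases le_total h b with hhb | hhb
          · -- II.C(3) : h ≤ b ≤ c
            have hb0 : 0 < b := lt_of_lt_of_le hh hhb
            have t1 := tangent_ub hβ1 hβ2 hb0 hcb h1 (β := β)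
            have t2 := tangent_lb hβ1 hβ2 hb0 he (β := β)
            have m3 : β / 2 * b ^ (β - 2) * (a ^ 2 - c ^ 2 - b ^ 2 + e ^ 2)
                ≤ β / 2 * b ^ (β - 2) * (2 * σ * τ) := by
              apply mul_le_mul_of_nonneg_left _ (by positivity)
              linarith
            have hmon : b ^ (β - 2) ≤ h ^ (β - 2) :=
              Real.rpow_le_rpow_of_nonpos hh hhb (by linarith)
            have m4 : β * σ * τ * b ^ (β - 2) ≤ β * σ * τ * h ^ (β - 2) :=
              mul_le_mul_of_nonneg_left hmon
                (mul_nonneg (mul_nonneg hβ0 hσ.le) hτ.le)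
            linarith [t1, t2, m3, m4]
          · -- II.C(4) : b ≤ h ≤ c
            have hacτ : a - c ≤ τ := by linarith [habτ]
            have hbeτ : b - e ≤ τ := by linarith [hceτ]
            have s1 := S_upper hβ1 hβ2 hh hc h1 (β := β)
            have s2 := S_lower hβ1 hβ2 hh he h2 hhb (β := β)
            have m1 := mul_le_mul_of_nonneg_left hacτ hq0
            have m2 := mul_le_mul_of_nonneg_left hbeτ hq0
            have m3 := mul_le_mul_of_nonneg_left hquad hp0
            linarith [s1, s2, m1, m2, m3]
    · -- II.B : c ≤ a, b ≤ e  (chain b ≤ e ≤ c ≤ a)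
      have hacτ : a - c ≤ τ := by linarith [habτ]
      have hebτ : e - b ≤ τ := by linarith [habτ]
      have s1 := S_upper hβ1 hβ2 hh hc h1 (β := β)
      have s2 := S_upper hβ1 hβ2 hh hb h2 (β := β)
      have m1 := mul_le_mul_of_nonneg_left hacτ hq0
      have m2 := mul_le_mul_of_nonneg_left hebτ hq0
      have m3 := mul_le_mul_of_nonneg_left hquad hp0
      linarith [s1, s2, m1, m2, m3]


/-- Core estimate assuming `τ ≤ σ`. -/
lemma core {β σ τ a b c e : ℝ} (hβ1 : 1 ≤ β) (hβ2 : β ≤ 2)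
    (hσ : 0 < σ) (hτ : 0 < τ) (hτσ : τ ≤ σ)
    (ha : 0 ≤ a) (hb : 0 ≤ b) (hc : 0 ≤ c) (he : 0 ≤ e)
    (hab : |a - b| ≤ τ) (hce : |c - e| ≤ τ) (hac : |a - c| ≤ σ) (hbe : |b - e| ≤ σ)
    (hquad : a ^ 2 - b ^ 2 - c ^ 2 + e ^ 2 ≤ 2 * σ * τ) :
    a ^ β - b ^ β - c ^ β + e ^ β ≤ β * (σ / 2) ^ (β - 2) * σ * τ := by
  have hβ0 : (0:ℝ) ≤ β := by linarith
  have hh : 0 < σ / 2 := by linarith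
  have hT0 : 0 ≤ β * (σ / 2) ^ (β - 2) * σ * τ :=
    mul_nonneg (mul_nonneg (mul_nonneg hβ0 (Real.rpow_nonneg hh.le _)) hσ.le) hτ.le
  rcases le_total b a with hba | hba'
  · rcases le_total e c with hec | hce'
    · exact core_II hβ1 hβ2 hσ hτ hτσ ha hb hc he hab hce hac hbe hquad hba hec
    · -- Case I : b ≤ a, c ≤ e
      have habτ : a - b ≤ τ := le_trans (le_abs_self _) hab
      have hecτ : e - c ≤ τ := by have := (abs_le.mp hce).1; linarith
      have hq0 : 0 ≤ β * (2 - β) * (σ / 2) ^ (β - 1) :=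
        mul_nonneg (mul_nonneg hβ0 (by linarith)) (Real.rpow_nonneg hh.le _)
      have hp0 : 0 ≤ β * (β - 1) * (σ / 2) ^ (β - 2) / 2 :=
        div_nonneg (mul_nonneg (mul_nonneg hβ0 (by linarith))
          (Real.rpow_nonneg hh.le _)) (by norm_num)
      have hHH : (σ / 2) ^ (β - 2) * (σ / 2) = (σ / 2) ^ (β - 1) := by
        rw [rpow_succ hh.ne' (β - 2)]; congr 1; ring
      have hT : β * (β - 1) * (σ / 2) ^ (β - 2) / 2 * (2 * σ * τ)
          + 2 * (β * (2 - β) * (σ / 2) ^ (β - 1) * τ) = β * (σ / 2) ^ (β - 2) * σ * τ := by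
        rw [← hHH]; ring
      have s1 := S_upper hβ1 hβ2 hh hb hba (β := β)
      have s2 := S_upper hβ1 hβ2 hh hc hce' (β := β)
      have m1 := mul_le_mul_of_nonneg_left habτ hq0
      have m2 := mul_le_mul_of_nonneg_left hecτ hq0
      have m3 := mul_le_mul_of_nonneg_left hquad hp0
      linarith [s1, s2, m1, m2, m3]
  · rcases le_total e c with hec | hce'
    · -- Case IV : a ≤ b, e ≤ c : F ≤ 0
      have g1 : a ^ β ≤ b ^ β := Real.rpow_le_rpow ha hba' hβ0
      have g2 : e ^ β ≤ c ^ β := Real.rpow_le_rpow he hec hβ0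
      linarith
    · -- Case III : a ≤ b, c ≤ e : relabel (a,b,c,e) → (e,c,b,a)
      have key := core_II hβ1 hβ2 hσ hτ hτσ he hc hb ha
        (by rwa [abs_sub_comm] at hce) (by rwa [abs_sub_comm] at hab)
        (by rwa [abs_sub_comm] at hbe) (by rwa [abs_sub_comm] at hac)
        (by linarith) hce' hba'
      linarith


end Sturm16

theorem stmt_16 {Q : Type*} [MetricSpace Q] (y z q p : Q) (α : ℝ)
    (hα1 : 1 / 2 ≤ α) (hα2 : α ≤ 1)
    (hquad : dist y q ^ 2 - dist y p ^ 2 - dist z q ^ 2 + dist z p ^ 2 ≤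
      2 * dist y z * dist q p) :
    dist y q ^ (2 * α) - dist y p ^ (2 * α) - dist z q ^ (2 * α) + dist z p ^ (2 * α) ≤
      8 * α * (2 : ℝ) ^ (-(2 * α)) * dist y z ^ (2 * α - 1) * dist q p := by
  set a := dist y q with hadef
  set b := dist y p with hbdef
  set c := dist z q with hcdef
  set e := dist z p with hedef
  set σ := dist y z with hσdef
  set τ := dist q p with hτdef
  have hα0 : (0:ℝ) < α := by linarith
  -- degenerate cases
  rcases eq_or_lt_of_le (dist_nonneg : (0:ℝ) ≤ σ) with hσ0 | hσ0
  · -- σ = 0 : y = z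
    have hyz : y = z := by
      rw [← dist_le_zero]; rw [← hσ0]
    have hac : a = c := by rw [hadef, hcdef, hyz]
    have hbe : b = e := by rw [hbdef, hedef, hyz]
    have hrhs : 0 ≤ 8 * α * (2 : ℝ) ^ (-(2 * α)) * σ ^ (2 * α - 1) * τ := by
      apply mul_nonneg (mul_nonneg (mul_nonneg (by linarith) _) _) dist_nonneg
      · exact Real.rpow_nonneg (by norm_num) _
      · exact Real.rpow_nonneg dist_nonneg _
    rw [hac, hbe]
    linarith
  rcases eq_or_lt_of_le (dist_nonneg : (0:ℝ) ≤ τ) with hτ0 | hτ0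
  · -- τ = 0 : q = p
    have hqp : q = p := by
      rw [← dist_le_zero]; rw [← hτ0]
    have hab : a = b := by rw [hadef, hbdef, hqp]
    have hce : c = e := by rw [hcdef, hedef, hqp]
    have hτ0' : τ = 0 := by rw [hτdef, ← hτ0]
    have hz : b ^ (2*α) - b ^ (2*α) - e ^ (2*α) + e ^ (2*α) = 0 := by ring
    rw [hab, hce, hτ0', mul_zero]
    linarith [hz]
  -- main case
  have hβ1 : (1:ℝ) ≤ 2 * α := by linarith
  have hβ2 : 2 * α ≤ 2 := by linarith
  have ha : 0 ≤ a := dist_nonneg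
  have hb : 0 ≤ b := dist_nonneg
  have hc : 0 ≤ c := dist_nonneg
  have he : 0 ≤ e := dist_nonneg
  have hab : |a - b| ≤ τ := by
    rw [hadef, hbdef, hτdef, dist_comm y q, dist_comm y p]
    exact abs_dist_sub_le q p y
  have hce : |c - e| ≤ τ := by
    rw [hcdef, hedef, hτdef, dist_comm z q, dist_comm z p]
    exact abs_dist_sub_le q p z
  have hac : |a - c| ≤ σ := by
    rw [hadef, hcdef, hσdef]
    exact abs_dist_sub_le y z q
  have hbe : |b - e| ≤ σ := by
    rw [hbdef, hedef, hσdef]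
    exact abs_dist_sub_le y z p
  -- conversion of the right-hand side
  have hconv : ∀ s : ℝ, 0 < s → (2 * α) * (s / 2) ^ (2 * α - 2) * s * τ
      = 8 * α * (2 : ℝ) ^ (-(2 * α)) * s ^ (2 * α - 1) * τ := by
    intro s hs
    have h1 : (s / 2) ^ (2 * α - 2) = s ^ (2 * α - 2) / (2:ℝ) ^ (2 * α - 2) :=
      Real.div_rpow hs.le (by norm_num) _
    have h2 : s ^ (2 * α - 2) * s = s ^ (2 * α - 1) := by
      rw [Sturm16.rpow_succ hs.ne' (2 * α - 2)]; congr 1; ring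
    have h3 : (2:ℝ) ^ (2 * α - 2) * (2:ℝ) ^ (-(2 * α)) = 1 / 4 := by
      rw [← Real.rpow_add (by norm_num : (0:ℝ) < 2)]
      rw [show 2 * α - 2 + -(2 * α) = (-2 : ℝ) by ring]
      rw [show (-2 : ℝ) = ((-2 : ℤ) : ℝ) by norm_num, Real.rpow_intCast]
      norm_num
    have h4 : (0:ℝ) < (2:ℝ) ^ (2 * α - 2) := Real.rpow_pos_of_pos (by norm_num) _
    rw [h1, div_eq_mul_inv]
    have h7 : (2:ℝ) ^ (2 * α - 2) * (4 * (2:ℝ) ^ (-(2 * α))) = 1 := by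
      linarith [h3]
    have h6 : ((2:ℝ) ^ (2 * α - 2))⁻¹ = 4 * (2:ℝ) ^ (-(2 * α)) :=
      inv_eq_of_mul_eq_one_right h7
    rw [h6]
    linear_combination (8 * α * τ * (2:ℝ) ^ (-(2 * α))) * h2
  rcases le_total τ σ with hτσ | hστ
  · have key := Sturm16.core hβ1 hβ2 hσ0 hτ0 hτσ ha hb hc he hab hce hac hbe hquad
    calc a ^ (2*α) - b ^ (2*α) - c ^ (2*α) + e ^ (2*α)
        ≤ (2*α) * (σ / 2) ^ (2*α - 2) * σ * τ := key
      _ = 8 * α * (2 : ℝ) ^ (-(2 * α)) * σ ^ (2 * α - 1) * τ := hconv σ hσ0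
  · -- σ ≤ τ : apply the core lemma with the two pairings swapped
    have key := Sturm16.core hβ1 hβ2 hτ0 hσ0 hστ ha hc hb he hac hbe hab hce
      (by linarith [hquad])
    have hcmp : (2*α) * (τ / 2) ^ (2*α - 2) * τ * σ
        ≤ (2*α) * (σ / 2) ^ (2*α - 2) * σ * τ := by
      have hmon : (τ / 2) ^ (2*α - 2) ≤ (σ / 2) ^ (2*α - 2) :=
        Real.rpow_le_rpow_of_nonpos (by linarith) (by linarith) (by linarith)
      have := mul_le_mul_of_nonneg_left hmon
        (mul_nonneg (mul_nonneg (by linarith : (0:ℝ) ≤ 2*α) hσ0.le) hτ0.le)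
      nlinarith [this]
    calc a ^ (2*α) - b ^ (2*α) - c ^ (2*α) + e ^ (2*α)
        = a ^ (2*α) - c ^ (2*α) - b ^ (2*α) + e ^ (2*α) := by ring
      _ ≤ (2*α) * (τ / 2) ^ (2*α - 2) * τ * σ := key
      _ ≤ (2*α) * (σ / 2) ^ (2*α - 2) * σ * τ := hcmp
      _ = 8 * α * (2 : ℝ) ^ (-(2 * α)) * σ ^ (2 * α - 1) * τ := hconv σ hσ0
end

section
/- Let a, b, c ≥ 0, r, s ∈ [−1,1], α ∈ [1/2,1], and assume ra − sc ≥ 0. Define F(r) = a^(2α) − c^(2α) − (a² − 2rab + b²)^α + (c² − 2scb + b²)^α − 8α·2^(−2α)·b·(ra − sc)^(2α−1). Then F is convex as a function of r (its second derivative in r is nonnegative wherever defined). -/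
lemma aux_convex_neg_rpow (m k p : ℝ) (hp0 : 0 ≤ p) (hp1 : p ≤ 1)
    (T : Set ℝ) (hT : Convex ℝ T) (h : ∀ r ∈ T, 0 ≤ m * r + k) :
    ConvexOn ℝ T (fun r => -((m * r + k) ^ p)) := by
  have hconc := (Real.concaveOn_rpow hp0 hp1).comp_affineMap
      (AffineMap.lineMap (k : ℝ) (m + k))
  have hsub : T ⊆ (AffineMap.lineMap (k : ℝ) (m + k)) ⁻¹' Set.Ici 0 := by
    intro r hr
    simp only [Set.mem_preimage, AffineMap.lineMap_apply_ring, Set.mem_Ici]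
    have := h r hr; nlinarith [h r hr]
  have := (hconc.subset hsub hT).neg
  refine this.congr (fun r _ => ?_)
  simp [AffineMap.lineMap_apply_ring]
  ring_nf

theorem stmt_17 (a b c s α : ℝ) (ha : 0 ≤ a) (hb : 0 ≤ b) (hc : 0 ≤ c)
    (hs1 : -1 ≤ s) (hs2 : s ≤ 1) (hα1 : 1 / 2 ≤ α) (hα2 : α ≤ 1) :
    ConvexOn ℝ {r : ℝ | r ∈ Set.Icc (-1 : ℝ) 1 ∧ 0 < r * a - s * c}
      (fun r =>
        a ^ (2 * α) - c ^ (2 * α) - (a ^ 2 - 2 * r * a * b + b ^ 2) ^ α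
          + (c ^ 2 - 2 * s * c * b + b ^ 2) ^ α
          - 8 * α * (2 : ℝ) ^ (-(2 * α)) * b * (r * a - s * c) ^ (2 * α - 1)) := by
  set T : Set ℝ := {r : ℝ | r ∈ Set.Icc (-1 : ℝ) 1 ∧ 0 < r * a - s * c}
  have hT : Convex ℝ T := by
    intro x hx y hy p q hp hq hpq
    refine ⟨(convex_Icc (-1:ℝ) 1) hx.1 hy.1 hp hq hpq, ?_⟩
    have h1 := hx.2; have h2 := hy.2
    simp only [smul_eq_mul]
    rcases eq_or_lt_of_le hp with hp0 | hp0
    · have : q = 1 := by linarith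
      rw [← hp0, this]; simpa using h2
    · have key : (p*x+q*y)*a - s*c = p*(x*a-s*c)+q*(y*a-s*c) := by
        linear_combination (s*c)*hpq
      nlinarith [mul_pos hp0 h1, mul_nonneg hq h2.le]
  -- first convex piece: -(a²-2rab+b²)^α, affine part: (-2ab)*r + (a²+b²)
  have h1 : ConvexOn ℝ T (fun r => -(((-(2*a*b)) * r + (a^2 + b^2)) ^ α)) := by
    refine aux_convex_neg_rpow _ _ _ (by linarith) hα2 T hT ?_
    intro r hr
    obtain ⟨⟨hr1, hr2⟩, _⟩ := hr
    nlinarith [sq_nonneg (a - b), sq_nonneg (a + b), mul_nonneg ha hb]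
  -- second: -( (a)*r + (-s*c) )^(2α-1)
  have h2 : ConvexOn ℝ T (fun r => -((a * r + (-(s*c))) ^ (2*α - 1))) := by
    refine aux_convex_neg_rpow _ _ _ (by linarith) (by linarith) T hT ?_
    intro r hr
    have := hr.2
    nlinarith
  have hC : (0:ℝ) ≤ 8 * α * (2:ℝ) ^ (-(2*α)) * b := by positivity
  have h2' := h2.smul hC
  have hsum := (h1.add h2').add_const
      (a ^ (2 * α) - c ^ (2 * α) + (c ^ 2 - 2 * s * c * b + b ^ 2) ^ α)
  refine hsum.congr (fun r _ => ?_)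
  simp only [smul_eq_mul, Pi.add_apply]
  have e1 : (-(2*a*b)) * r + (a^2 + b^2) = a ^ 2 - 2 * r * a * b + b ^ 2 := by ring
  have e2 : a * r + (-(s*c)) = r * a - s * c := by ring
  rw [e1, e2]
  ring
end

section
/- Let (Q, b) be a pseudo-metric space, m ∈ Q a fixed point, c(y,q) a cost function, a a data distance, and suppose the weak quadruple inequality c(y,q) − c(z,q) − c(y,p) + c(z,p) ≤ a(y,z)·b(q,p) holds for all y,z,q,p ∈ Q. Let ξ ∈ [0,1]. Then for all y, z, q, p ∈ Q with b(q,m) > 0 and b(p,m) > 0: (c(y,q) − c(y,m) − c(z,q) + c(z,m))/b(q,m)^ξ − (c(y,p) − c(y,m) − c(z,p) + c(z,m))/b(p,m)^ξ ≤ 2^ξ · a(y,z) · b(q,p)^(1−ξ). -/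
/-- `1 + ξ ≤ 4 ^ ξ` for `ξ ≥ 0`. -/
lemma aux_one_add_le_four_rpow (ξ : ℝ) (hξ0 : 0 ≤ ξ) : 1 + ξ ≤ (4 : ℝ) ^ ξ := by
  have h4 : (4 : ℝ) ^ ξ = Real.exp (Real.log 4 * ξ) :=
    Real.rpow_def_of_pos (by norm_num) ξ
  have hlog : 1 ≤ Real.log 4 := by
    rw [Real.le_log_iff_exp_le (by norm_num : (0:ℝ) < 4)]
    exact (Real.exp_one_lt_d9).le.trans (by norm_num)
  have hexp := Real.add_one_le_exp (Real.log 4 * ξ)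
  have h1 : ξ * 1 ≤ ξ * Real.log 4 := mul_le_mul_of_nonneg_left hlog hξ0
  rw [h4]
  nlinarith
/-- power mean: `x ^ s + y ^ s ≤ 2 ^ (1 - s) * (x + y) ^ s` for `s ∈ [0,1]`. -/
lemma aux_pow_mean (x y s : ℝ) (hx : 0 ≤ x) (hy : 0 ≤ y) (hs0 : 0 ≤ s) (hs1 : s ≤ 1) :
    x ^ s + y ^ s ≤ 2 ^ (1 - s) * (x + y) ^ s := by
  have hcc := Real.concaveOn_rpow hs0 hs1
  have h := hcc.2 (Set.mem_Ici.mpr hx) (Set.mem_Ici.mpr hy)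
      (by norm_num : (0:ℝ) ≤ 1/2) (by norm_num : (0:ℝ) ≤ 1/2) (by norm_num)
  simp only [smul_eq_mul] at h
  have h2 : ((1:ℝ)/2 * x + 1/2 * y) ^ s = (x + y) ^ s * (1/2 : ℝ) ^ s := by
    rw [show (1:ℝ)/2 * x + 1/2 * y = (x + y) * (1/2) by ring,
      Real.mul_rpow (by linarith) (by norm_num)]
  rw [h2] at h
  have h3 : (2:ℝ) ^ (1 - s) * (x + y) ^ s = 2 * ((x + y) ^ s * (1/2 : ℝ) ^ s) := by
    rw [Real.rpow_sub (by norm_num : (0:ℝ) < 2), Real.rpow_one,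
      Real.div_rpow (by norm_num) (by norm_num), Real.one_rpow]
    have h2s : (0:ℝ) < 2 ^ s := Real.rpow_pos_of_pos (by norm_num) s
    field_simp
  rw [h3]
  linarith

/-- `u / v ^ ξ ≤ u ^ (1 - ξ)` when `0 ≤ u ≤ v`. -/
lemma aux_div_rpow {u v ξ : ℝ} (hu : 0 ≤ u) (huv : u ≤ v) (hξ0 : 0 ≤ ξ) (hξ1 : ξ ≤ 1)
    (hv : 0 < v) : u / v ^ ξ ≤ u ^ (1 - ξ) := by
  rcases eq_or_lt_of_le hu with h0 | h0
  · rw [← h0, zero_div]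
    exact Real.rpow_nonneg le_rfl _
  · have h1 : u / v ^ ξ ≤ u / u ^ ξ := by
      gcongr
    have h2 : u / u ^ ξ = u ^ (1 - ξ) := by
      rw [Real.rpow_sub h0, Real.rpow_one]
    linarith

/-- key real-variable lemma (the case `Bq ≤ Bp`). -/
lemma aux_key (ξ A Bq Bp d gq gp : ℝ) (hξ0 : 0 ≤ ξ) (hξ1 : ξ ≤ 1) (hA : 0 ≤ A)
    (hBq : 0 < Bq) (hBp : 0 < Bp) (hBqp : Bq ≤ Bp) (hd0 : 0 ≤ d)
    (htri1 : Bp ≤ Bq + d) (htri2 : d ≤ Bq + Bp)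
    (h1 : gq ≤ A * Bq) (h2 : gq - gp ≤ A * d) :
    gq / Bq ^ ξ - gp / Bp ^ ξ ≤ 2 ^ ξ * A * d ^ (1 - ξ) := by
  have hBqξ : (0:ℝ) < Bq ^ ξ := Real.rpow_pos_of_pos hBq ξ
  have hBpξ : (0:ℝ) < Bp ^ ξ := Real.rpow_pos_of_pos hBp ξ
  have hRHS0 : 0 ≤ 2 ^ ξ * A * d ^ (1 - ξ) := by positivity
  rcases eq_or_lt_of_le hd0 with hd | hd
  · -- d = 0 : then Bp = Bq and gq - gp ≤ 0
    have hBpq : Bp = Bq := le_antisymm (by linarith) hBqp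
    have hgg : gq - gp ≤ 0 := by rw [← hd] at h2; linarith
    have : gq / Bq ^ ξ - gp / Bp ^ ξ = (gq - gp) / Bq ^ ξ := by rw [hBpq]; ring
    rw [this]
    have : (gq - gp) / Bq ^ ξ ≤ 0 := div_nonpos_of_nonpos_of_nonneg hgg hBqξ.le
    linarith
  -- main step : LHS ≤ A * (Bq^(1-ξ) + (d - Bq) * (Bp^ξ)⁻¹)
  have hfac : 0 ≤ (Bq ^ ξ)⁻¹ - (Bp ^ ξ)⁻¹ := by
    rw [sub_nonneg]
    gcongr
  have hBqinv : Bq * (Bq ^ ξ)⁻¹ = Bq ^ (1 - ξ) := by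
    rw [Real.rpow_sub hBq, Real.rpow_one, div_eq_mul_inv]
  have hstep : gq / Bq ^ ξ - gp / Bp ^ ξ
      ≤ A * (Bq ^ (1 - ξ) + (d - Bq) * (Bp ^ ξ)⁻¹) := by
    calc gq / Bq ^ ξ - gp / Bp ^ ξ
        = gq * ((Bq ^ ξ)⁻¹ - (Bp ^ ξ)⁻¹) + (gq - gp) * (Bp ^ ξ)⁻¹ := by
          field_simp; ring
      _ ≤ A * Bq * ((Bq ^ ξ)⁻¹ - (Bp ^ ξ)⁻¹) + A * d * (Bp ^ ξ)⁻¹ :=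
          add_le_add (mul_le_mul_of_nonneg_right h1 hfac)
            (mul_le_mul_of_nonneg_right h2 (by positivity))
      _ = A * (Bq * (Bq ^ ξ)⁻¹ + (d - Bq) * (Bp ^ ξ)⁻¹) := by ring
      _ = A * (Bq ^ (1 - ξ) + (d - Bq) * (Bp ^ ξ)⁻¹) := by rw [hBqinv]
  -- it suffices to bound the scalar part
  suffices hS : Bq ^ (1 - ξ) + (d - Bq) * (Bp ^ ξ)⁻¹ ≤ 2 ^ ξ * d ^ (1 - ξ) by
    have := mul_le_mul_of_nonneg_left hS hA
    calc gq / Bq ^ ξ - gp / Bp ^ ξ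
        ≤ A * (Bq ^ (1 - ξ) + (d - Bq) * (Bp ^ ξ)⁻¹) := hstep
      _ ≤ A * (2 ^ ξ * d ^ (1 - ξ)) := this
      _ = 2 ^ ξ * A * d ^ (1 - ξ) := by ring
  rcases le_or_gt Bq d with hcase | hcase
  · -- Bq ≤ d
    have hu0 : 0 ≤ d - Bq := by linarith
    have huv : d - Bq ≤ Bp := by linarith
    have hdiv : (d - Bq) * (Bp ^ ξ)⁻¹ ≤ (d - Bq) ^ (1 - ξ) := by
      rw [← div_eq_mul_inv]
      exact aux_div_rpow hu0 huv hξ0 hξ1 hBp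
    have hpm := aux_pow_mean Bq (d - Bq) (1 - ξ) hBq.le hu0 (by linarith) (by linarith)
    rw [show (1:ℝ) - (1 - ξ) = ξ by ring, show Bq + (d - Bq) = d by ring] at hpm
    linarith
  · -- d < Bq
    set K := (Bq + d) ^ ξ with hK
    have hKpos : (0:ℝ) < K := Real.rpow_pos_of_pos (by linarith) ξ
    have hBpK : Bp ^ ξ ≤ K := Real.rpow_le_rpow hBp.le htri1 hξ0
    have hKinv : K⁻¹ ≤ (Bp ^ ξ)⁻¹ := by gcongr
    have hmono : (d - Bq) * (Bp ^ ξ)⁻¹ ≤ (d - Bq) * K⁻¹ :=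
      mul_le_mul_of_nonpos_left hKinv (by linarith)
    have hyoung : Bq ^ (1 - ξ) * K ≤ Bq + ξ * d := by
      have h := Real.geom_mean_le_arith_mean2_weighted (by linarith : (0:ℝ) ≤ 1 - ξ) hξ0
        hBq.le (by linarith : (0:ℝ) ≤ Bq + d) (by ring)
      calc Bq ^ (1 - ξ) * K = Bq ^ (1 - ξ) * (Bq + d) ^ ξ := by rw [hK]
        _ ≤ (1 - ξ) * Bq + ξ * (Bq + d) := h
        _ = Bq + ξ * d := by ring
    have hBexp : Bq ^ (1 - ξ) ≤ (Bq + ξ * d) * K⁻¹ := by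
      have : Bq ^ (1 - ξ) = Bq ^ (1 - ξ) * K * K⁻¹ := by field_simp
      rw [this]
      exact mul_le_mul_of_nonneg_right hyoung (by positivity)
    -- so scalar ≤ (1+ξ) * d * K⁻¹ ; now bound this by 2^ξ * d^(1-ξ)
    have hfin : (1 + ξ) * d * K⁻¹ ≤ 2 ^ ξ * d ^ (1 - ξ) := by
      rw [← div_eq_mul_inv, div_le_iff₀ hKpos]
      have hdsplit : d ^ (1 - ξ) * d ^ ξ = d := by
        rw [← Real.rpow_add hd, sub_add_cancel, Real.rpow_one]
      have h2d : (2:ℝ) ^ ξ * d ^ ξ ≤ K := by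
        rw [← Real.mul_rpow (by norm_num) hd0, hK]
        exact Real.rpow_le_rpow (by linarith) (by linarith) hξ0
      have h4 := aux_one_add_le_four_rpow ξ hξ0
      calc (1 + ξ) * d ≤ (4:ℝ) ^ ξ * d := mul_le_mul_of_nonneg_right h4 hd0
        _ = (2 ^ ξ * 2 ^ ξ) * (d ^ (1 - ξ) * d ^ ξ) := by
            rw [hdsplit, ← Real.mul_rpow (by norm_num : (0:ℝ) ≤ 2) (by norm_num : (0:ℝ) ≤ 2)]
            norm_num
        _ = 2 ^ ξ * d ^ (1 - ξ) * (2 ^ ξ * d ^ ξ) := by ring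
        _ ≤ 2 ^ ξ * d ^ (1 - ξ) * K := by
            exact mul_le_mul_of_nonneg_left h2d (by positivity)
    calc Bq ^ (1 - ξ) + (d - Bq) * (Bp ^ ξ)⁻¹
        ≤ (Bq + ξ * d) * K⁻¹ + (d - Bq) * K⁻¹ := add_le_add hBexp hmono
      _ = (1 + ξ) * d * K⁻¹ := by ring
      _ ≤ 2 ^ ξ * d ^ (1 - ξ) := hfin

theorem stmt_18 {Q : Type*} (b a : Q → Q → ℝ) (c : Q → Q → ℝ) (m : Q) (ξ : ℝ)
    (hb_nonneg : ∀ q p, 0 ≤ b q p) (hb_symm : ∀ q p, b q p = b p q)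
    (hb_refl : ∀ q, b q q = 0)
    (hb_tri : ∀ q p o, b q p ≤ b q o + b o p)
    (ha_nonneg : ∀ y z, 0 ≤ a y z) (ha_symm : ∀ y z, a y z = a z y)
    (hquad : ∀ y z q p, c y q - c z q - c y p + c z p ≤ a y z * b q p)
    (hξ0 : 0 ≤ ξ) (hξ1 : ξ ≤ 1) :
    ∀ y z q p, 0 < b q m → 0 < b p m →
      (c y q - c y m - c z q + c z m) / b q m ^ ξ
        - (c y p - c y m - c z p + c z m) / b p m ^ ξ
        ≤ 2 ^ ξ * a y z * b q p ^ (1 - ξ) := by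
  intro y z q p hq hp
  set A := a y z with hA
  set gq := c y q - c y m - c z q + c z m with hgq
  set gp := c y p - c y m - c z p + c z m with hgp
  have hAn : 0 ≤ A := ha_nonneg y z
  have hd0 : 0 ≤ b q p := hb_nonneg q p
  have hq1 : gq ≤ A * b q m := by have := hquad y z q m; rw [hgq, hA]; linarith
  have hp1 : -gp ≤ A * b p m := by
    have := hquad z y p m
    rw [ha_symm z y] at this
    rw [hgp, hA]; linarith
  have hqp : gq - gp ≤ A * b q p := by have := hquad y z q p; rw [hgq, hgp, hA]; linarith
  have htriA : b p m ≤ b q m + b q p := by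
    have := hb_tri p m q
    rw [hb_symm p q] at this
    linarith
  have htriB : b q m ≤ b p m + b q p := by
    have := hb_tri q m p
    linarith
  have htriC : b q p ≤ b q m + b p m := by
    have := hb_tri q p m
    rw [hb_symm m p] at this
    linarith
  rcases le_total (b q m) (b p m) with hc | hc
  · exact aux_key ξ A (b q m) (b p m) (b q p) gq gp hξ0 hξ1 hAn hq hp hc hd0
      htriA htriC hq1 hqp
  · have hkey := aux_key ξ A (b p m) (b q m) (b q p) (-gp) (-gq) hξ0 hξ1 hAn hp hq hc hd0
      htriB (by linarith) hp1 (by linarith)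
    have e : (-gp) / b p m ^ ξ - (-gq) / b q m ^ ξ = gq / b q m ^ ξ - gp / b p m ^ ξ := by
      ring
    rw [e] at hkey
    exact hkey
end

section
/- Let β > 0, γ > 1, and for n ≥ 3 set ξ_n = 1 − 1/log(n). Then (n^(−1/2)·(1−ξ_n)^(−β))^(1/(γ−ξ_n)) ≤ c_γ · n^(−1/(2(γ−1))) · (log n)^(β/(γ−1)), where c_γ = exp(1/(2(γ−1)²)). -/
theorem stmt_19 (β γ : ℝ) (hβ : 0 < β) (hγ : 1 < γ) (n : ℕ) (hn : 3 ≤ n) :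
    (((n : ℝ) ^ (-(1 / 2 : ℝ)) * (1 - (1 - 1 / Real.log n)) ^ (-β)) ^
        (1 / (γ - (1 - 1 / Real.log n)))) ≤
      Real.exp (1 / (2 * (γ - 1) ^ 2)) * (n : ℝ) ^ (-(1 / (2 * (γ - 1)))) *
        Real.log n ^ (β / (γ - 1)) := by
  set L := Real.log n with hLdef
  have hn3 : (3 : ℝ) ≤ (n : ℝ) := by exact_mod_cast hn
  have hnpos : (0 : ℝ) < n := by linarith
  have hL1 : 1 < L := by
    have h3 : (Real.exp 1) < 3 := by
      have := Real.exp_one_lt_d9; linarith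
    have : Real.exp 1 < (n : ℝ) := lt_of_lt_of_le h3 hn3
    have := Real.log_lt_log (Real.exp_pos 1) this
    rwa [Real.log_exp] at this
  have hLpos : 0 < L := by linarith
  have hd : 0 < γ - 1 := by linarith
  set d := γ - 1 with hddef
  have hden : 0 < d + 1 / L := by positivity
  have hden' : γ - (1 - 1 / L) = d + 1 / L := by ring
  rw [hden']
  have hsimp : 1 - (1 - 1 / L) = 1 / L := by ring
  rw [hsimp]
  -- rewrite (1/L)^(-β) = L^β
  have h1 : (1 / L) ^ (-β) = L ^ β := by
    rw [one_div, Real.inv_rpow hLpos.le, Real.rpow_neg hLpos.le, inv_inv]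
  rw [h1]
  set e := 1 / (d + 1 / L) with hedef
  have hepos : 0 < e := by positivity
  have hLHS : ((n : ℝ) ^ (-(1 / 2 : ℝ)) * L ^ β) ^ e
      = Real.exp (L * (-(1 / 2) * e)) * L ^ (β * e) := by
    rw [Real.mul_rpow (by positivity) (by positivity), ← Real.rpow_mul hnpos.le,
      ← Real.rpow_mul hLpos.le, Real.rpow_def_of_pos hnpos]
  have hRHSn : (n : ℝ) ^ (-(1 / (2 * d))) = Real.exp (L * (-(1 / (2 * d)))) := by
    rw [Real.rpow_def_of_pos hnpos]
  rw [hLHS, hRHSn]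
  have he_le : e ≤ 1 / d := by
    rw [hedef, div_le_div_iff₀ hden hd]
    nlinarith [one_div_pos.mpr hLpos]
  have hpow : L ^ (β * e) ≤ L ^ (β / d) := by
    apply Real.rpow_le_rpow_of_exponent_le hL1.le
    rw [div_eq_mul_inv, ← one_div]
    exact mul_le_mul_of_nonneg_left he_le hβ.le
  have hexp : Real.exp (L * (-(1 / 2) * e)) ≤
      Real.exp (1 / (2 * d ^ 2)) * Real.exp (L * (-(1 / (2 * d)))) := by
    rw [← Real.exp_add]
    apply Real.exp_le_exp.mpr
    have key : 1 / d - e ≤ 1 / (L * d ^ 2) := by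
      have h2 : 1 / d - e = (1 / L) / (d * (d + 1 / L)) := by
        rw [hedef]; field_simp; ring
      rw [h2]
      have h3 : (1 / L) / (d * (d + 1 / L)) ≤ (1 / L) / (d * d) := by
        gcongr <;> nlinarith [one_div_pos.mpr hLpos]
      calc (1 / L) / (d * (d + 1 / L)) ≤ (1 / L) / (d * d) := h3
        _ = 1 / (L * d ^ 2) := by field_simp <;> first | ring1 | (left; ring1) | tauto
    have hmain : L * (1 / d) - L * e ≤ 1 / d ^ 2 := by
      have := mul_le_mul_of_nonneg_left key hLpos.le
      have hfs : L * (1 / (L * d ^ 2)) = 1 / d ^ 2 := by field_simp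
      nlinarith [this]
    have e1 : L * (-(1 / 2) * e) = -(L * e) / 2 := by ring
    have e2 : 1 / (2 * d ^ 2) = (1 / d ^ 2) / 2 := by
      field_simp <;> first | ring1 | (left; ring1) | tauto
    have e3 : L * -(1 / (2 * d)) = -(L * (1 / d)) / 2 := by
      field_simp <;> first | ring1 | (left; ring1) | tauto
    linarith
  calc Real.exp (L * (-(1 / 2) * e)) * L ^ (β * e)
      ≤ (Real.exp (1 / (2 * d ^ 2)) * Real.exp (L * (-(1 / (2 * d))))) * L ^ (β / d) := by
        apply mul_le_mul hexp hpow (by positivity) (by positivity)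
    _ = Real.exp (1 / (2 * d ^ 2)) * Real.exp (L * (-(1 / (2 * d)))) * L ^ (β / d) := by ring
end
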